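/- arXiv:1610.07253 — 11 statements merged into one kernel-verified Lean document; each statement's English description precedes it below -/
import Mathlib

section
/- Let [H,G] be a boolean interval of finite groups whose dual Euler totient φ̂(H,G) = ∑_{K ∈ [H,G]} (-1)^{ℓ(H,K)} |G:K| is nonzero, where ℓ(H,K) is the rank of the boolean interval [H,K]. Then [H,G] is linearly primitive. -/
/-- `K` is a minimal overgroup of `H` (an atom of the interval `[H,G]`):
`H < K` and nothing lies strictly between `H` and `K`. -/
def IsMinimalOvergroup {G : Type*} [Group G] (H K : Subgroup G) : Prop :=
  H < K ∧ ∀ K' : Subgroup G, H < K' → K' ≤ K → K' = K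

/-- The interval `[H,G]` is linearly primitive: there is a finite-dimensional
irreducible complex representation `V` of `G` such that the pointwise stabilizer
of the fixed-point subspace `V^H` is exactly `H`. -/
def IsLinearlyPrimitive {G : Type*} [Group G] (H : Subgroup G) : Prop :=
  ∃ (V : Type) (_ : AddCommGroup V) (_ : Module ℂ V) (ρ : Representation ℂ G V),
    FiniteDimensional ℂ V ∧ Nontrivial V ∧
    (∀ U : Submodule ℂ V, (∀ g : G, ∀ v ∈ U, ρ g v ∈ U) → U = ⊥ ∨ U = ⊤) ∧
    {g : G | ∀ v : V, (∀ h : G, h ∈ H → ρ h v = v) → ρ g v = v} = (H : Set G)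

/-- The interval `[H,G]` is boolean: order-isomorphic to the lattice of subsets of
a finite set. -/
def IsBooleanInterval {G : Type*} [Group G] (H : Subgroup G) : Prop :=
  ∃ n : ℕ, Nonempty ((Set.Icc H (⊤ : Subgroup G)) ≃o Set (Fin n))

/-- The dual Euler totient of a boolean interval `[H,G]`, computed via an order
isomorphism `e` with the boolean lattice of subsets of `Fin n`:
`φ̂(H,G) = ∑_{K ∈ [H,G]} (-1)^{ℓ(H,K)} |G:K|`, where the rank `ℓ(H,K)` of the
boolean interval `[H,K]` is the cardinality of `e K`. -/
noncomputable def dualEulerTotient {G : Type*} [Group G] (H : Subgroup G) {n : ℕ}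
    (e : (Set.Icc H (⊤ : Subgroup G)) ≃o Set (Fin n)) : ℤ :=
  ∑ᶠ K : (Set.Icc H (⊤ : Subgroup G)),
    (-1 : ℤ) ^ ((e K).ncard) * ((K : Subgroup G).index : ℤ)

set_option linter.unusedSectionVars false
set_option linter.unusedVariables false


open Module

namespace BNP

variable {G : Type*} [Group G] {V : Type*} [AddCommGroup V] [Module ℂ V]

/-- The stabilizer subgroup of a vector under a representation. -/
def stab (ρ : Representation ℂ G V) (v : V) : Subgroup G where
  carrier := {g | ρ g v = v}
  one_mem' := by simp
  mul_mem' := by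
    intro a b ha hb
    simp only [Set.mem_setOf_eq] at *
    rw [map_mul, Module.End.mul_apply, hb, ha]
  inv_mem' := by
    intro a ha
    simp only [Set.mem_setOf_eq] at *
    conv_lhs => rw [← ha]
    rw [← Module.End.mul_apply, ← map_mul, inv_mul_cancel, map_one, Module.End.one_apply]

@[simp] lemma mem_stab {ρ : Representation ℂ G V} {v : V} {g : G} :
    g ∈ stab ρ v ↔ ρ g v = v := Iff.rfl

/-- The subspace of `K`-fixed vectors. -/
def fix (ρ : Representation ℂ G V) (K : Subgroup G) : Submodule ℂ V where
  carrier := {v | ∀ g ∈ K, ρ g v = v}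
  zero_mem' := by simp
  add_mem' := by
    intro a b ha hb g hg
    rw [map_add, ha g hg, hb g hg]
  smul_mem' := by
    intro c v hv g hg
    rw [LinearMap.map_smul, hv g hg]

lemma mem_fix {ρ : Representation ℂ G V} {K : Subgroup G} {v : V} :
    v ∈ fix ρ K ↔ ∀ g ∈ K, ρ g v = v := Iff.rfl

lemma mem_fix_iff_le_stab {ρ : Representation ℂ G V} {K : Subgroup G} {v : V} :
    v ∈ fix ρ K ↔ K ≤ stab ρ v := Iff.rfl

lemma fix_antitone {ρ : Representation ℂ G V} {K K' : Subgroup G} (h : K ≤ K') :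
    fix ρ K' ≤ fix ρ K := fun _ hv g hg => hv g (h hg)

/-- Right regular representation on functions `G → ℂ`. -/
noncomputable def rr (G : Type*) [Group G] : Representation ℂ G (G → ℂ) where
  toFun g := LinearMap.funLeft ℂ ℂ (fun x => x * g)
  map_one' := by
    apply LinearMap.ext; intro f; funext x
    simp [LinearMap.funLeft]
  map_mul' g h := by
    apply LinearMap.ext; intro f; funext x
    simp [LinearMap.funLeft, mul_assoc]

@[simp] lemma rr_apply (g : G) (f : G → ℂ) (x : G) : rr G g f x = f (x * g) := rfl

lemma finrank_fix_rr [Finite G] (K : Subgroup G) :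
    finrank ℂ ↥(fix (rr G) K) = K.index := by
  letI := Fintype.ofFinite G
  letI := Fintype.ofFinite (G ⧸ K)
  have hinj : Function.Injective (LinearMap.funLeft ℂ ℂ (QuotientGroup.mk : G → G ⧸ K)) :=
    LinearMap.funLeft_injective_of_surjective ℂ ℂ _ QuotientGroup.mk_surjective
  have hrange : LinearMap.range (LinearMap.funLeft ℂ ℂ (QuotientGroup.mk : G → G ⧸ K))
      = fix (rr G) K := by
    apply le_antisymm
    · rintro f ⟨φ, rfl⟩
      intro g hg
      funext x
      show φ (QuotientGroup.mk (x * g)) = φ (QuotientGroup.mk x)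
      congr 1
      exact (QuotientGroup.eq).mpr (by simpa using hg)
    · intro f hf
      have hco : ∀ (a b : G), (QuotientGroup.leftRel K) a b → f a = f b := by
        intro a b hab
        rw [QuotientGroup.leftRel_apply] at hab
        have := congr_fun (hf _ hab) a
        simpa [mul_inv_cancel_left] using this.symm
      refine ⟨Quotient.lift f hco, ?_⟩
      funext x
      rfl
  have h1 : finrank ℂ ↥(fix (rr G) K) = finrank ℂ (G ⧸ K → ℂ) := by
    rw [← hrange]
    exact ((LinearEquiv.ofInjective _ hinj).finrank_eq).symm
  rw [h1, Module.finrank_pi, Subgroup.index, Nat.card_eq_fintype_card]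


/-- stability of a subspace under a representation -/
def St (ρ : Representation ℂ G V) (W : Submodule ℂ V) : Prop :=
  ∀ g : G, ∀ v ∈ W, ρ g v ∈ W

lemma exists_split [Finite G] [FiniteDimensional ℂ V] (ρ : Representation ℂ G V)
    {N W : Submodule ℂ V} (hN : St ρ N) (hW : St ρ W) (hNW : N ≤ W) :
    ∃ C : Submodule ℂ V, St ρ C ∧ C ≤ W ∧ N ⊓ C = ⊥ ∧ N ⊔ C = W ∧
      ∀ K : Subgroup G, fix ρ K ⊓ W = (fix ρ K ⊓ N) ⊔ (fix ρ K ⊓ C) := by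
  letI := Fintype.ofFinite G
  obtain ⟨U, hU⟩ := Submodule.exists_isCompl N
  set p : V →ₗ[ℂ] V := N.subtype.comp (Submodule.linearProjOfIsCompl N U hU) with hp
  have hpmem : ∀ v, p v ∈ N := fun v => (Submodule.linearProjOfIsCompl N U hU v).2
  have hpid : ∀ v ∈ N, p v = v := by
    intro v hv
    show (N.subtype) (Submodule.projectionOnto (p := N) (q := U) hU v) = v
    rw [Submodule.linearProjOfIsCompl_apply_left hU ⟨v, hv⟩]
    rfl
  set q : V →ₗ[ℂ] V :=
    (Fintype.card G : ℂ)⁻¹ • ∑ g : G, (ρ g⁻¹).comp (p.comp (ρ g)) with hq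
  have hcard : (Fintype.card G : ℂ) ≠ 0 := Nat.cast_ne_zero.mpr Fintype.card_ne_zero
  have hq_apply : ∀ v, q v = (Fintype.card G : ℂ)⁻¹ • ∑ g : G, ρ g⁻¹ (p (ρ g v)) := by
    intro v
    rw [hq]
    simp [LinearMap.sum_apply]
  have hinvinv : ∀ (g : G) (v : V), ρ g⁻¹ (ρ g v) = v := by
    intro g v
    rw [← Module.End.mul_apply, ← map_mul, inv_mul_cancel, map_one, Module.End.one_apply]
  have hqN : ∀ v, q v ∈ N := by
    intro v
    rw [hq_apply]
    exact N.smul_mem _ (N.sum_mem fun g _ => hN g⁻¹ _ (hpmem _))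
  have hqid : ∀ v ∈ N, q v = v := by
    intro v hv
    rw [hq_apply]
    have : ∀ g : G, ρ g⁻¹ (p (ρ g v)) = v := by
      intro g
      rw [hpid _ (hN g v hv), hinvinv]
    simp only [this, Finset.sum_const, Finset.card_univ]
    rw [← Nat.cast_smul_eq_nsmul ℂ, smul_smul, inv_mul_cancel₀ hcard, one_smul]
  have hqcomm : ∀ (h : G) (v : V), q (ρ h v) = ρ h (q v) := by
    intro h v
    rw [hq_apply, hq_apply]
    rw [map_smul, map_sum]
    congr 1
    refine Fintype.sum_bijective (· * h) (Group.mulRight_bijective h) _ _ ?_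
    intro g
    have h1 : ρ g (ρ h v) = ρ (g * h) v := by
      rw [map_mul, Module.End.mul_apply]
    rw [h1]
    show ρ g⁻¹ (p (ρ (g * h) v)) = ρ h (ρ (g * h)⁻¹ (p (ρ (g * h) v)))
    rw [← Module.End.mul_apply (ρ h) (ρ (g * h)⁻¹), ← map_mul]
    congr 2
    group
  refine ⟨LinearMap.ker q ⊓ W, ?_, inf_le_right, ?_, ?_, ?_⟩
  · intro g v hv
    refine ⟨?_, hW g v hv.2⟩
    have hv0 : q v = 0 := hv.1
    refine LinearMap.mem_ker.mpr ?_
    rw [hqcomm g v, hv0, map_zero]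
  · apply le_bot_iff.mp
    rintro v ⟨hvN, hvK, -⟩
    have h0 : q v = 0 := LinearMap.mem_ker.mp hvK
    have h1 : q v = v := hqid v hvN
    rw [h0] at h1
    exact h1.symm
  · apply le_antisymm
    · exact sup_le hNW inf_le_right
    · intro v hv
      have hdec : v = q v + (v - q v) := by abel
      have h1 : q v ∈ N := hqN v
      have h2 : v - q v ∈ LinearMap.ker q ⊓ W := by
        refine ⟨LinearMap.mem_ker.mpr ?_, W.sub_mem hv (hNW h1)⟩
        rw [map_sub, hqid _ h1, sub_self]
      rw [hdec]
      exact Submodule.add_mem_sup h1 h2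
  · intro K
    apply le_antisymm
    · rintro v ⟨hvF, hvW⟩
      have h1 : q v ∈ fix ρ K ⊓ N := by
        refine ⟨?_, hqN v⟩
        intro k hk
        rw [← hqcomm, hvF k hk]
      have h2 : v - q v ∈ fix ρ K ⊓ (LinearMap.ker q ⊓ W) := by
        refine ⟨(fix ρ K).sub_mem hvF h1.1, LinearMap.mem_ker.mpr ?_,
          W.sub_mem hvW (hNW (hqN v))⟩
        rw [map_sub, hqid _ (hqN v), sub_self]
      have hdec : v = q v + (v - q v) := by abel
      rw [hdec]
      exact Submodule.add_mem_sup h1 h2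
    · apply sup_le
      · exact inf_le_inf_left _ hNW
      · exact inf_le_inf_left _ inf_le_right


instance finiteSubgroup [Finite G] : Finite (Subgroup G) :=
  Finite.of_injective (fun K => (K : Set G)) SetLike.coe_injective

section AA

variable [Finite G] (H : Subgroup G) {n : ℕ}
  (e : (Set.Icc H (⊤ : Subgroup G)) ≃o Set (Fin n))

noncomputable def aa (W : Submodule ℂ (G → ℂ)) : ℤ :=
  ∑ᶠ K : (Set.Icc H (⊤ : Subgroup G)),
    (-1 : ℤ) ^ ((e K).ncard) * (finrank ℂ ↥(fix (rr G) (K : Subgroup G) ⊓ W) : ℤ)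

lemma aa_bot : aa H e ⊥ = 0 := by
  rw [aa]
  have : ∀ K : (Set.Icc H (⊤ : Subgroup G)),
      (-1 : ℤ) ^ ((e K).ncard) * (finrank ℂ ↥(fix (rr G) (K : Subgroup G) ⊓ ⊥) : ℤ) = 0 := by
    intro K
    rw [inf_bot_eq]
    simp
  rw [finsum_congr this, finsum_zero]

lemma aa_top : aa H e ⊤ = dualEulerTotient H e := by
  rw [aa, dualEulerTotient]
  exact finsum_congr fun K => by rw [inf_top_eq, finrank_fix_rr]

lemma aa_add {W N C : Submodule ℂ (G → ℂ)} (hNW : N ≤ W) (hCW : C ≤ W) (hbot : N ⊓ C = ⊥)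
    (hfix : ∀ K : Subgroup G, fix (rr G) K ⊓ W = (fix (rr G) K ⊓ N) ⊔ (fix (rr G) K ⊓ C)) :
    aa H e W = aa H e N + aa H e C := by
  haveI := Fintype.ofFinite G
  letI := Fintype.ofFinite (Set.Icc H (⊤ : Subgroup G))
  rw [aa, aa, aa, finsum_eq_sum_of_fintype, finsum_eq_sum_of_fintype,
    finsum_eq_sum_of_fintype, ← Finset.sum_add_distrib]
  refine Finset.sum_congr rfl fun K _ => ?_
  have hd : (fix (rr G) (K : Subgroup G) ⊓ N) ⊓ (fix (rr G) (K : Subgroup G) ⊓ C) = ⊥ := by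
    refine le_bot_iff.mp ?_
    calc (fix (rr G) (K : Subgroup G) ⊓ N) ⊓ (fix (rr G) (K : Subgroup G) ⊓ C)
        ≤ N ⊓ C := inf_le_inf inf_le_right inf_le_right
      _ = ⊥ := hbot
  have hr := Submodule.finrank_sup_add_finrank_inf_eq
    (fix (rr G) (K : Subgroup G) ⊓ N) (fix (rr G) (K : Subgroup G) ⊓ C)
  rw [hd] at hr
  simp only [finrank_bot, add_zero] at hr
  have : finrank ℂ ↥(fix (rr G) (K : Subgroup G) ⊓ W)
      = finrank ℂ ↥(fix (rr G) (K : Subgroup G) ⊓ N)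
        + finrank ℂ ↥(fix (rr G) (K : Subgroup G) ⊓ C) := by
    rw [hfix (K : Subgroup G), hr]
  rw [this]
  push_cast
  ring

lemma key : ∀ (m : ℕ) (W : Submodule ℂ (G → ℂ)), finrank ℂ ↥W ≤ m → St (rr G) W →
    aa H e W ≠ 0 →
    ∃ N, N ≤ W ∧ St (rr G) N ∧ N ≠ ⊥ ∧
      (∀ W' ≤ N, St (rr G) W' → W' = ⊥ ∨ W' = N) ∧ aa H e N ≠ 0 := by
  haveI := Fintype.ofFinite G
  intro m
  induction m with
  | zero =>
    intro W hm _ ha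
    exfalso
    have : W = ⊥ := by
      have h0 : finrank ℂ ↥W = 0 := Nat.le_zero.mp hm
      exact Submodule.finrank_eq_zero.mp h0
    rw [this, aa_bot] at ha
    exact ha rfl
  | succ m ih =>
    intro W hm hW ha
    by_cases hmin : ∀ W' ≤ W, St (rr G) W' → W' = ⊥ ∨ W' = W
    · refine ⟨W, le_rfl, hW, ?_, hmin, ha⟩
      intro hWbot
      rw [hWbot, aa_bot] at ha
      exact ha rfl
    · push_neg at hmin
      obtain ⟨N₀, hle, hst, h3, h4⟩ := hmin
      obtain ⟨C, hCst, hCle, hbot, -, hfix⟩ := exists_split (rr G) hst hW hle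
      have hsum : aa H e W = aa H e N₀ + aa H e C := aa_add H e hle hCle hbot hfix
      have hone : aa H e N₀ ≠ 0 ∨ aa H e C ≠ 0 := by
        by_contra hcon
        push_neg at hcon
        rw [hsum, hcon.1, hcon.2] at ha
        exact ha rfl
      rcases hone with h | h
      · have hlt : N₀ < W := lt_of_le_of_ne hle h4
        have hfr : finrank ℂ ↥N₀ ≤ m := by
          have := Submodule.finrank_lt_finrank_of_lt hlt
          omega
        obtain ⟨N, hN1, hN2, hN3, hN4, hN5⟩ := ih N₀ hfr hst h
        exact ⟨N, le_trans hN1 hle, hN2, hN3, hN4, hN5⟩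
      · have hCW : C ≠ W := by
          intro hCweq
          apply h3
          have : N₀ ≤ C := hCweq ▸ hle
          have : N₀ ≤ N₀ ⊓ C := le_inf le_rfl this
          rw [hbot] at this
          exact le_bot_iff.mp this
        have hlt : C < W := lt_of_le_of_ne hCle hCW
        have hfr : finrank ℂ ↥C ≤ m := by
          have := Submodule.finrank_lt_finrank_of_lt hlt
          omega
        obtain ⟨N, hN1, hN2, hN3, hN4, hN5⟩ := ih C hfr hCst h
        exact ⟨N, le_trans hN1 hCle, hN2, hN3, hN4, hN5⟩


lemma fix_insert {S : Submodule ℂ (G → ℂ)} (i : Fin n) (T : Set (Fin n))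
    (hi : fix (rr G) ((e.symm {i} : Set.Icc H (⊤ : Subgroup G)) : Subgroup G) ⊓ S
      = fix (rr G) H ⊓ S) :
    fix (rr G) ((e.symm (insert i T) : Set.Icc H (⊤ : Subgroup G)) : Subgroup G) ⊓ S
      = fix (rr G) ((e.symm T : Set.Icc H (⊤ : Subgroup G)) : Subgroup G) ⊓ S := by
  set Q := e.symm T with hQ
  set P := e.symm (insert i T) with hP
  set Ki := e.symm {i} with hKi
  have hQP : Q ≤ P := e.symm.monotone (Set.subset_insert i T)
  have hHQ : H ≤ (Q : Subgroup G) := Q.2.1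
  have hRmem : ((Q : Subgroup G) ⊔ (Ki : Subgroup G)) ∈ Set.Icc H (⊤ : Subgroup G) :=
    ⟨le_trans hHQ le_sup_left, le_top⟩
  set R : Set.Icc H (⊤ : Subgroup G) := ⟨(Q : Subgroup G) ⊔ (Ki : Subgroup G), hRmem⟩ with hR
  have hQR : Q ≤ R := by
    show (Q : Subgroup G) ≤ (R : Subgroup G)
    exact le_sup_left
  have hKiR : Ki ≤ R := by
    show (Ki : Subgroup G) ≤ (R : Subgroup G)
    exact le_sup_right
  have hTR : T ⊆ e R := by
    have h1 := e.monotone hQR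
    rwa [hQ, e.apply_symm_apply] at h1
  have hiR : i ∈ e R := by
    have h1 := e.monotone hKiR
    rw [hKi, e.apply_symm_apply] at h1
    exact h1 rfl
  have hPR : (P : Subgroup G) ≤ (Q : Subgroup G) ⊔ (Ki : Subgroup G) := by
    have h1 : insert i T ⊆ e R := Set.insert_subset hiR hTR
    have h2 := e.symm.monotone h1
    rw [e.symm_apply_apply] at h2
    exact h2
  apply le_antisymm
  · rintro v ⟨hf, hs⟩
    exact ⟨fix_antitone hQP hf, hs⟩
  · rintro v ⟨hf, hs⟩
    have hvH : v ∈ fix (rr G) H := fix_antitone hHQ hf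
    have hvKi : v ∈ fix (rr G) (Ki : Subgroup G) := by
      have : v ∈ fix (rr G) (Ki : Subgroup G) ⊓ S := by
        rw [hi]
        exact ⟨hvH, hs⟩
      exact this.1
    refine ⟨?_, hs⟩
    rw [SetLike.mem_coe, mem_fix_iff_le_stab]
    refine le_trans hPR (sup_le ?_ ?_)
    · exact mem_fix_iff_le_stab.mp hf
    · exact mem_fix_iff_le_stab.mp hvKi

lemma aa_pair (S : Submodule ℂ (G → ℂ)) (i : Fin n)
    (hi : fix (rr G) ((e.symm {i} : Set.Icc H (⊤ : Subgroup G)) : Subgroup G) ⊓ S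
      = fix (rr G) H ⊓ S) :
    aa H e S = 0 := by
  classical
  haveI := Fintype.ofFinite G
  letI := Fintype.ofFinite (Set.Icc H (⊤ : Subgroup G))
  letI := Fintype.ofFinite (Set (Fin n))
  rw [aa, finsum_eq_sum_of_fintype]
  rw [← Equiv.sum_comp e.symm.toEquiv
    (fun K : Set.Icc H (⊤ : Subgroup G) =>
      (-1 : ℤ) ^ ((e K).ncard) * (finrank ℂ ↥(fix (rr G) (K : Subgroup G) ⊓ S) : ℤ))]
  have hdins : ∀ T : Set (Fin n),
      (finrank ℂ ↥(fix (rr G)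
          ((e.symm (insert i T) : Set.Icc H (⊤ : Subgroup G)) : Subgroup G) ⊓ S) : ℤ)
        = (finrank ℂ ↥(fix (rr G)
          ((e.symm T : Set.Icc H (⊤ : Subgroup G)) : Subgroup G) ⊓ S) : ℤ) := by
    intro T
    rw [fix_insert H e i T hi]
  have hg1 : ∀ T : Set (Fin n),
      (-1 : ℤ) ^ T.ncard
          * (finrank ℂ ↥(fix (rr G)
              ((e.symm T : Set.Icc H (⊤ : Subgroup G)) : Subgroup G) ⊓ S) : ℤ)
        + (-1 : ℤ) ^ (symmDiff T {i}).ncard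
          * (finrank ℂ ↥(fix (rr G)
              ((e.symm (symmDiff T {i}) : Set.Icc H (⊤ : Subgroup G)) : Subgroup G) ⊓ S) : ℤ)
        = 0 := by
    intro T
    by_cases hiT : i ∈ T
    · have hsd : symmDiff T {i} = T \ {i} := by
        rw [Set.symmDiff_def]
        have h2 : ({i} : Set (Fin n)) \ T = ∅ :=
          Set.diff_eq_empty.mpr (Set.singleton_subset_iff.mpr hiT)
        rw [h2, Set.union_empty]
      have hT : insert i (T \ {i}) = T := by
        rw [Set.insert_diff_singleton, Set.insert_eq_self.mpr hiT]
      have hc := hdins (T \ {i})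
      rw [hT] at hc
      have hnc := Set.ncard_insert_of_notMem
        (show i ∉ T \ {i} by simp) (Set.toFinite (T \ {i}))
      rw [hT] at hnc
      rw [hsd, hc, hnc, pow_succ]
      ring
    · have hsd : symmDiff T {i} = insert i T := by
        rw [Set.symmDiff_def]
        have h1 : T \ ({i} : Set (Fin n)) = T :=
          Set.diff_singleton_eq_self hiT
        have h2 : ({i} : Set (Fin n)) \ T = {i} := by
          ext j
          simp only [Set.mem_diff, Set.mem_singleton_iff, and_iff_left_iff_imp]
          rintro rfl
          exact hiT
        rw [h1, h2, Set.union_singleton]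
      have hc := hdins T
      have hnc := Set.ncard_insert_of_notMem hiT (Set.toFinite T)
      rw [hsd, hc, hnc, pow_succ]
      ring
  refine Finset.sum_ninvolution (fun T => symmDiff T {i}) ?_ ?_ ?_ ?_
  · intro T
    simpa only [RelIso.coe_fn_toEquiv, OrderIso.apply_symm_apply] using hg1 T
  · intro T _
    intro hcon
    have : ({i} : Set (Fin n)) = ⊥ := symmDiff_eq_left.mp hcon
    exact Set.singleton_ne_empty i this
  · intro T
    exact Finset.mem_univ _
  · intro T
    show symmDiff (symmDiff T {i}) {i} = T
    exact symmDiff_symmDiff_cancel_right {i} T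

end AA

/-- Conjugate representation along a linear equivalence. -/
noncomputable def conjRep {W : Type*} [AddCommGroup W] [Module ℂ W]
    (ρ : Representation ℂ G V) (E : V ≃ₗ[ℂ] W) : Representation ℂ G W where
  toFun g := (E.toLinearMap.comp (ρ g)).comp E.symm.toLinearMap
  map_one' := by
    apply LinearMap.ext; intro w
    simp
  map_mul' g h := by
    apply LinearMap.ext; intro w
    simp [map_mul]

@[simp] lemma conjRep_apply {W : Type*} [AddCommGroup W] [Module ℂ W]
    (ρ : Representation ℂ G V) (E : V ≃ₗ[ℂ] W) (g : G) (w : W) :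
    conjRep ρ E g w = E (ρ g (E.symm w)) := rfl

/-- Restriction of a representation to a stable subspace. -/
noncomputable def rhoS (ρ : Representation ℂ G V) {S : Submodule ℂ V} (hS : St ρ S) :
    Representation ℂ G ↥S where
  toFun g := (ρ g).restrict (fun v hv => hS g v hv)
  map_one' := by
    apply LinearMap.ext; intro v
    apply Subtype.ext
    simp [LinearMap.restrict_apply]
  map_mul' g h := by
    apply LinearMap.ext; intro v
    apply Subtype.ext
    simp [LinearMap.restrict_apply, map_mul]

@[simp] lemma rhoS_coe (ρ : Representation ℂ G V) {S : Submodule ℂ V} (hS : St ρ S)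
    (g : G) (v : ↥S) : ((rhoS ρ hS g v : ↥S) : V) = ρ g ↑v := rfl

end BNP

/-- A boolean interval `[H,G]` with nonzero dual Euler totient is linearly primitive. -/
theorem boolean_nonzero_dual_euler_totient_linearly_primitive {G : Type*} [Group G]
    [Finite G] (H : Subgroup G) (n : ℕ)
    (e : (Set.Icc H (⊤ : Subgroup G)) ≃o Set (Fin n))
    (h : dualEulerTotient H e ≠ 0) :
    IsLinearlyPrimitive H := by
  classical
  haveI := Fintype.ofFinite G
  have hSt_top : BNP.St (BNP.rr G) (⊤ : Submodule ℂ (G → ℂ)) :=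
    fun g v _ => Submodule.mem_top
  have htop : BNP.aa H e (⊤ : Submodule ℂ (G → ℂ)) ≠ 0 := by
    rw [BNP.aa_top H e]
    exact h
  obtain ⟨S, -, hSst, hSne, hSmin, hSa⟩ :=
    BNP.key H e (Module.finrank ℂ ↥(⊤ : Submodule ℂ (G → ℂ))) ⊤ le_rfl hSt_top htop
  have hlt : ∀ i : Fin n,
      BNP.fix (BNP.rr G) ((e.symm {i} : Set.Icc H (⊤ : Subgroup G)) : Subgroup G) ⊓ S
        < BNP.fix (BNP.rr G) H ⊓ S := by
    intro i
    refine lt_of_le_of_ne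
      (inf_le_inf_right S (BNP.fix_antitone (e.symm {i}).2.1)) ?_
    intro heq
    exact hSa (BNP.aa_pair H e S i heq)
  set FH : Submodule ℂ (G → ℂ) := BNP.fix (BNP.rr G) H ⊓ S with hFHdef
  obtain ⟨x, hx⟩ : ∃ x : ↥FH, ∀ i : Fin n,
      (x : G → ℂ) ∉ BNP.fix (BNP.rr G)
        ((e.symm {i} : Set.Icc H (⊤ : Subgroup G)) : Subgroup G) ⊓ S := by
    let p : Fin n → Submodule ℂ ↥FH := fun i =>
      (BNP.fix (BNP.rr G) ((e.symm {i} : Set.Icc H (⊤ : Subgroup G)) : Subgroup G)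
        ⊓ S).comap FH.subtype
    have hpne : ∀ i, p i ≠ ⊤ := by
      intro i hp
      exact (hlt i).not_ge (Submodule.comap_subtype_eq_top.mp hp)
    have hcov : (⋃ i, ((p i : Set ↥FH))) ≠ Set.univ := by
      intro hc
      obtain ⟨i, hi⟩ := Subspace.exists_eq_top_of_iUnion_eq_univ hc
      exact hpne i hi
    obtain ⟨x, hxmem⟩ := (Set.ne_univ_iff_exists_notMem _).mp hcov
    refine ⟨x, fun i hmem => ?_⟩
    exact hxmem (Set.mem_iUnion.mpr ⟨i, Submodule.mem_comap.mpr hmem⟩)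
  have hwS : (x : G → ℂ) ∈ S := (Submodule.mem_inf.mp x.2).2
  have hwH : (x : G → ℂ) ∈ BNP.fix (BNP.rr G) H := (Submodule.mem_inf.mp x.2).1
  set ρS := BNP.rhoS (BNP.rr G) hSst with hρS
  haveI : FiniteDimensional ℂ ↥S := inferInstance
  haveI hnt : Nontrivial ↥S := Submodule.nontrivial_iff_ne_bot.mpr hSne
  let E : ↥S ≃ₗ[ℂ] (Fin (Module.finrank ℂ ↥S) → ℂ) := (Module.finBasis ℂ ↥S).equivFun
  set ρ' := BNP.conjRep ρS E with hρ'
  refine ⟨(Fin (Module.finrank ℂ ↥S) → ℂ), inferInstance, inferInstance, ρ',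
    inferInstance, ?_, ?_, ?_⟩
  · exact E.symm.toEquiv.nontrivial
  · intro U'' hU''
    set U : Submodule ℂ ↥S := U''.comap E.toLinearMap with hUdef
    have hUmem : ∀ v : ↥S, v ∈ U ↔ E v ∈ U'' := fun v => Iff.rfl
    have hUst : ∀ g : G, ∀ v ∈ U, ρS g v ∈ U := by
      intro g v hv
      have h1 : E (ρS g v) = ρ' g (E v) := by
        rw [hρ', BNP.conjRep_apply, E.symm_apply_apply]
      rw [hUmem, h1]
      exact hU'' g (E v) ((hUmem v).mp hv)
    set U' : Submodule ℂ (G → ℂ) := U.map S.subtype with hU'def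
    have hU'le : U' ≤ S := Submodule.map_subtype_le S U
    have hU'st : BNP.St (BNP.rr G) U' := by
      intro g v hv
      obtain ⟨u, hu, rfl⟩ := Submodule.mem_map.mp hv
      exact Submodule.mem_map.mpr ⟨ρS g u, hUst g u hu, rfl⟩
    rcases hSmin U' hU'le hU'st with h0 | h0
    · left
      have hUbot : U = ⊥ := by
        rw [eq_bot_iff]
        intro u hu
        have h1 : (u : G → ℂ) ∈ U' := Submodule.mem_map_of_mem hu
        rw [h0] at h1
        have h2 : (u : G → ℂ) = 0 := h1
        exact (Submodule.mem_bot ℂ).mpr (Subtype.ext h2)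
      rw [eq_bot_iff]
      intro w hw
      have h1 : E.symm w ∈ U := by
        rw [hUmem, E.apply_symm_apply]
        exact hw
      rw [hUbot] at h1
      have h2 : E.symm w = 0 := h1
      have h3 := congrArg E h2
      rw [E.apply_symm_apply, map_zero] at h3
      exact (Submodule.mem_bot ℂ).mpr h3
    · right
      rw [eq_top_iff]
      intro w _
      have h1 : ((E.symm w : ↥S) : G → ℂ) ∈ U' := by
        rw [h0]
        exact (E.symm w).2
      obtain ⟨u, hu, huv⟩ := Submodule.mem_map.mp h1
      have h2 : u = E.symm w := Subtype.ext huv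
      rw [h2] at hu
      have h3 := (hUmem (E.symm w)).mp hu
      rwa [E.apply_symm_apply] at h3
  · ext g
    simp only [Set.mem_setOf_eq, SetLike.mem_coe]
    constructor
    · intro hg
      by_contra hgH
      have hgS : ∀ v : ↥S, (∀ h' : G, h' ∈ H → ρS h' v = v) → ρS g v = v := by
        intro v hv
        have h1 : ∀ h' : G, h' ∈ H → ρ' h' (E v) = E v := by
          intro h' hh'
          rw [hρ', BNP.conjRep_apply, E.symm_apply_apply, hv h' hh']
        have h2 := hg (E v) h1
        rw [hρ', BNP.conjRep_apply, E.symm_apply_apply] at h2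
        exact E.injective h2
      let P : Subgroup G :=
        { carrier := {y : G | ∀ v : ↥S, (v : G → ℂ) ∈ BNP.fix (BNP.rr G) H → ρS y v = v}
          one_mem' := fun v _ => by rw [map_one, Module.End.one_apply]
          mul_mem' := by
            intro a b ha hb v hv
            rw [map_mul, Module.End.mul_apply, hb v hv, ha v hv]
          inv_mem' := by
            intro a ha v hv
            conv_lhs => rw [← ha v hv]
            rw [← Module.End.mul_apply, ← map_mul, inv_mul_cancel, map_one,
              Module.End.one_apply] }
      have hHP : H ≤ P := by
        intro y hy v hv
        apply Subtype.ext
        rw [hρS, BNP.rhoS_coe]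
        exact hv y hy
      have hgP : g ∈ P := by
        intro v hv
        apply hgS
        intro h' hh'
        apply Subtype.ext
        rw [hρS, BNP.rhoS_coe]
        exact hv h' hh'
      set PI : Set.Icc H (⊤ : Subgroup G) := ⟨P, hHP, le_top⟩ with hPIdef
      set HI : Set.Icc H (⊤ : Subgroup G) := ⟨H, le_rfl, le_top⟩ with hHIdef
      have hHbot : e HI = ∅ := by
        have h1 : e.symm ∅ = HI := by
          apply le_antisymm
          · have h2 := e.symm.monotone (Set.empty_subset (e HI))
            rwa [e.symm_apply_apply] at h2
          · show (HI : Subgroup G) ≤ ((e.symm ∅ : Set.Icc H (⊤ : Subgroup G)) : Subgroup G)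
            exact (e.symm ∅).2.1
        rw [← h1, e.apply_symm_apply]
      have hPH : PI ≠ HI := by
        intro hPE
        apply hgH
        have hPeq : P = H := congrArg Subtype.val hPE
        rw [← hPeq]
        exact hgP
      have hPne : e PI ≠ ∅ := fun h0 => hPH (e.injective (h0.trans hHbot.symm))
      obtain ⟨i, hi⟩ := Set.nonempty_iff_ne_empty.mpr hPne
      have hKiP : ((e.symm {i} : Set.Icc H (⊤ : Subgroup G)) : Subgroup G) ≤ P := by
        have h1 : ({i} : Set (Fin n)) ⊆ e PI := Set.singleton_subset_iff.mpr hi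
        have h2 := e.symm.monotone h1
        rw [e.symm_apply_apply] at h2
        exact h2
      apply hx i
      refine Submodule.mem_inf.mpr ⟨?_, hwS⟩
      rw [BNP.mem_fix]
      intro k hk
      have hkP : k ∈ P := hKiP hk
      have h3 := hkP ⟨(x : G → ℂ), hwS⟩ hwH
      have h4 := congrArg Subtype.val h3
      rw [hρS] at h4
      exact h4
    · intro hgH v hv
      exact hv g hgH
end

section
/- Let G be a finite group and H a proper subgroup, and let K_1, ..., K_n be the minimal overgroups of H. If ∑_{i=1}^n 1/|K_i : H| ≤ 1, then [H,G] is linearly primitive. (No distributivity assumption on [H,G] is needed.) -/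
open MonoidAlgebra Module

namespace LPAux
variable {G : Type*} [Group G]

noncomputable def fixedC (K : Subgroup G) : Submodule ℂ (MonoidAlgebra ℂ G) where
  carrier := {v | ∀ k ∈ K, MonoidAlgebra.single k (1:ℂ) * v = v}
  add_mem' := by intro a b ha hb k hk; rw [mul_add, ha k hk, hb k hk]
  zero_mem' := by intro k hk; rw [mul_zero]
  smul_mem' := by intro c v hv; simp only [Set.mem_setOf_eq] at *
                  intro k hk; rw [mul_smul_comm, hv k hk]

lemma mem_fixedC {K : Subgroup G} {v : MonoidAlgebra ℂ G} :
    v ∈ fixedC K ↔ ∀ k ∈ K, MonoidAlgebra.single k (1:ℂ) * v = v := Iff.rfl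

lemma mul_mem_of_invariant {U : Submodule ℂ (MonoidAlgebra ℂ G)}
    (hU : ∀ g : G, ∀ v ∈ U, MonoidAlgebra.single g (1:ℂ) * v ∈ U)
    (a : MonoidAlgebra ℂ G) {v : MonoidAlgebra ℂ G} (hv : v ∈ U) : a * v ∈ U := by
  induction a using MonoidAlgebra.induction with
  | zero => simpa using U.zero_mem
  | single_add g c a hg hc ih =>
    rw [add_mul]
    refine U.add_mem ?_ ih
    have h1 : (MonoidAlgebra.single g c) * v = c • (MonoidAlgebra.single g (1:ℂ) * v) := by
      rw [← smul_mul_assoc, MonoidAlgebra.smul_single', mul_one]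
    rw [h1]; exact U.smul_mem _ (hU g v hv)

/-- Turn an invariant ℂ-subspace into a `MonoidAlgebra ℂ G`-submodule. -/
noncomputable def toASub (U : Submodule ℂ (MonoidAlgebra ℂ G))
    (hU : ∀ g : G, ∀ v ∈ U, MonoidAlgebra.single g (1:ℂ) * v ∈ U) :
    Submodule (MonoidAlgebra ℂ G) (MonoidAlgebra ℂ G) where
  carrier := U
  add_mem' := U.add_mem
  zero_mem' := U.zero_mem
  smul_mem' := fun a v hv => by
    rw [smul_eq_mul]; exact mul_mem_of_invariant hU a hv

@[simp] lemma mem_toASub {U : Submodule ℂ (MonoidAlgebra ℂ G)} {hU} {v : MonoidAlgebra ℂ G} :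
    v ∈ toASub U hU ↔ v ∈ U := Iff.rfl

variable [Finite G]

instance : Module.Finite ℂ (MonoidAlgebra ℂ G) :=
  Module.Finite.equiv (MonoidAlgebra.coeffLinearEquiv ℂ : MonoidAlgebra ℂ G ≃ₗ[ℂ] (G →₀ ℂ)).symm

/-- The map from functions on right cosets to the group algebra. -/
noncomputable def cosetMap (K : Subgroup G) :
    (Quotient (QuotientGroup.rightRel K) → ℂ) →ₗ[ℂ] MonoidAlgebra ℂ G := by
  haveI : Fintype G := Fintype.ofFinite G
  exact (MonoidAlgebra.coeffLinearEquiv ℂ : MonoidAlgebra ℂ G ≃ₗ[ℂ] (G →₀ ℂ)).symm.toLinearMap ∘ₗ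
    (Finsupp.linearEquivFunOnFinite ℂ ℂ G).symm.toLinearMap ∘ₗ
    LinearMap.funLeft ℂ ℂ (Quotient.mk (QuotientGroup.rightRel K))

lemma cosetMap_apply (K : Subgroup G) (w : Quotient (QuotientGroup.rightRel K) → ℂ) (g : G) :
    (cosetMap K w).coeff g = w (Quotient.mk _ g) := by
  haveI : Fintype G := Fintype.ofFinite G
  simp only [cosetMap, LinearMap.coe_comp, LinearEquiv.coe_coe, Function.comp_apply,
    LinearMap.funLeft_apply]
  rfl

lemma cosetMap_injective (K : Subgroup G) : Function.Injective (cosetMap K) := by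
  intro a b h
  funext q
  obtain ⟨g, rfl⟩ := Quotient.exists_rep q
  have := congrArg (fun v => (v : MonoidAlgebra ℂ G).coeff g) h
  simpa [cosetMap_apply] using this

lemma range_cosetMap (K : Subgroup G) : LinearMap.range (cosetMap K) = fixedC K := by
  ext v
  constructor
  · rintro ⟨w, rfl⟩ k hk
    ext g
    rw [MonoidAlgebra.coeff_single_mul_apply, one_mul, cosetMap_apply, cosetMap_apply]
    congr 1
    refine Quotient.sound (QuotientGroup.rightRel_apply.mpr ?_)
    simpa using hk
  · intro hv
    refine ⟨Quotient.lift (fun g => v.coeff g) ?_, ?_⟩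
    · intro a b hab
      replace hab := QuotientGroup.rightRel_apply.mp hab
      have := congrArg (fun u => (u : MonoidAlgebra ℂ G).coeff b) (hv _ hab)
      simp only [MonoidAlgebra.coeff_single_mul_apply, one_mul] at this
      simpa [mul_assoc] using this
    · ext g
      rw [cosetMap_apply]
      rfl

lemma finrank_fixedC (K : Subgroup G) : finrank ℂ (fixedC K) = K.index := by
  haveI : Fintype G := Fintype.ofFinite G
  classical
  haveI : Fintype (Quotient (QuotientGroup.rightRel K)) := Fintype.ofFinite _
  have h1 : finrank ℂ (fixedC K)
      = finrank ℂ (Quotient (QuotientGroup.rightRel K) → ℂ) := by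
    rw [← range_cosetMap]
    exact LinearMap.finrank_range_of_inj (cosetMap_injective K)
  rw [h1, finrank_fintype_fun_eq_card, Subgroup.index,
    ← Nat.card_congr (QuotientGroup.quotientRightRelEquivQuotientLeftRel K)]
  simp [Nat.card_eq_fintype_card]


noncomputable def allOnes (G : Type*) [Group G] [Finite G] : MonoidAlgebra ℂ G :=
  haveI := Fintype.ofFinite G
  MonoidAlgebra.ofCoeff (Finsupp.equivFunOnFinite.symm (fun _ => (1:ℂ)))

lemma allOnes_apply (g : G) : (allOnes G).coeff g = 1 := by
  haveI := Fintype.ofFinite G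
  simp [allOnes]

lemma allOnes_ne_zero : allOnes G ≠ 0 := by
  intro h
  have := congrArg (fun v : MonoidAlgebra ℂ G => v.coeff 1) h
  simp [allOnes_apply] at this

lemma allOnes_mem (K : Subgroup G) : allOnes G ∈ fixedC K := by
  intro k hk
  ext g
  rw [MonoidAlgebra.coeff_single_mul_apply, one_mul, allOnes_apply, allOnes_apply]

lemma finrank_sup_le {ι : Type*} (s : Finset ι)
    (U : ι → Submodule ℂ (MonoidAlgebra ℂ G)) (L : Submodule ℂ (MonoidAlgebra ℂ G))
    (hL : finrank ℂ L = 1) (hle : ∀ i ∈ s, L ≤ U i) :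
    finrank ℂ ↥(L ⊔ ⨆ i ∈ s, U i) ≤ ∑ i ∈ s, (finrank ℂ (U i) - 1) + 1 := by
  classical
  haveI : Fintype G := Fintype.ofFinite G
  induction s using Finset.induction with
  | empty =>
    have : (⨆ i ∈ (∅ : Finset ι), U i) = ⊥ := by simp
    rw [this, sup_bot_eq]
    simpa using hL.le
  | insert a s ha ih =>
    have hUa : L ≤ U a := hle a (by simp)
    have hrest : ∀ i ∈ s, L ≤ U i := fun i hi => hle i (by simp [hi])
    have hsup : L ⊔ ⨆ i ∈ insert a s, U i = U a ⊔ (L ⊔ ⨆ i ∈ s, U i) := by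
      rw [Finset.iSup_insert]
      rw [← sup_assoc, ← sup_assoc, sup_comm L (U a)]
    rw [hsup]
    have key := Submodule.finrank_sup_add_finrank_inf_eq (U a) (L ⊔ ⨆ i ∈ s, U i)
    have h1 : (1:ℕ) ≤ finrank ℂ ↥(U a ⊓ (L ⊔ ⨆ i ∈ s, U i)) := by
      rw [← hL]
      exact Submodule.finrank_mono (le_inf hUa le_sup_left)
    have h2 : (1:ℕ) ≤ finrank ℂ (U a) := by
      rw [← hL]; exact Submodule.finrank_mono hUa
    have h3 := ih hrest
    rw [Finset.sum_insert ha]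
    omega

lemma finrank_biSup_fixedC_le (S : Finset (Subgroup G)) :
    finrank ℂ ↥(⨆ K ∈ S, fixedC (G := G) K) ≤ ∑ K ∈ S, (finrank ℂ (fixedC (G := G) K) - 1) + 1 := by
  haveI : Fintype G := Fintype.ofFinite G
  have h := finrank_sup_le S (fun K => fixedC K) (ℂ ∙ allOnes G)
    (finrank_span_singleton allOnes_ne_zero)
    (fun K _ => by
      rw [Submodule.span_singleton_le_iff_mem]; exact allOnes_mem K)
  exact le_trans (Submodule.finrank_mono le_sup_right) h

lemma finrank_fixedC_bot_eq :
    finrank ℂ (fixedC (⊥ : Subgroup G)) = Nat.card G := by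
  rw [finrank_fixedC, Subgroup.index_bot]


lemma single_one_cancel (g : G) (x : MonoidAlgebra ℂ G) :
    MonoidAlgebra.single g (1:ℂ) * (MonoidAlgebra.single g⁻¹ (1:ℂ) * x) = x := by
  rw [← mul_assoc, MonoidAlgebra.single_mul_single, mul_inv_cancel, one_mul,
    ← MonoidAlgebra.one_def, one_mul]

/-- Maschke: a simple-minded relative complement inside `W` for `p ≤ W`. -/
lemma exists_compl_in (p W : Submodule (MonoidAlgebra ℂ G) (MonoidAlgebra ℂ G)) (hpW : p ≤ W) :
    ∃ q : Submodule (MonoidAlgebra ℂ G) (MonoidAlgebra ℂ G),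
      q ≤ W ∧ p ⊓ q = ⊥ ∧ W ≤ p ⊔ q := by
  classical
  haveI : Fintype G := Fintype.ofFinite G
  set pC := p.restrictScalars ℂ with hpC
  obtain ⟨qC, hq⟩ := Submodule.exists_isCompl pC
  set e : MonoidAlgebra ℂ G →ₗ[ℂ] MonoidAlgebra ℂ G :=
    pC.subtype ∘ₗ (pC.linearProjOfIsCompl qC hq) with he
  have he_mem : ∀ x, e x ∈ p := fun x => ((pC.linearProjOfIsCompl qC hq) x).2
  have he_id : ∀ x ∈ p, e x = x := by
    intro x hx
    have : (pC.linearProjOfIsCompl qC hq) x = ⟨x, hx⟩ :=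
      Submodule.linearProjOfIsCompl_apply_left hq ⟨x, hx⟩
    simp [he, this]
  set c : ℂ := (Fintype.card G : ℂ)⁻¹ with hc
  set π : MonoidAlgebra ℂ G →ₗ[ℂ] MonoidAlgebra ℂ G :=
    c • ∑ g : G, (LinearMap.mulLeft ℂ (MonoidAlgebra.single g (1:ℂ))) ∘ₗ e ∘ₗ
      (LinearMap.mulLeft ℂ (MonoidAlgebra.single g⁻¹ (1:ℂ))) with hπ
  have hπ_apply : ∀ x, π x = c • ∑ g : G,
      MonoidAlgebra.single g (1:ℂ) * e (MonoidAlgebra.single g⁻¹ (1:ℂ) * x) := by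
    intro x
    simp [hπ, LinearMap.sum_apply]
  have hπ_mem : ∀ x, π x ∈ p := by
    intro x
    rw [hπ_apply]
    refine Submodule.smul_mem pC c (Submodule.sum_mem pC fun g _ => ?_)
    show _ ∈ p
    simpa [smul_eq_mul] using
      p.smul_mem (MonoidAlgebra.single g (1:ℂ)) (he_mem (MonoidAlgebra.single g⁻¹ (1:ℂ) * x))
  have hπ_id : ∀ x ∈ p, π x = x := by
    intro x hx
    rw [hπ_apply]
    have hterm : ∀ g : G,
        MonoidAlgebra.single g (1:ℂ) * e (MonoidAlgebra.single g⁻¹ (1:ℂ) * x) = x := by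
      intro g
      have hx' : MonoidAlgebra.single g⁻¹ (1:ℂ) * x ∈ p := by
        simpa [smul_eq_mul] using p.smul_mem (MonoidAlgebra.single g⁻¹ (1:ℂ)) hx
      rw [he_id _ hx', single_one_cancel]
    rw [Finset.sum_congr rfl (fun g _ => hterm g), Finset.sum_const, Finset.card_univ,
      hc, ← Nat.cast_smul_eq_nsmul ℂ, smul_smul]
    rw [inv_mul_cancel₀ (Nat.cast_ne_zero.mpr Fintype.card_ne_zero), one_smul]
  have hπ_comm : ∀ (h : G) (x), π (MonoidAlgebra.single h (1:ℂ) * x)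
      = MonoidAlgebra.single h (1:ℂ) * π x := by
    intro h x
    rw [hπ_apply, hπ_apply, mul_smul_comm, Finset.mul_sum]
    congr 1
    rw [← Equiv.sum_comp (Equiv.mulLeft h)
      (fun g : G => MonoidAlgebra.single g (1:ℂ) *
        e (MonoidAlgebra.single g⁻¹ (1:ℂ) * (MonoidAlgebra.single h (1:ℂ) * x)))]
    refine Finset.sum_congr rfl fun g _ => ?_
    simp only [Equiv.coe_mulLeft]
    have h1 : MonoidAlgebra.single (h*g)⁻¹ (1:ℂ) *
        (MonoidAlgebra.single h (1:ℂ) * x) = MonoidAlgebra.single g⁻¹ (1:ℂ) * x := by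
      rw [← mul_assoc, MonoidAlgebra.single_mul_single, one_mul]
      congr 1
      simp [mul_assoc]
    have h2 : MonoidAlgebra.single (h*g) (1:ℂ)
        = MonoidAlgebra.single h (1:ℂ) * MonoidAlgebra.single g (1:ℂ) := by
      rw [MonoidAlgebra.single_mul_single, one_mul]
    rw [h1, h2, mul_assoc]
  -- the complement
  have hinv : ∀ g : G, ∀ v ∈ (LinearMap.ker π ⊓ W.restrictScalars ℂ),
      MonoidAlgebra.single g (1:ℂ) * v ∈ (LinearMap.ker π ⊓ W.restrictScalars ℂ) := by
    intro g v hv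
    obtain ⟨hv1, hv2⟩ := Submodule.mem_inf.mp hv
    rw [Submodule.mem_inf]
    constructor
    · rw [LinearMap.mem_ker, hπ_comm g v, LinearMap.mem_ker.mp hv1, mul_zero]
    · simpa [smul_eq_mul] using W.smul_mem (MonoidAlgebra.single g (1:ℂ)) hv2
  refine ⟨toASub (LinearMap.ker π ⊓ W.restrictScalars ℂ) hinv, ?_, ?_, ?_⟩
  · intro x hx
    exact (Submodule.mem_inf.mp (mem_toASub.mp hx)).2
  · rw [eq_bot_iff]
    intro x hx
    obtain ⟨h1x, h2x⟩ := Submodule.mem_inf.mp hx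
    obtain ⟨hk, -⟩ := Submodule.mem_inf.mp (mem_toASub.mp h2x)
    simp only [Submodule.mem_bot]
    rw [← hπ_id x h1x, LinearMap.mem_ker.mp hk]
  · intro w hw
    rw [Submodule.mem_sup]
    refine ⟨π w, hπ_mem w, w - π w, ?_, by abel⟩
    rw [mem_toASub, Submodule.mem_inf]
    constructor
    · rw [LinearMap.mem_ker, map_sub, hπ_id _ (hπ_mem w), sub_self]
    · exact W.sub_mem hw (hpW (hπ_mem w))


/-- The representation of `G` on an `A`-submodule of the group algebra. -/
noncomputable def subRep (p : Submodule (MonoidAlgebra ℂ G) (MonoidAlgebra ℂ G)) :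
    Representation ℂ G ↥(p.restrictScalars ℂ) where
  toFun g :=
    { toFun := fun v => ⟨MonoidAlgebra.single g (1:ℂ) * ↑v, by
        simpa [smul_eq_mul] using p.smul_mem (MonoidAlgebra.single g (1:ℂ)) v.2⟩
      map_add' := by intro a b; ext; simp [mul_add]
      map_smul' := by intro c a; ext; simp [mul_smul_comm] }
  map_one' := by
    ext v
    simp [← MonoidAlgebra.one_def]
  map_mul' := by
    intro g h
    refine LinearMap.ext fun v => Subtype.ext ?_
    simp only [Module.End.mul_apply]
    show MonoidAlgebra.single (g*h) (1:ℂ) * ↑v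
      = MonoidAlgebra.single g (1:ℂ) * (MonoidAlgebra.single h (1:ℂ) * ↑v)
    rw [← mul_assoc, MonoidAlgebra.single_mul_single, one_mul]

lemma subRep_apply (p : Submodule (MonoidAlgebra ℂ G) (MonoidAlgebra ℂ G)) (g : G)
    (v : ↥(p.restrictScalars ℂ)) :
    (↑(subRep p g v) : MonoidAlgebra ℂ G) = MonoidAlgebra.single g (1:ℂ) * ↑v := rfl

lemma stabilizer_prop (H : Subgroup G) (hNP : ¬ IsLinearlyPrimitive H)
    (p : Submodule (MonoidAlgebra ℂ G) (MonoidAlgebra ℂ G)) (hpbot : p ≠ ⊥)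
    (hpsimple : ∀ r : Submodule (MonoidAlgebra ℂ G) (MonoidAlgebra ℂ G),
      r ≤ p → r = ⊥ ∨ r = p) :
    ¬ ({g : G | ∀ v ∈ p, (∀ h ∈ H, MonoidAlgebra.single h (1:ℂ) * v = v) →
        MonoidAlgebra.single g (1:ℂ) * v = v} = (H : Set G)) := by
  intro hstab
  apply hNP
  classical
  haveI : Fintype G := Fintype.ofFinite G
  set pC := p.restrictScalars ℂ with hpCdef
  haveI hnt : Nontrivial ↥pC := by
    rw [Submodule.nontrivial_iff_ne_bot]
    intro hbot
    apply hpbot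
    rw [eq_bot_iff]
    intro x hx
    have hx' : x ∈ pC := hx
    rw [hbot] at hx'
    simpa using hx'
  set d := finrank ℂ ↥pC with hd
  set eqv : ↥pC ≃ₗ[ℂ] (Fin d → ℂ) := (Module.finBasis ℂ ↥pC).equivFun with heqv
  set ρ0 := subRep p with hρ0
  set ρ : Representation ℂ G (Fin d → ℂ) :=
    { toFun := fun g => eqv.toLinearMap ∘ₗ (ρ0 g) ∘ₗ eqv.symm.toLinearMap
      map_one' := by
        ext v
        simp
      map_mul' := by
        intro g h
        ext v
        simp } with hρ
  have hρ_apply : ∀ (g : G) (v : Fin d → ℂ), ρ g v = eqv (ρ0 g (eqv.symm v)) := by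
    intro g v; rfl
  -- transfer of fixedness
  have hfix : ∀ (g : G) (w : ↥pC), (ρ0 g w = w ↔ MonoidAlgebra.single g (1:ℂ) * ↑w = ↑w) := by
    intro g w
    rw [← Subtype.coe_inj, subRep_apply]
  refine ⟨Fin d → ℂ, inferInstance, inferInstance, ρ, inferInstance, ?_, ?_, ?_⟩
  · exact Equiv.nontrivial eqv.symm.toEquiv
  · -- irreducibility
    intro U hU
    set U0 : Submodule ℂ ↥pC := U.comap eqv.toLinearMap with hU0
    set Uim : Submodule ℂ (MonoidAlgebra ℂ G) := U0.map pC.subtype with hUim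
    have hinv : ∀ g : G, ∀ v ∈ Uim, MonoidAlgebra.single g (1:ℂ) * v ∈ Uim := by
      rintro g v ⟨w, hw, rfl⟩
      refine ⟨ρ0 g w, ?_, (subRep_apply p g w).symm⟩
      have : eqv (ρ0 g w) = ρ g (eqv w) := by
        rw [hρ_apply, LinearEquiv.symm_apply_apply]
      show eqv (ρ0 g w) ∈ U
      rw [this]
      exact hU g (eqv w) hw
    have hle : toASub Uim hinv ≤ p := by
      rintro x ⟨w, hw, rfl⟩
      exact w.2
    rcases hpsimple (toASub Uim hinv) hle with hbot | htop
    · left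
      rw [eq_bot_iff]
      intro u hu
      have h1 : (↑(eqv.symm u) : MonoidAlgebra ℂ G) ∈ Uim := by
        refine ⟨eqv.symm u, ?_, rfl⟩
        show eqv (eqv.symm u) ∈ U
        rwa [LinearEquiv.apply_symm_apply]
      have h2 : (↑(eqv.symm u) : MonoidAlgebra ℂ G) ∈ (⊥ : Submodule (MonoidAlgebra ℂ G) (MonoidAlgebra ℂ G)) := by
        rw [← hbot]; exact h1
      have h3 : (↑(eqv.symm u) : MonoidAlgebra ℂ G) = 0 := by simpa using h2
      have h4 : eqv.symm u = 0 := Subtype.coe_injective (by simpa using h3)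
      have : u = 0 := by
        have := congrArg eqv h4
        rwa [LinearEquiv.apply_symm_apply, map_zero] at this
      simp [this]
    · right
      rw [eq_top_iff]
      intro u _
      have h1 : (↑(eqv.symm u) : MonoidAlgebra ℂ G) ∈ toASub Uim hinv := by
        rw [htop]; exact (eqv.symm u).2
      obtain ⟨w, hw, hwe⟩ := h1
      have h2 : w = eqv.symm u := Subtype.coe_injective hwe
      rw [h2] at hw
      have : eqv (eqv.symm u) ∈ U := hw
      rwa [LinearEquiv.apply_symm_apply] at this
  · -- stabilizer
    rw [← hstab]
    ext g
    simp only [Set.mem_setOf_eq]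
    constructor
    · intro hg w hw hwfix
      have hpre : ∀ h ∈ H, ρ h (eqv ⟨w, hw⟩) = eqv ⟨w, hw⟩ := by
        intro h hh
        rw [hρ_apply, LinearEquiv.symm_apply_apply, ← LinearEquiv.apply_symm_apply eqv (eqv ⟨w, hw⟩)]
        congr 1
        rw [LinearEquiv.symm_apply_apply, hfix]
        exact hwfix h hh
      have := hg (eqv ⟨w, hw⟩) hpre
      rw [hρ_apply, LinearEquiv.symm_apply_apply] at this
      have h2 : ρ0 g ⟨w, hw⟩ = ⟨w, hw⟩ := eqv.injective this
      rw [hfix] at h2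
      exact h2
    · intro hg v hv
      rw [hρ_apply, ← LinearEquiv.apply_symm_apply eqv v]
      congr 1
      rw [LinearEquiv.symm_apply_apply, hfix]
      refine hg (↑(eqv.symm v)) (eqv.symm v).2 ?_
      intro h hh
      rw [← hfix]
      have hpre := hv h hh
      rw [hρ_apply] at hpre
      have := congrArg eqv.symm hpre
      rwa [LinearEquiv.symm_apply_apply] at this


lemma exists_minimal_overgroup {H L : Subgroup G} (hHL : H < L) :
    ∃ K : Subgroup G, IsMinimalOvergroup H K ∧ K ≤ L := by
  have hwf : WellFounded ((· < ·) : Subgroup G → Subgroup G → Prop) := IsWellFounded.wf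
  obtain ⟨K, ⟨hK1, hK2⟩, hmin⟩ := hwf.has_min {K | H < K ∧ K ≤ L} ⟨L, hHL, le_refl L⟩
  refine ⟨K, ⟨hK1, ?_⟩, hK2⟩
  intro K' hK' hle
  by_contra hne
  exact hmin K' ⟨hK', hle.trans hK2⟩ (lt_of_le_of_ne hle hne)

lemma simple_fixed_le (H : Subgroup G) (hNP : ¬ IsLinearlyPrimitive H)
    (S : Finset (Subgroup G)) (hS : ∀ K : Subgroup G, K ∈ S ↔ IsMinimalOvergroup H K)
    (p : Submodule (MonoidAlgebra ℂ G) (MonoidAlgebra ℂ G)) (hpbot : p ≠ ⊥)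
    (hpsimple : ∀ r : Submodule (MonoidAlgebra ℂ G) (MonoidAlgebra ℂ G),
      r ≤ p → r = ⊥ ∨ r = p) :
    ∃ K ∈ S, ∀ v ∈ p, (∀ h ∈ H, MonoidAlgebra.single h (1:ℂ) * v = v) → v ∈ fixedC K := by
  have hne := stabilizer_prop H hNP p hpbot hpsimple
  set L : Subgroup G :=
    { carrier := {g : G | ∀ v ∈ p, (∀ h ∈ H, MonoidAlgebra.single h (1:ℂ) * v = v) →
        MonoidAlgebra.single g (1:ℂ) * v = v}
      one_mem' := by
        intro v hv hfix
        rw [← MonoidAlgebra.one_def, one_mul]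
      mul_mem' := by
        intro a b ha hb v hv hfix
        have h1 : MonoidAlgebra.single (a*b) (1:ℂ) * v
            = MonoidAlgebra.single a (1:ℂ) * (MonoidAlgebra.single b (1:ℂ) * v) := by
          rw [← mul_assoc, MonoidAlgebra.single_mul_single, one_mul]
        rw [h1, hb v hv hfix]
        exact ha v hv hfix
      inv_mem' := by
        intro a ha v hv hfix
        have h1 := ha v hv hfix
        calc MonoidAlgebra.single a⁻¹ (1:ℂ) * v
            = MonoidAlgebra.single a⁻¹ (1:ℂ) * (MonoidAlgebra.single a (1:ℂ) * v) := by rw [h1]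
          _ = v := by
              rw [← mul_assoc, MonoidAlgebra.single_mul_single, inv_mul_cancel, one_mul,
                ← MonoidAlgebra.one_def, one_mul] } with hLdef
  have hHL : H ≤ L := fun h hh v hv hfix => hfix h hh
  have hHneL : H ≠ L := by
    intro h
    apply hne
    have h2 : ({g : G | ∀ v ∈ p, (∀ h ∈ H, MonoidAlgebra.single h (1:ℂ) * v = v) →
        MonoidAlgebra.single g (1:ℂ) * v = v} : Set G) = ↑L := rfl
    rw [h2, ← h]
  obtain ⟨K, hK, hKL⟩ := exists_minimal_overgroup (lt_of_le_of_ne hHL hHneL)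
  refine ⟨K, (hS K).mpr hK, ?_⟩
  intro v hv hfix k hk
  exact hKL hk v hv hfix

lemma exists_simple_le (W : Submodule (MonoidAlgebra ℂ G) (MonoidAlgebra ℂ G)) (hW : W ≠ ⊥) :
    ∃ p : Submodule (MonoidAlgebra ℂ G) (MonoidAlgebra ℂ G), p ≠ ⊥ ∧ p ≤ W ∧
      ∀ r : Submodule (MonoidAlgebra ℂ G) (MonoidAlgebra ℂ G), r ≤ p → r = ⊥ ∨ r = p := by
  classical
  set s : Set ℕ := {n | ∃ r : Submodule (MonoidAlgebra ℂ G) (MonoidAlgebra ℂ G),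
    r ≠ ⊥ ∧ r ≤ W ∧ finrank ℂ (r.restrictScalars ℂ) = n} with hsdef
  have hs : s.Nonempty := ⟨_, W, hW, le_refl W, rfl⟩
  obtain ⟨p, hp1, hp2, hp3⟩ := Nat.sInf_mem hs
  refine ⟨p, hp1, hp2, ?_⟩
  intro r hr
  by_cases hrb : r = ⊥
  · left; exact hrb
  right
  have h1 : sInf s ≤ finrank ℂ (r.restrictScalars ℂ) := Nat.sInf_le ⟨r, hrb, hr.trans hp2, rfl⟩
  have h2 : r.restrictScalars ℂ ≤ p.restrictScalars ℂ := fun x hx => hr hx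
  have h3 : finrank ℂ (r.restrictScalars ℂ) ≤ finrank ℂ (p.restrictScalars ℂ) :=
    Submodule.finrank_mono h2
  have heq : finrank ℂ (r.restrictScalars ℂ) = finrank ℂ (p.restrictScalars ℂ) :=
    le_antisymm h3 (hp3 ▸ h1)
  have h4 : r.restrictScalars ℂ = p.restrictScalars ℂ :=
    Submodule.eq_of_le_of_finrank_eq h2 heq
  exact Submodule.restrictScalars_injective ℂ _ _ h4

lemma fixed_le_sup (H : Subgroup G) (hNP : ¬ IsLinearlyPrimitive H)
    (S : Finset (Subgroup G)) (hS : ∀ K : Subgroup G, K ∈ S ↔ IsMinimalOvergroup H K) :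
    ∀ (n : ℕ) (W : Submodule (MonoidAlgebra ℂ G) (MonoidAlgebra ℂ G)),
      finrank ℂ (W.restrictScalars ℂ) ≤ n → ∀ v ∈ W,
      (∀ h ∈ H, MonoidAlgebra.single h (1:ℂ) * v = v) → v ∈ ⨆ K ∈ S, fixedC K := by
  intro n
  induction n with
  | zero =>
    intro W hW v hv hfix
    have hWb : W.restrictScalars ℂ = ⊥ := by
      rw [← Submodule.finrank_eq_zero]
      omega
    have : v ∈ (⊥ : Submodule ℂ (MonoidAlgebra ℂ G)) := hWb ▸ (hv : v ∈ W.restrictScalars ℂ)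
    rw [Submodule.mem_bot] at this
    rw [this]
    exact Submodule.zero_mem _
  | succ n ih =>
    intro W hWn v hv hfix
    by_cases hWb : W = ⊥
    · subst hWb
      rw [Submodule.mem_bot] at hv
      rw [hv]
      exact Submodule.zero_mem _
    obtain ⟨p, hpb, hpW, hpsimple⟩ := exists_simple_le W hWb
    obtain ⟨q, hqW, hpq, hWpq⟩ := exists_compl_in p W hpW
    obtain ⟨K, hKS, hK⟩ := simple_fixed_le H hNP S hS p hpb hpsimple
    obtain ⟨a, ha, b, hb, hab⟩ := Submodule.mem_sup.mp (hWpq hv)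
    have hfix_ab : ∀ h ∈ H, MonoidAlgebra.single h (1:ℂ) * a = a ∧
        MonoidAlgebra.single h (1:ℂ) * b = b := by
      intro h hh
      have h1 : (MonoidAlgebra.single h (1:ℂ) * a - a) + (MonoidAlgebra.single h (1:ℂ) * b - b)
          = 0 := by
        have : MonoidAlgebra.single h (1:ℂ) * a + MonoidAlgebra.single h (1:ℂ) * b = a + b := by
          rw [← mul_add, hab, hfix h hh]
        rw [sub_add_sub_comm, this, sub_self]
      have hpa : MonoidAlgebra.single h (1:ℂ) * a - a ∈ p := by
        refine p.sub_mem ?_ ha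
        simpa [smul_eq_mul] using p.smul_mem (MonoidAlgebra.single h (1:ℂ)) ha
      have hqb : MonoidAlgebra.single h (1:ℂ) * b - b ∈ q := by
        refine q.sub_mem ?_ hb
        simpa [smul_eq_mul] using q.smul_mem (MonoidAlgebra.single h (1:ℂ)) hb
      have hpa' : MonoidAlgebra.single h (1:ℂ) * a - a ∈ q := by
        have : MonoidAlgebra.single h (1:ℂ) * a - a
            = -(MonoidAlgebra.single h (1:ℂ) * b - b) := by
          rw [eq_neg_iff_add_eq_zero]
          exact h1
        rw [this]
        exact q.neg_mem hqb
      have hmem : MonoidAlgebra.single h (1:ℂ) * a - a ∈ p ⊓ q := ⟨hpa, hpa'⟩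
      rw [hpq, Submodule.mem_bot, sub_eq_zero] at hmem
      constructor
      · exact hmem
      · have h3 : MonoidAlgebra.single h (1:ℂ) * a - a = 0 := by rw [hmem, sub_self]
        rw [h3, zero_add, sub_eq_zero] at h1
        exact h1
    have haK : a ∈ fixedC K := hK a ha (fun h hh => (hfix_ab h hh).1)
    have hqlt : q < W := by
      refine lt_of_le_of_ne hqW ?_
      intro he
      apply hpb
      have hpq' : p ≤ q := he ▸ hpW
      rw [← hpq]
      exact le_antisymm (le_inf (le_refl p) hpq') inf_le_left
    have hfr : finrank ℂ (q.restrictScalars ℂ) ≤ n := by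
      have hlt : q.restrictScalars ℂ < W.restrictScalars ℂ := by
        refine lt_of_le_of_ne (fun x hx => hqlt.le hx) ?_
        intro he
        exact hqlt.ne (Submodule.restrictScalars_injective ℂ _ _ he)
      have := Submodule.finrank_lt_finrank_of_lt hlt
      omega
    have hbK : b ∈ ⨆ K ∈ S, fixedC K := ih q hfr b hb (fun h hh => (hfix_ab h hh).2)
    have haK' : a ∈ ⨆ K ∈ S, fixedC K := by
      have hleK : fixedC K ≤ ⨆ K ∈ S, fixedC (G := G) K := le_biSup _ hKS
      exact hleK haK
    rw [← hab]
    exact Submodule.add_mem _ haK' hbK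

end LPAux

open LPAux Module

/-- If `H` is a proper subgroup of the finite group `G` and the minimal overgroups
`K₁, …, Kₙ` of `H` satisfy `∑ᵢ 1/|Kᵢ:H| ≤ 1`, then `[H,G]` is linearly primitive
(no distributivity needed). -/
theorem sum_le_one_linearly_primitive {G : Type*} [Group G] [Finite G]
    (H : Subgroup G) (hH : H ≠ ⊤)
    (S : Finset (Subgroup G))
    (hS : ∀ K : Subgroup G, K ∈ S ↔ IsMinimalOvergroup H K)
    (hsum : ∑ K ∈ S, (1 : ℚ) / (H.relIndex K : ℚ) ≤ 1) :
    IsLinearlyPrimitive H := by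
  classical
  by_contra hNP
  haveI : Fintype G := Fintype.ofFinite G
  have hle : fixedC H ≤ ⨆ K ∈ S, fixedC (G := G) K := by
    intro v hv
    exact fixed_le_sup H hNP S hS
      (finrank ℂ ((⊤ : Submodule (MonoidAlgebra ℂ G) (MonoidAlgebra ℂ G)).restrictScalars ℂ))
      ⊤ le_rfl v trivial hv
  set N := H.index with hN
  have h1 : N ≤ finrank ℂ ↥(⨆ K ∈ S, fixedC (G := G) K) := by
    rw [hN, ← finrank_fixedC (G := G) H]
    exact Submodule.finrank_mono hle
  have h2 := finrank_biSup_fixedC_le (G := G) S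
  have hA : N ≤ ∑ K ∈ S, (K.index - 1) + 1 := by
    refine le_trans h1 (le_trans h2 (le_of_eq ?_))
    congr 1
    exact Finset.sum_congr rfl fun K _ => by rw [finrank_fixedC]
  have hNne : N ≠ 0 := Subgroup.index_ne_zero_of_finite
  have hKfacts : ∀ K ∈ S, 1 ≤ K.index ∧ 2 * K.index ≤ N ∧ H.relIndex K ≠ 0 := by
    intro K hK
    have hmo := (hS K).mp hK
    have hHK : H ≤ K := hmo.1.le
    have hd : H.relIndex K * K.index = N := Subgroup.relIndex_mul_index hHK
    have hidx0 : K.index ≠ 0 := Subgroup.index_ne_zero_of_finite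
    have hrne : H.relIndex K ≠ 0 := by
      intro h0
      rw [h0, zero_mul] at hd
      exact hNne hd.symm
    have hr1 : H.relIndex K ≠ 1 := by
      intro h1
      rw [Subgroup.relIndex_eq_one] at h1
      exact hmo.1.not_ge h1
    have hd2 : 2 ≤ H.relIndex K := by omega
    refine ⟨by omega, ?_, hrne⟩
    calc 2 * K.index ≤ H.relIndex K * K.index := Nat.mul_le_mul_right _ hd2
      _ = N := hd
  have hB : ∑ K ∈ S, K.index ≤ N := by
    have hq : (∑ K ∈ S, (K.index : ℚ)) ≤ (N : ℚ) := by
      have heach : ∀ K ∈ S, (K.index : ℚ) = (N : ℚ) * (1 / (H.relIndex K : ℚ)) := by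
        intro K hK
        have hmo := (hS K).mp hK
        have hd : H.relIndex K * K.index = N := Subgroup.relIndex_mul_index hmo.1.le
        have hdne : (H.relIndex K : ℚ) ≠ 0 :=
          Nat.cast_ne_zero.mpr (hKfacts K hK).2.2
        have hdc : (H.relIndex K : ℚ) * (K.index : ℚ) = (N : ℚ) := by
          exact_mod_cast congrArg (fun n : ℕ => (n : ℚ)) hd
        rw [← hdc]
        field_simp
      calc (∑ K ∈ S, (K.index : ℚ))
          = ∑ K ∈ S, (N : ℚ) * (1 / (H.relIndex K : ℚ)) := Finset.sum_congr rfl heach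
        _ = (N : ℚ) * ∑ K ∈ S, 1 / (H.relIndex K : ℚ) := by rw [Finset.mul_sum]
        _ ≤ (N : ℚ) * 1 := by
            refine mul_le_mul_of_nonneg_left hsum (by positivity)
        _ = (N : ℚ) := mul_one _
    exact_mod_cast hq
  have hC : ∑ K ∈ S, (K.index - 1) + S.card = ∑ K ∈ S, K.index := by
    rw [Finset.card_eq_sum_ones, ← Finset.sum_add_distrib]
    exact Finset.sum_congr rfl fun K hK => Nat.sub_add_cancel (hKfacts K hK).1
  have hSne : S.Nonempty := by
    obtain ⟨K, hK, -⟩ := exists_minimal_overgroup (lt_top_iff_ne_top.mpr hH)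
    exact ⟨K, (hS K).mpr hK⟩
  have hcard : 1 ≤ S.card := Finset.card_pos.mpr hSne
  have hn1 : S.card = 1 := by omega
  obtain ⟨K0, hK0⟩ := Finset.card_eq_one.mp hn1
  have hK0S : K0 ∈ S := by rw [hK0]; exact Finset.mem_singleton_self K0
  have hf := hKfacts K0 hK0S
  rw [hK0, Finset.sum_singleton] at hA
  omega
end

section
/- Let G be a finite group and H a proper subgroup of G admitting at most two minimal overgroups. Then [H,G] is linearly primitive. In particular, every boolean interval of rank n ≤ 2 is linearly primitive. -/
open MonoidAlgebra

section Reg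
variable (G : Type) [Group G]

/-- left regular representation of `G` on its group algebra. -/
noncomputable def regRep : Representation ℂ G (MonoidAlgebra ℂ G) where
  toFun g := LinearMap.mulLeft ℂ (MonoidAlgebra.of ℂ G g)
  map_one' := by
    ext v
    simp [LinearMap.mulLeft_apply, MonoidAlgebra.one_def]
  map_mul' g h := by
    ext v
    simp [LinearMap.mulLeft_apply, map_mul, mul_assoc]

variable {G}

lemma regRep_apply (g : G) (v : MonoidAlgebra ℂ G) :
    regRep G g v = MonoidAlgebra.of ℂ G g * v := rfl

/-- invariant vectors under a subgroup -/
noncomputable def invSub (L : Subgroup G) : Submodule ℂ (MonoidAlgebra ℂ G) where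
  carrier := {v | ∀ l ∈ L, regRep G l v = v}
  zero_mem' := fun l _ => map_zero _
  add_mem' := fun {a b} ha hb l hl => by rw [map_add, ha l hl, hb l hl]
  smul_mem' := fun c v hv l hl => by rw [map_smul, hv l hl]

lemma mem_invSub {L : Subgroup G} {v : MonoidAlgebra ℂ G} :
    v ∈ invSub L ↔ ∀ l ∈ L, regRep G l v = v := Iff.rfl

end Reg

section Two
variable {G : Type} [Group G]

lemma mul_mem_of_invariant {U : Submodule ℂ (MonoidAlgebra ℂ G)}
    (hU : ∀ g : G, ∀ v ∈ U, regRep G g v ∈ U) (a : MonoidAlgebra ℂ G)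
    {v : MonoidAlgebra ℂ G} (hv : v ∈ U) : a * v ∈ U := by
  induction a using MonoidAlgebra.induction_on with
  | of g => exact hU g v hv
  | add f g hf hg => rw [add_mul]; exact U.add_mem hf hg
  | smul r f hf => rw [smul_mul_assoc]; exact U.smul_mem r hf

/-- upgrade an invariant `ℂ`-submodule to a module over the group algebra -/
noncomputable def toGA (U : Submodule ℂ (MonoidAlgebra ℂ G))
    (hU : ∀ g : G, ∀ v ∈ U, regRep G g v ∈ U) :
    Submodule (MonoidAlgebra ℂ G) (MonoidAlgebra ℂ G) where
  carrier := U
  zero_mem' := U.zero_mem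
  add_mem' := fun ha hb => U.add_mem ha hb
  smul_mem' := fun a v hv => by
    have : a • v = a * v := rfl
    rw [this]; exact mul_mem_of_invariant hU a hv

@[simp] lemma mem_toGA {U : Submodule ℂ (MonoidAlgebra ℂ G)} {hU} {v : MonoidAlgebra ℂ G} :
    v ∈ toGA U hU ↔ v ∈ U := Iff.rfl

lemma invariant_of_GA (S : Submodule (MonoidAlgebra ℂ G) (MonoidAlgebra ℂ G))
    (g : G) (v : MonoidAlgebra ℂ G) (hv : v ∈ S) : regRep G g v ∈ S := by
  have : regRep G g v = (MonoidAlgebra.of ℂ G g) • v := rfl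
  rw [this]; exact S.smul_mem _ hv

lemma csmul_mem_GA (S : Submodule (MonoidAlgebra ℂ G) (MonoidAlgebra ℂ G))
    (c : ℂ) (v : MonoidAlgebra ℂ G) (hv : v ∈ S) : c • v ∈ S := by
  rw [← algebraMap_smul (MonoidAlgebra ℂ G) c v]
  exact S.smul_mem _ hv

end Two

section Avg
variable {G : Type} [Group G] [Fintype G]

noncomputable instance (L : Subgroup G) : Fintype ↥L := Fintype.ofFinite _

/-- averaging projector onto the `L`-invariants -/
noncomputable def avg (L : Subgroup G) : MonoidAlgebra ℂ G →ₗ[ℂ] MonoidAlgebra ℂ G :=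
  (Nat.card L : ℂ)⁻¹ • ∑ l : L, (regRep G (l : G) : MonoidAlgebra ℂ G →ₗ[ℂ] MonoidAlgebra ℂ G)

lemma avg_apply (L : Subgroup G) (v : MonoidAlgebra ℂ G) :
    avg L v = (Nat.card L : ℂ)⁻¹ • ∑ l : L, regRep G (l : G) v := by
  simp [avg, LinearMap.sum_apply]

lemma avg_mem_inv (L : Subgroup G) (v : MonoidAlgebra ℂ G) : avg L v ∈ invSub L := by
  intro l hl
  rw [avg_apply, map_smul, map_sum]
  congr 1
  have : ∀ x : L, regRep G l (regRep G (x : G) v) = regRep G ((⟨l, hl⟩ * x : L) : G) v := by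
    intro x
    have := map_mul (regRep G) l (x : G)
    rw [show ((⟨l, hl⟩ * x : L) : G) = l * (x : G) from rfl, this]
    rfl
  simp_rw [this]
  exact Fintype.sum_equiv (Equiv.mulLeft (⟨l, hl⟩ : L)) _ _ (fun x => rfl)

lemma avg_fixed (L : Subgroup G) {v : MonoidAlgebra ℂ G} (hv : v ∈ invSub L) :
    avg L v = v := by
  rw [avg_apply]
  have h1 : ∀ l : L, regRep G (l : G) v = v := fun l => hv l l.2
  simp_rw [h1, Finset.sum_const, Finset.card_univ]
  rw [← Nat.card_eq_fintype_card, ← Nat.cast_smul_eq_nsmul ℂ, smul_smul,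
    inv_mul_cancel₀, one_smul]
  exact_mod_cast Nat.card_pos.ne'

lemma isProj_avg (L : Subgroup G) : LinearMap.IsProj (invSub L) (avg L) :=
  ⟨avg_mem_inv L, fun _ hv => avg_fixed L hv⟩

lemma avg_mem_GA (L : Subgroup G) (S : Submodule (MonoidAlgebra ℂ G) (MonoidAlgebra ℂ G))
    {v : MonoidAlgebra ℂ G} (hv : v ∈ S) : avg L v ∈ S := by
  rw [avg_apply]
  exact csmul_mem_GA S _ _ (Submodule.sum_mem S fun l _ => invariant_of_GA S _ v hv)

end Avg


section Tr
variable {G : Type} [Group G] [Fintype G]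

noncomputable def gaBasis : Module.Basis G ℂ (MonoidAlgebra ℂ G) := MonoidAlgebra.basis G ℂ

instance : Module.Finite ℂ (MonoidAlgebra ℂ G) := Module.Finite.of_basis gaBasis

variable [DecidableEq G]

lemma trace_regRep (g : G) :
    LinearMap.trace ℂ (MonoidAlgebra ℂ G) (regRep G g)
      = if g = 1 then (Fintype.card G : ℂ) else 0 := by
  rw [LinearMap.trace_eq_matrix_trace ℂ (gaBasis (G := G)), Matrix.trace]
  have hdiag : ∀ x : G, (LinearMap.toMatrix gaBasis gaBasis (regRep G g)).diag x
      = if g = 1 then 1 else 0 := by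
    intro x
    rw [Matrix.diag, LinearMap.toMatrix_apply]
    have hb : (gaBasis (G := G)) x = MonoidAlgebra.single x 1 := by
      rw [Module.Basis.apply_eq_iff]
      rfl
    have hmul : regRep G g (MonoidAlgebra.single x (1 : ℂ))
        = MonoidAlgebra.single (g * x) 1 := by
      rw [regRep_apply]
      simp [MonoidAlgebra.of_apply, MonoidAlgebra.single_mul_single]
    rw [hb, hmul]
    have hrepr : (gaBasis (G := G)).repr (MonoidAlgebra.single (g * x) (1 : ℂ))
        = Finsupp.single (g * x) 1 := rfl
    rw [hrepr, Finsupp.single_apply]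
    by_cases hg : g = 1
    · simp [hg]
    · have hne : ¬ (g * x = x) := fun h => hg (by
        have h2 : g * x = 1 * x := by rw [h, one_mul]
        exact mul_right_cancel h2)
      simp [hne, hg]
  simp_rw [hdiag]
  simp [Finset.sum_ite_eq]

end Tr

section Rank
variable {G : Type} [Group G] [Fintype G]

lemma sum_trace_regRep (L : Subgroup G) :
    ∑ l : L, LinearMap.trace ℂ (MonoidAlgebra ℂ G) (regRep G (l : G))
      = (Fintype.card G : ℂ) := by
  classical
  have : ∀ l : L, LinearMap.trace ℂ (MonoidAlgebra ℂ G) (regRep G (l : G))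
      = if l = (1 : L) then (Fintype.card G : ℂ) else 0 := by
    intro l
    rw [trace_regRep]
    simp only [OneMemClass.coe_eq_one]
  simp_rw [this]
  rw [Finset.sum_ite_eq' Finset.univ (1 : L) (fun _ => (Fintype.card G : ℂ)),
    if_pos (Finset.mem_univ _)]

lemma finrank_invSub (L : Subgroup G) :
    Module.finrank ℂ ↥(invSub L) = L.index := by
  classical
  have htr : LinearMap.trace ℂ (MonoidAlgebra ℂ G) (avg L)
      = (Module.finrank ℂ ↥(invSub L) : ℂ) := (isProj_avg L).trace
  have htr2 : LinearMap.trace ℂ (MonoidAlgebra ℂ G) (avg L)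
      = (Nat.card L : ℂ)⁻¹ * (Fintype.card G : ℂ) := by
    rw [avg, map_smul, map_sum, sum_trace_regRep, smul_eq_mul]
  have hcardL : ((Nat.card L : ℂ)) ≠ 0 := by
    exact_mod_cast Nat.card_pos.ne'
  have key : (Module.finrank ℂ ↥(invSub L) : ℂ) * (Nat.card L : ℂ)
      = (Nat.card G : ℂ) := by
    rw [← htr, htr2, Nat.card_eq_fintype_card]
    field_simp
    rw [Nat.card_eq_fintype_card]
  have keyN : Module.finrank ℂ ↥(invSub L) * Nat.card L = Nat.card G := by
    exact_mod_cast key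
  have := L.index_mul_card
  have h0 : Nat.card ↥L ≠ 0 := Nat.card_pos.ne'
  exact Nat.eq_of_mul_eq_mul_right (Nat.pos_of_ne_zero h0) (by omega)

end Rank

section Min
variable {G : Type} [Group G] [Finite G]

instance : Finite (Subgroup G) :=
  Finite.of_injective (fun S => (S : Set G)) fun _ _ h => SetLike.coe_injective h

lemma exists_minimal_overgroup {H P : Subgroup G} (h : H < P) :
    ∃ K : Subgroup G, IsMinimalOvergroup H K ∧ K ≤ P := by
  obtain ⟨K, hK, hmin⟩ := (Finite.to_wellFoundedLT (α := Subgroup G)).wf.has_min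
    {L : Subgroup G | H < L ∧ L ≤ P} ⟨P, h, le_rfl⟩
  refine ⟨K, ⟨hK.1, fun K' hK' hle => ?_⟩, hK.2⟩
  by_contra hne
  exact hmin K' ⟨hK', hle.trans hK.2⟩ (lt_of_le_of_ne hle hne)

end Min

section Res
variable {G : Type} [Group G]

/-- restriction of the regular representation to an invariant subspace -/
noncomputable def resRep (S' : Submodule ℂ (MonoidAlgebra ℂ G))
    (hS' : ∀ g : G, ∀ v ∈ S', regRep G g v ∈ S') : Representation ℂ G ↥S' where
  toFun g := (regRep G g).restrict (fun v hv => hS' g v hv)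
  map_one' := by
    refine LinearMap.ext fun x => Subtype.ext ?_
    simp [LinearMap.restrict_apply]
  map_mul' g h := by
    refine LinearMap.ext fun x => Subtype.ext ?_
    simp [LinearMap.restrict_apply, map_mul]

@[simp] lemma resRep_coe (S' : Submodule ℂ (MonoidAlgebra ℂ G)) (hS') (g : G) (v : ↥S') :
    (resRep S' hS' g v : MonoidAlgebra ℂ G) = regRep G g (v : MonoidAlgebra ℂ G) := rfl

end Res

section MainAux
variable {G : Type} [Group G] [Fintype G]

/-- The simple summand analysis: if the theorem's conclusion fails, every simple
summand of the regular representation has its `H`-invariants fixed pointwise by a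
minimal overgroup. -/
lemma simple_summand (H : Subgroup G) (hnot : ¬ IsLinearlyPrimitive H)
    (S : Submodule (MonoidAlgebra ℂ G) (MonoidAlgebra ℂ G))
    (hS : IsSimpleModule (MonoidAlgebra ℂ G) ↥S) :
    ∃ K : Subgroup G, IsMinimalOvergroup H K ∧
      (S.restrictScalars ℂ) ⊓ invSub H ≤ invSub K := by
  classical
  set S' : Submodule ℂ (MonoidAlgebra ℂ G) := S.restrictScalars ℂ with hS'def
  have hS'inv : ∀ g : G, ∀ v ∈ S', regRep G g v ∈ S' := fun g v hv =>
    invariant_of_GA S g v hv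
  set σ : Representation ℂ G ↥S' := resRep S' hS'inv with hσdef
  have hatom : IsAtom S := isSimpleModule_iff_isAtom.mp hS
  -- nontriviality
  have hSbot : S' ≠ ⊥ := by
    simpa [hS'def, Submodule.restrictScalars_eq_bot_iff] using hatom.1
  haveI hnt : Nontrivial ↥S' := Submodule.nontrivial_iff_ne_bot.mpr hSbot
  -- irreducibility
  have hirr : ∀ U : Submodule ℂ ↥S', (∀ g : G, ∀ v ∈ U, σ g v ∈ U) → U = ⊥ ∨ U = ⊤ := by
    intro U hU
    have hinj : Function.Injective (S'.subtype) := Subtype.coe_injective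
    set U' : Submodule ℂ (MonoidAlgebra ℂ G) := U.map S'.subtype with hU'def
    have hU'inv : ∀ g : G, ∀ v ∈ U', regRep G g v ∈ U' := by
      rintro g v ⟨u, hu, rfl⟩
      exact ⟨σ g u, hU g u hu, rfl⟩
    have hle : toGA U' hU'inv ≤ S := by
      rintro v ⟨u, hu, rfl⟩
      exact u.2
    rcases hatom.le_iff.mp hle with h | h
    · left
      have : U.map S'.subtype = (⊥ : Submodule ℂ (MonoidAlgebra ℂ G)) := by
        ext x
        constructor
        · intro hx
          have : x ∈ toGA U' hU'inv := hx
          rw [h] at this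
          simpa using this
        · intro hx
          simp only [Submodule.mem_bot] at hx
          subst hx
          exact U'.zero_mem
      have := Submodule.map_injective_of_injective hinj
        (this.trans (Submodule.map_bot S'.subtype).symm)
      exact this
    · right
      have hmapeq : U.map S'.subtype = S' := by
        apply le_antisymm (Submodule.map_subtype_le S' U)
        intro x hx
        have : x ∈ toGA U' hU'inv := by rw [h]; exact hx
        exact this
      have htop : (⊤ : Submodule ℂ ↥S').map S'.subtype = S' := by
        rw [Submodule.map_top, Submodule.range_subtype]
      exact Submodule.map_injective_of_injective hinj (hmapeq.trans htop.symm)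
  -- the set is not H
  have hset : {g : G | ∀ v : ↥S', (∀ h : G, h ∈ H → σ h v = v) → σ g v = v} ≠ (H : Set G) :=
    fun h => hnot ⟨↥S', inferInstance, inferInstance, σ, inferInstance, hnt, hirr, h⟩
  -- the stabilizer subgroup P
  set P : Subgroup G :=
    { carrier := {g : G | ∀ v : ↥S', (∀ h : G, h ∈ H → σ h v = v) → σ g v = v}
      one_mem' := fun v _ => by rw [map_one]; rfl
      mul_mem' := by
        intro g1 g2 h1 h2 v hv
        rw [map_mul]
        have : σ g2 v = v := h2 v hv
        show σ g1 (σ g2 v) = v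
        rw [this]
        exact h1 v hv
      inv_mem' := by
        intro g hg v hv
        have h1 : σ g v = v := hg v hv
        have : σ g⁻¹ (σ g v) = v := by
          rw [← Module.End.mul_apply, ← map_mul, inv_mul_cancel, map_one]; rfl
        rw [h1] at this
        exact this } with hPdef
  have hHP : H ≤ P := fun h hh v hv => hv h hh
  have hPne : P ≠ H := fun h =>
    hset (congrArg (fun Q : Subgroup G => (Q : Set G)) h)
  have hHPlt : H < P := lt_of_le_of_ne hHP (Ne.symm hPne)
  obtain ⟨K, hK, hKP⟩ := exists_minimal_overgroup hHPlt
  refine ⟨K, hK, ?_⟩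
  rintro v ⟨hvS, hvH⟩ k hk
  have hfix : ∀ h : G, h ∈ H → σ h ⟨v, hvS⟩ = ⟨v, hvS⟩ := by
    intro h hh
    exact Subtype.ext (hvH h hh)
  have := hKP hk ⟨v, hvS⟩ hfix
  exact congrArg Subtype.val this

end MainAux

section Count
variable {G : Type} [Group G] [Fintype G]

lemma index_le_half {H K : Subgroup G} (hK : H < K) : 2 * K.index ≤ H.index := by
  have hmul : H.relIndex K * K.index = H.index := Subgroup.relIndex_mul_index hK.le
  have hne0 : H.index ≠ 0 := Subgroup.index_ne_zero_of_finite
  have hr0 : H.relIndex K ≠ 0 := by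
    intro h
    rw [h, zero_mul] at hmul
    exact hne0 hmul.symm
  have hr1 : H.relIndex K ≠ 1 := by
    intro h
    exact hK.not_ge (Subgroup.relIndex_eq_one.mp h)
  have : 2 ≤ H.relIndex K := by omega
  calc 2 * K.index ≤ H.relIndex K * K.index := Nat.mul_le_mul_right _ this
    _ = H.index := hmul

lemma constant_vector_mem (L : Subgroup G) :
    (∑ g : G, MonoidAlgebra.of ℂ G g) ∈ invSub L := by
  intro l _
  rw [regRep_apply, Finset.mul_sum]
  have : ∀ g : G, MonoidAlgebra.of ℂ G l * MonoidAlgebra.of ℂ G g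
      = MonoidAlgebra.of ℂ G (l * g) := fun g => (map_mul (MonoidAlgebra.of ℂ G) l g).symm
  simp_rw [this]
  exact Fintype.sum_equiv (Equiv.mulLeft l) _ _ (fun g => rfl)

lemma constant_vector_ne_zero : (∑ g : G, MonoidAlgebra.of ℂ G g) ≠ 0 := by
  classical
  intro h
  have := congrArg (fun v : MonoidAlgebra ℂ G => v.coeff 1) h
  simp only [MonoidAlgebra.coeff_zero, Finsupp.coe_zero, Pi.zero_apply] at this
  rw [show ((∑ g : G, MonoidAlgebra.of ℂ G g) : MonoidAlgebra ℂ G).coeff 1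
      = ∑ g : G, (MonoidAlgebra.of ℂ G g : MonoidAlgebra ℂ G).coeff 1 from by
    rw [MonoidAlgebra.coeff_sum]; exact Finset.sum_apply' 1] at this
  have hterm : ∀ g : G, (MonoidAlgebra.of ℂ G g : MonoidAlgebra ℂ G).coeff (1 : G)
      = if g = 1 then (1 : ℂ) else 0 := by
    intro g
    rw [MonoidAlgebra.of_apply]
    exact Finsupp.single_apply
  simp_rw [hterm] at this
  rw [Finset.sum_ite_eq' Finset.univ (1 : G) (fun _ => (1 : ℂ)),
    if_pos (Finset.mem_univ _)] at this
  exact one_ne_zero this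

end Count

section Main
variable {G : Type} [Group G] [Fintype G]

theorem mainAux (H : Subgroup G) (hH : H ≠ ⊤)
    (h2 : {K : Subgroup G | IsMinimalOvergroup H K}.ncard ≤ 2) :
    IsLinearlyPrimitive H := by
  classical
  haveI : NeZero ((Fintype.card G : ℂ)) := ⟨Nat.cast_ne_zero.mpr Fintype.card_ne_zero⟩
  by_contra hnot
  -- pick the (at most two) minimal overgroups
  obtain ⟨K1, hK1, -⟩ := exists_minimal_overgroup (lt_top_iff_ne_top.mpr hH)
  obtain ⟨K2, hK2, hcover⟩ : ∃ K2 : Subgroup G, IsMinimalOvergroup H K2 ∧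
      ∀ K : Subgroup G, IsMinimalOvergroup H K → K = K1 ∨ K = K2 := by
    by_cases hex : ∃ K2 : Subgroup G, IsMinimalOvergroup H K2 ∧ K2 ≠ K1
    · obtain ⟨K2, hK2, hK2ne⟩ := hex
      refine ⟨K2, hK2, ?_⟩
      intro K hK
      by_contra hcon
      push_neg at hcon
      obtain ⟨h1, h2'⟩ := hcon
      have hsub : ({K1, K2, K} : Set (Subgroup G)) ⊆
          {K' : Subgroup G | IsMinimalOvergroup H K'} := by
        rintro K' (rfl | rfl | rfl) <;> assumption
      have h3 : ({K1, K2, K} : Set (Subgroup G)).ncard = 3 := by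
        rw [Set.ncard_insert_of_notMem (by simp [hK2ne.symm, h1.symm] : K1 ∉ ({K2, K} : Set _))
            (Set.toFinite _),
          Set.ncard_insert_of_notMem (by simp [h2'.symm]) (Set.toFinite _),
          Set.ncard_singleton]
      have := Set.ncard_le_ncard hsub (Set.toFinite _)
      omega
    · push_neg at hex
      exact ⟨K1, hK1, fun K hK => Or.inl (hex K hK)⟩
  -- every simple summand is pointwise fixed by K1 or K2 on its H-invariants
  have key : ∀ S : Submodule (MonoidAlgebra ℂ G) (MonoidAlgebra ℂ G),
      IsSimpleModule (MonoidAlgebra ℂ G) ↥S →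
      (S.restrictScalars ℂ) ⊓ invSub H ≤ invSub K1 ⊔ invSub K2 := by
    intro S hS
    obtain ⟨K, hK, hle⟩ := simple_summand H hnot S hS
    rcases hcover K hK with rfl | rfl
    · exact hle.trans le_sup_left
    · exact hle.trans le_sup_right
  -- hence the H-invariants of the regular representation lie in invSub K1 ⊔ invSub K2
  have hcontain : invSub (G := G) H ≤ invSub K1 ⊔ invSub K2 := by
    intro v hv
    have hv' : v ∈ (⊤ : Submodule (MonoidAlgebra ℂ G) (MonoidAlgebra ℂ G)) := trivial
    rw [← IsSemisimpleModule.sSup_simples_eq_top (MonoidAlgebra ℂ G) (MonoidAlgebra ℂ G),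
      sSup_eq_iSup'] at hv'
    have hmot : avg H v ∈ invSub K1 ⊔ invSub K2 := by
      refine Submodule.iSup_induction (motive := fun w => avg H w ∈ invSub K1 ⊔ invSub K2)
        _ hv' (fun S x hx => ?_) ?_ ?_
      · have h1 : avg H x ∈ (S : Submodule (MonoidAlgebra ℂ G) (MonoidAlgebra ℂ G)) :=
          avg_mem_GA H S hx
        have h2' : avg H x ∈ invSub H := avg_mem_inv H x
        exact key S S.2 ⟨h1, h2'⟩
      · show avg H 0 ∈ invSub K1 ⊔ invSub K2
        rw [map_zero]
        exact Submodule.zero_mem _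
      · intro x y hx hy
        show avg H (x + y) ∈ invSub K1 ⊔ invSub K2
        rw [map_add]
        exact Submodule.add_mem _ hx hy
    rwa [avg_fixed H hv] at hmot
  -- dimension count
  have hd : Module.finrank ℂ ↥(invSub (G := G) H) = H.index := finrank_invSub H
  have hd1 : Module.finrank ℂ ↥(invSub (G := G) K1) = K1.index := finrank_invSub K1
  have hd2 : Module.finrank ℂ ↥(invSub (G := G) K2) = K2.index := finrank_invSub K2
  have hsupinf : Module.finrank ℂ ↥(invSub (G := G) K1 ⊔ invSub K2)
      + Module.finrank ℂ ↥(invSub (G := G) K1 ⊓ invSub K2)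
      = K1.index + K2.index := by
    rw [← hd1, ← hd2]
    exact Submodule.finrank_sup_add_finrank_inf_eq _ _
  have hmono : Module.finrank ℂ ↥(invSub (G := G) H)
      ≤ Module.finrank ℂ ↥(invSub (G := G) K1 ⊔ invSub K2) :=
    Submodule.finrank_mono hcontain
  have hinf1 : 1 ≤ Module.finrank ℂ ↥(invSub (G := G) K1 ⊓ invSub K2) := by
    haveI : Nontrivial ↥(invSub (G := G) K1 ⊓ invSub K2) := by
      refine ⟨⟨⟨∑ g : G, MonoidAlgebra.of ℂ G g,
        ⟨constant_vector_mem K1, constant_vector_mem K2⟩⟩, 0, ?_⟩⟩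
      intro h
      exact constant_vector_ne_zero (congrArg Subtype.val h)
    exact Module.finrank_pos
  have ha : 2 * K1.index ≤ H.index := index_le_half hK1.1
  have hb : 2 * K2.index ≤ H.index := index_le_half hK2.1
  omega

end Main

lemma top_linearly_primitive {G : Type} [Group G] :
    IsLinearlyPrimitive (⊤ : Subgroup G) := by
  refine ⟨ℂ, inferInstance, inferInstance, 1, inferInstance, inferInstance, ?_, ?_⟩
  · intro U _
    by_cases h : U = ⊥
    · exact Or.inl h
    · right
      obtain ⟨x, hxU, hx0⟩ := Submodule.exists_mem_ne_zero_of_ne_bot h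
      rw [Submodule.eq_top_iff']
      intro y
      have : y = (y * x⁻¹) • x := by
        rw [smul_eq_mul, mul_assoc, inv_mul_cancel₀ hx0, mul_one]
      rw [this]
      exact U.smul_mem _ hxU
  · ext g
    simp only [Set.mem_setOf_eq, Subgroup.coe_top, Set.mem_univ, iff_true]
    intro v _
    rfl

lemma atoms_ncard_le_of_orderIso {G : Type} [Group G] {H : Subgroup G} {n : ℕ}
    (e : (Set.Icc H (⊤ : Subgroup G)) ≃o Set (Fin n)) :
    {K : Subgroup G | IsMinimalOvergroup H K}.ncard ≤ n := by
  classical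
  have hHmem : H ∈ Set.Icc H (⊤ : Subgroup G) := ⟨le_rfl, le_top⟩
  have hHbot : e ⟨H, hHmem⟩ = ∅ := by
    have h1 : (⟨H, hHmem⟩ : Set.Icc H (⊤ : Subgroup G)) ≤ e.symm ∅ := (e.symm ∅).2.1
    have h2 : e ⟨H, hHmem⟩ ≤ e (e.symm ∅) := e.le_iff_le.mpr h1
    rw [e.apply_symm_apply] at h2
    exact Set.subset_empty_iff.mp h2
  have hsub : {K : Subgroup G | IsMinimalOvergroup H K} ⊆
      (fun a : Fin n => ((e.symm {a} : Set.Icc H (⊤ : Subgroup G)) : Subgroup G)) ''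
        Set.univ := by
    intro K hK
    have hKmem : K ∈ Set.Icc H (⊤ : Subgroup G) := ⟨hK.1.le, le_top⟩
    have hsne : e ⟨K, hKmem⟩ ≠ ∅ := by
      intro h
      have h1 : (⟨K, hKmem⟩ : Set.Icc H (⊤ : Subgroup G)) = ⟨H, hHmem⟩ :=
        e.injective (by rw [h, hHbot])
      exact hK.1.ne' (congrArg Subtype.val h1)
    obtain ⟨a, ha⟩ := Set.nonempty_iff_ne_empty.mpr hsne
    refine ⟨a, trivial, ?_⟩
    have hsymmbot : e.symm ∅ = ⟨H, hHmem⟩ := by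
      rw [← hHbot, e.symm_apply_apply]
    have h1 : H < ((e.symm {a} : Set.Icc H (⊤ : Subgroup G)) : Subgroup G) := by
      have hlt : (∅ : Set (Fin n)) < {a} :=
        lt_of_le_of_ne (Set.empty_subset _) (Ne.symm (Set.singleton_ne_empty a))
      have := e.symm.lt_iff_lt.mpr hlt
      rw [hsymmbot] at this
      exact this
    have h2 : ((e.symm {a} : Set.Icc H (⊤ : Subgroup G)) : Subgroup G) ≤ K := by
      have hle : ({a} : Set (Fin n)) ≤ e ⟨K, hKmem⟩ := Set.singleton_subset_iff.mpr ha
      have := e.symm.le_iff_le.mpr hle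
      rw [e.symm_apply_apply] at this
      exact this
    exact hK.2 _ h1 h2
  calc {K : Subgroup G | IsMinimalOvergroup H K}.ncard
      ≤ ((fun a : Fin n => ((e.symm {a} : Set.Icc H (⊤ : Subgroup G)) : Subgroup G)) ''
        Set.univ).ncard := Set.ncard_le_ncard hsub (Set.toFinite _)
    _ ≤ (Set.univ : Set (Fin n)).ncard := Set.ncard_image_le (Set.toFinite _)
    _ = n := by simp [Set.ncard_univ]


/-- If a proper subgroup `H` of a finite group `G` admits at most two minimal
overgroups, then `[H,G]` is linearly primitive. In particular, every boolean
interval of rank `n ≤ 2` is linearly primitive. -/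
theorem at_most_two_minimal_overgroups_linearly_primitive :
    (∀ (G : Type) [Group G] [Finite G] (H : Subgroup G), H ≠ ⊤ →
      {K : Subgroup G | IsMinimalOvergroup H K}.ncard ≤ 2 →
      IsLinearlyPrimitive H) ∧
    (∀ (G : Type) [Group G] [Finite G] (H : Subgroup G) (n : ℕ), n ≤ 2 →
      ((Set.Icc H (⊤ : Subgroup G)) ≃o Set (Fin n)) →
      IsLinearlyPrimitive H) := by
  constructor
  · intro G _ _ H hH h2
    letI : Fintype G := Fintype.ofFinite G
    exact mainAux H hH h2
  · intro G _ _ H n hn e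
    by_cases hH : H = ⊤
    · subst hH
      exact top_linearly_primitive
    · letI : Fintype G := Fintype.ofFinite G
      exact mainAux H hH ((atoms_ncard_le_of_orderIso e).trans hn)
end

section
/- Let G be a finite group and H a maximal subgroup of G. Then [H,G] is linearly primitive: there exists a finite-dimensional irreducible complex representation V of G with G_(V^H) = H. -/
section Aux
variable {G : Type*} [Group G] (H : Subgroup G)

noncomputable def permRep : Representation ℂ G ((G ⧸ H) → ℂ) where
  toFun g := LinearMap.funLeft ℂ ℂ (fun x => g⁻¹ • x)
  map_one' := by
    apply LinearMap.ext; intro f; funext x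
    simp [LinearMap.funLeft]
  map_mul' g₁ g₂ := by
    apply LinearMap.ext; intro f; funext x
    simp [LinearMap.funLeft, mul_smul]

lemma permRep_apply (g : G) (f : (G ⧸ H) → ℂ) (x : G ⧸ H) :
    permRep H g f x = f (g⁻¹ • x) := rfl

def IsInvt (U : Submodule ℂ ((G ⧸ H) → ℂ)) : Prop :=
  ∀ g : G, ∀ v ∈ U, permRep H g v ∈ U

lemma permRep_inv_cancel (g : G) (w : (G ⧸ H) → ℂ) :
    permRep H g⁻¹ (permRep H g w) = w := by
  rw [← Module.End.mul_apply, ← map_mul, inv_mul_cancel, map_one, Module.End.one_apply]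

lemma maschke [Fintype G] (A B : Submodule ℂ ((G ⧸ H) → ℂ))
    (hA : IsInvt H A) (hB : IsInvt H B) (hAB : A ≤ B) :
    ∃ C, IsInvt H C ∧ C ≤ B ∧ A ⊓ C = ⊥ ∧ A ⊔ C = B := by
  classical
  obtain ⟨A', hA'⟩ := Submodule.exists_isCompl A
  set p : ((G ⧸ H) → ℂ) →ₗ[ℂ] ((G ⧸ H) → ℂ) :=
    A.subtype ∘ₗ (A.projectionOnto A' hA') with hp
  have hp_mem : ∀ w, p w ∈ A := fun w => (A.projectionOnto A' hA' w).2
  have hp_id : ∀ a ∈ A, p a = a := by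
    intro a ha
    simp [hp, Submodule.projectionOnto_apply_left hA' ⟨a, ha⟩]
  set c : ℂ := (Fintype.card G : ℂ)⁻¹ with hc
  have hc0 : (Fintype.card G : ℂ) ≠ 0 := by
    exact_mod_cast Nat.cast_ne_zero.mpr Fintype.card_ne_zero
  set q : ((G ⧸ H) → ℂ) →ₗ[ℂ] ((G ⧸ H) → ℂ) :=
    c • ∑ g : G, (permRep H g⁻¹) ∘ₗ p ∘ₗ (permRep H g) with hq
  have hq_apply : ∀ w, q w = c • ∑ g : G, permRep H g⁻¹ (p (permRep H g w)) := by
    intro w; simp [hq, LinearMap.sum_apply]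
  have hq_mem : ∀ w, q w ∈ A := by
    intro w
    rw [hq_apply]
    exact A.smul_mem c (Submodule.sum_mem A fun g _ =>
      hA g⁻¹ _ (hp_mem (permRep H g w)))
  have hq_id : ∀ a ∈ A, q a = a := by
    intro a ha
    rw [hq_apply]
    have : ∀ g : G, permRep H g⁻¹ (p (permRep H g a)) = a := by
      intro g
      rw [hp_id _ (hA g a ha), permRep_inv_cancel]
    rw [Finset.sum_congr rfl fun g _ => this g, Finset.sum_const, Finset.card_univ,
      ← Nat.cast_smul_eq_nsmul ℂ, smul_smul, hc, inv_mul_cancel₀ hc0, one_smul]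
  have hq_equiv : ∀ (s : G) (w), q (permRep H s w) = permRep H s (q w) := by
    intro s w
    rw [hq_apply, hq_apply, map_smul, map_sum]
    congr 1
    refine Fintype.sum_equiv (Equiv.mulRight s) _ _ ?_
    intro g
    show permRep H g⁻¹ (p (permRep H g (permRep H s w)))
      = permRep H s (permRep H (g * s)⁻¹ (p (permRep H (g * s) w)))
    have e1 : permRep H g (permRep H s w) = permRep H (g * s) w := by
      rw [← Module.End.mul_apply, ← map_mul]
    have e2 : ∀ y, permRep H s (permRep H (g * s)⁻¹ y) = permRep H g⁻¹ y := by
      intro y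
      rw [← Module.End.mul_apply, ← map_mul]
      congr 1
      group
    rw [e1, e2]
  refine ⟨LinearMap.ker q ⊓ B, ?_, inf_le_right, ?_, ?_⟩
  · intro g v hv
    rw [Submodule.mem_inf] at hv ⊢
    obtain ⟨hv1, hv2⟩ := hv
    refine ⟨?_, hB g v hv2⟩
    rw [LinearMap.mem_ker] at hv1 ⊢
    rw [hq_equiv, hv1, map_zero]
  · rw [eq_bot_iff]
    intro v hv
    rw [Submodule.mem_inf] at hv
    obtain ⟨hvA, hv2⟩ := hv
    rw [Submodule.mem_inf, LinearMap.mem_ker] at hv2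
    have hv0 : v = 0 := by rw [← hq_id v hvA, hv2.1]
    simp [hv0]
  · apply le_antisymm
    · exact sup_le hAB inf_le_right
    · intro b hb
      have hqb : q b ∈ A := hq_mem b
      have hbd : b = q b + (b - q b) := by abel
      rw [hbd]
      refine Submodule.add_mem_sup hqb (Submodule.mem_inf.mpr ⟨?_, ?_⟩)
      · rw [LinearMap.mem_ker, map_sub, hq_id _ hqb, sub_self]
      · exact Submodule.sub_mem B hb (hAB hqb)

noncomputable def fixedH : Submodule ℂ ((G ⧸ H) → ℂ) where
  carrier := {f | ∀ h ∈ H, permRep H h f = f}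
  add_mem' := by intro a b ha hb h hh; rw [map_add, ha h hh, hb h hh]
  zero_mem' := by intro h hh; rw [map_zero]
  smul_mem' := by intro c a ha h hh; rw [map_smul, ha h hh]

lemma mem_fixedH {f : (G ⧸ H) → ℂ} : f ∈ fixedH H ↔ ∀ h ∈ H, permRep H h f = f := Iff.rfl

noncomputable def sumL [Fintype (G ⧸ H)] : ((G ⧸ H) → ℂ) →ₗ[ℂ] ℂ :=
  ∑ x : G ⧸ H, LinearMap.proj x

lemma sumL_apply [Fintype (G ⧸ H)] (f : (G ⧸ H) → ℂ) : sumL H f = ∑ x, f x := by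
  simp [sumL]

lemma sumL_perm [Fintype (G ⧸ H)] (g : G) (f : (G ⧸ H) → ℂ) :
    sumL H (permRep H g f) = sumL H f := by
  simp only [sumL_apply]
  exact Fintype.sum_equiv (MulAction.toPerm g⁻¹) _ _ (fun x => rfl)

lemma isInvt_ker_sumL [Fintype (G ⧸ H)] : IsInvt H (LinearMap.ker (sumL H)) := by
  intro g v hv
  simp only [LinearMap.mem_ker] at hv ⊢
  rw [sumL_perm H g v, hv]

/-- a vector fixed by the whole `G` and with zero coordinate-sum is zero. -/
lemma fixed_eq_zero [Fintype (G ⧸ H)] (v : (G ⧸ H) → ℂ)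
    (hv : v ∈ LinearMap.ker (sumL H)) (hfix : ∀ g : G, permRep H g v = v) : v = 0 := by
  classical
  set c : ℂ := v ((1 : G) : G ⧸ H) with hcdef
  have hconst : ∀ x : G ⧸ H, v x = c := by
    intro x
    obtain ⟨g, rfl⟩ := QuotientGroup.mk_surjective x
    have := congrFun (hfix g) ((g : G) : G ⧸ H)
    rw [permRep_apply] at this
    rw [← this]
    congr 1
    rw [MulAction.Quotient.smul_mk, smul_eq_mul, inv_mul_cancel]
  have hsum : sumL H v = (Fintype.card (G ⧸ H) : ℂ) * c := by
    rw [sumL_apply]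
    rw [Finset.sum_congr rfl fun x _ => hconst x, Finset.sum_const, Finset.card_univ,
      nsmul_eq_mul]
  rw [LinearMap.mem_ker] at hv
  have hcard : (Fintype.card (G ⧸ H) : ℂ) ≠ 0 :=
    Nat.cast_ne_zero.mpr Fintype.card_ne_zero
  have hc0 : c = 0 := by
    have := hsum.symm.trans hv
    exact (mul_eq_zero.mp this).resolve_left hcard
  funext x
  rw [hconst x, hc0]; rfl

/-- if `H` is proper, there is a nonzero `H`-fixed vector with zero sum. -/
lemma exists_fixed_nonzero [Fintype (G ⧸ H)] (hH : H ≠ ⊤) :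
    ∃ f : (G ⧸ H) → ℂ, f ∈ fixedH H ∧ f ∈ LinearMap.ker (sumL H) ∧ f ≠ 0 := by
  classical
  set x₀ : G ⧸ H := ((1 : G) : G ⧸ H) with hx₀
  set n : ℕ := Fintype.card (G ⧸ H) with hn
  have hn2 : 2 ≤ n := by
    rw [hn]
    have : ∃ g : G, g ∉ H := by
      by_contra hcon
      push_neg at hcon
      exact hH ((Subgroup.eq_top_iff' H).mpr hcon)
    obtain ⟨g, hg⟩ := this
    refine Fintype.one_lt_card_iff.mpr ⟨((g : G) : G ⧸ H), x₀, ?_⟩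
    intro hgx
    exact hg (by simpa using (QuotientGroup.eq.mp hgx))
  set f : (G ⧸ H) → ℂ := fun x => (if x = x₀ then 1 else 0) - (n : ℂ)⁻¹ with hf
  have hx₀fix : ∀ h ∈ H, h • x₀ = x₀ := by
    intro h hh
    rw [hx₀, MulAction.Quotient.smul_mk, smul_eq_mul, mul_one]
    exact (QuotientGroup.eq.mpr (by simpa using hh)).symm
  refine ⟨f, ?_, ?_, ?_⟩
  · intro h hh
    funext x
    rw [permRep_apply, hf]
    simp only
    congr 1
    have : h⁻¹ • x = x₀ ↔ x = x₀ := by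
      rw [inv_smul_eq_iff, hx₀fix h hh]
    simp [this]
  · rw [LinearMap.mem_ker, sumL_apply]
    rw [hf]
    simp only [Finset.sum_sub_distrib, Finset.sum_ite_eq', Finset.mem_univ, if_true,
      Finset.sum_const, Finset.card_univ, nsmul_eq_mul]
    rw [← hn, mul_inv_cancel₀ (Nat.cast_ne_zero.mpr (by omega)), sub_self]
  · intro h0
    have := congrFun h0 x₀
    rw [hf] at this
    simp only [if_pos rfl, Pi.zero_apply, if_true] at this
    have hinv : (n : ℂ)⁻¹ = 1 := by linear_combination (-1 : ℂ) * this
    rw [inv_eq_one] at hinv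
    have : n = 1 := by exact_mod_cast hinv
    omega


/-- the restriction of the permutation representation to an invariant subspace. -/
noncomputable def subRep (U : Submodule ℂ ((G ⧸ H) → ℂ)) (hU : IsInvt H U) :
    Representation ℂ G ↥U where
  toFun g := (permRep H g).restrict (fun v hv => hU g v hv)
  map_one' := by
    apply LinearMap.ext; intro v
    apply Subtype.ext
    show permRep H 1 (v : (G ⧸ H) → ℂ) = v
    rw [map_one]; rfl
  map_mul' g₁ g₂ := by
    apply LinearMap.ext; intro v
    apply Subtype.ext
    show permRep H (g₁ * g₂) (v : (G ⧸ H) → ℂ) = permRep H g₁ (permRep H g₂ v)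
    rw [map_mul]; rfl

lemma subRep_coe (U : Submodule ℂ ((G ⧸ H) → ℂ)) (hU : IsInvt H U) (g : G) (v : ↥U) :
    (subRep H U hU g v : (G ⧸ H) → ℂ) = permRep H g (v : (G ⧸ H) → ℂ) := rfl

end Aux

section Transport

/-- transporting a representation along a linear equivalence. -/
noncomputable def conjRep {G : Type*} [Group G] {V V' : Type*}
    [AddCommGroup V] [Module ℂ V] [AddCommGroup V'] [Module ℂ V']
    (e : V ≃ₗ[ℂ] V') (ρ : Representation ℂ G V) : Representation ℂ G V' where
  toFun g := e.toLinearMap ∘ₗ ρ g ∘ₗ e.symm.toLinearMap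
  map_one' := by
    apply LinearMap.ext; intro v; simp
  map_mul' g₁ g₂ := by
    apply LinearMap.ext; intro v; simp

lemma conjRep_apply {G : Type*} [Group G] {V V' : Type*}
    [AddCommGroup V] [Module ℂ V] [AddCommGroup V'] [Module ℂ V']
    (e : V ≃ₗ[ℂ] V') (ρ : Representation ℂ G V) (g : G) (v : V') :
    conjRep e ρ g v = e (ρ g (e.symm v)) := rfl

/-- a representation with the required properties in any universe yields
`IsLinearlyPrimitive`. -/
lemma isLinearlyPrimitive_of_rep {G : Type*} [Group G] (H : Subgroup G)
    {V : Type*} [AddCommGroup V] [Module ℂ V] (ρ : Representation ℂ G V)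
    (h1 : FiniteDimensional ℂ V) (h2 : Nontrivial V)
    (h3 : ∀ U : Submodule ℂ V, (∀ g : G, ∀ v ∈ U, ρ g v ∈ U) → U = ⊥ ∨ U = ⊤)
    (h4 : {g : G | ∀ v : V, (∀ h : G, h ∈ H → ρ h v = v) → ρ g v = v} = (H : Set G)) :
    IsLinearlyPrimitive H := by
  classical
  set n := Module.finrank ℂ V with hn
  let e : V ≃ₗ[ℂ] (Fin n → ℂ) := (Module.finBasis ℂ V).equivFun
  have hn0 : n ≠ 0 := by
    have := Module.finrank_pos (R := ℂ) (M := V)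
    omega
  haveI : Nonempty (Fin n) := ⟨⟨0, Nat.pos_of_ne_zero hn0⟩⟩
  refine ⟨Fin n → ℂ, inferInstance, inferInstance, conjRep e ρ, inferInstance,
    inferInstance, ?_, ?_⟩
  · intro U' hU'
    set U : Submodule ℂ V := U'.map e.symm.toLinearMap with hU
    have hUinv : ∀ g : G, ∀ v ∈ U, ρ g v ∈ U := by
      intro g v hv
      rw [hU, Submodule.mem_map] at hv ⊢
      obtain ⟨u, hu, rfl⟩ := hv
      refine ⟨conjRep e ρ g u, hU' g u hu, ?_⟩
      simp [conjRep_apply]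
    rcases h3 U hUinv with h | h
    · left
      rw [eq_bot_iff]
      intro u hu
      have : e.symm u ∈ U := Submodule.mem_map_of_mem hu
      rw [h, Submodule.mem_bot] at this
      have : u = 0 := by
        apply e.symm.injective
        rw [this, map_zero]
      simp [this]
    · right
      rw [eq_top_iff]
      intro u _
      have : e.symm u ∈ U := h ▸ Submodule.mem_top
      rw [hU, Submodule.mem_map] at this
      obtain ⟨u', hu', hu'e⟩ := this
      have : u' = u := e.symm.injective hu'e
      rwa [← this]
  · rw [← h4]
    ext g
    simp only [Set.mem_setOf_eq]
    constructor
    · intro hg v hv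
      have := hg (e v) ?_
      · rw [conjRep_apply, LinearEquiv.symm_apply_apply] at this
        exact e.injective this
      · intro h hh
        rw [conjRep_apply, LinearEquiv.symm_apply_apply, hv h hh]
    · intro hg v hv
      rw [conjRep_apply]
      have := hg (e.symm v) ?_
      · rw [this, LinearEquiv.apply_symm_apply]
      · intro h hh
        have := hv h hh
        rw [conjRep_apply] at this
        apply e.injective
        rw [LinearEquiv.apply_symm_apply]
        exact this

end Transport

/-- If `H` is a maximal subgroup of the finite group `G`, then `[H,G]` is
linearly primitive. -/
theorem maximal_subgroup_linearly_primitive {G : Type*} [Group G] [Finite G]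
    (H : Subgroup G) (hmax : IsCoatom H) :
    IsLinearlyPrimitive H := by
  classical
  letI : Fintype G := Fintype.ofFinite G
  letI : Fintype (G ⧸ H) := Fintype.ofFinite _
  set F := fixedH H with hF
  set W₀ := LinearMap.ker (sumL H) with hW₀
  set s : Set (Submodule ℂ ((G ⧸ H) → ℂ)) := {U | IsInvt H U ∧ U ≤ W₀ ∧ F ⊓ U ≠ ⊥} with hs
  have hW₀s : W₀ ∈ s := by
    refine ⟨isInvt_ker_sumL H, le_rfl, ?_⟩
    obtain ⟨f, hf1, hf2, hf0⟩ := exists_fixed_nonzero H hmax.1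
    intro hbot
    apply hf0
    have : f ∈ F ⊓ W₀ := ⟨hf1, hf2⟩
    rw [hbot, Submodule.mem_bot] at this
    exact this
  -- pick U of minimal finrank in s
  obtain ⟨U, hUs, hUmin⟩ :
      ∃ U ∈ s, ∀ U' ∈ s, Module.finrank ℂ U ≤ Module.finrank ℂ U' := by
    set T : Set ℕ := (fun U : Submodule ℂ ((G ⧸ H) → ℂ) => Module.finrank ℂ U) '' s with hT
    have hTne : T.Nonempty := ⟨_, ⟨W₀, hW₀s, rfl⟩⟩
    obtain ⟨U, hUs, hUr⟩ := Nat.sInf_mem hTne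
    refine ⟨U, hUs, fun U' hU' => ?_⟩
    have h1 : Module.finrank ℂ U = sInf T := hUr
    have h2 : sInf T ≤ Module.finrank ℂ U' := Nat.sInf_le ⟨U', hU', rfl⟩
    omega
  obtain ⟨hUinv, hUle, hUF⟩ := hUs
  -- a nonzero H-fixed vector in U
  obtain ⟨v₀, hv₀, hv₀0⟩ := Submodule.exists_mem_ne_zero_of_ne_bot hUF
  have hv₀F : v₀ ∈ F := hv₀.1
  have hv₀U : v₀ ∈ U := hv₀.2
  have hUne : U ≠ ⊥ := by
    intro h
    apply hv₀0
    rw [h, Submodule.mem_bot] at hv₀U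
    exact hv₀U
  -- irreducibility of U
  have hirr : ∀ A : Submodule ℂ ((G ⧸ H) → ℂ), A ≤ U → IsInvt H A → A = ⊥ ∨ A = U := by
    intro A hAle hAinv
    by_contra hcon
    push_neg at hcon
    obtain ⟨hA0, hAU⟩ := hcon
    obtain ⟨C, hCinv, hCle, hACbot, hACsup⟩ := maschke H A U hAinv hUinv hAle
    -- split v₀
    have hv₀AC : v₀ ∈ A ⊔ C := hACsup ▸ hv₀U
    obtain ⟨a, haA, c, hcC, hac⟩ := Submodule.mem_sup.mp hv₀AC
    have hfix : ∀ h ∈ H, permRep H h a = a ∧ permRep H h c = c := by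
      intro h hh
      have h1 : permRep H h a + permRep H h c = a + c := by
        rw [← map_add, hac, hv₀F h hh]
      have h2 : permRep H h a - a ∈ A ⊓ C := by
        constructor
        · exact Submodule.sub_mem A (hAinv h a haA) haA
        · have : permRep H h a - a = c - permRep H h c := by
            have := h1
            abel_nf
            linear_combination (norm := abel) h1
          rw [this]
          exact Submodule.sub_mem C hcC (hCinv h c hcC)
      rw [hACbot, Submodule.mem_bot, sub_eq_zero] at h2
      constructor
      · exact h2
      · have : permRep H h c = c := by
          have := h1
          rw [h2] at this
          exact add_left_cancel this
      
        exact this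
    have haF : a ∈ F := fun h hh => (hfix h hh).1
    have hcF : c ∈ F := fun h hh => (hfix h hh).2
    -- one of a, c is nonzero
    have hone : a ≠ 0 ∨ c ≠ 0 := by
      by_contra hno
      push_neg at hno
      apply hv₀0
      rw [← hac, hno.1, hno.2, add_zero]
    have hCU : C ≠ U := by
      intro h
      apply hA0
      have : A ≤ C := h ▸ hAle
      rw [eq_bot_iff, ← hACbot]
      exact le_inf le_rfl this
    rcases hone with ha0 | hc0
    · have hAs : A ∈ s := ⟨hAinv, hAle.trans hUle, by
        intro h
        apply ha0
        have : a ∈ F ⊓ A := ⟨haF, haA⟩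
        rwa [h, Submodule.mem_bot] at this⟩
      have : Module.finrank ℂ A < Module.finrank ℂ U :=
        Submodule.finrank_lt_finrank_of_lt (lt_of_le_of_ne hAle hAU)
      exact absurd (hUmin A hAs) (by omega)
    · have hCs : C ∈ s := ⟨hCinv, hCle.trans hUle, by
        intro h
        apply hc0
        have : c ∈ F ⊓ C := ⟨hcF, hcC⟩
        rwa [h, Submodule.mem_bot] at this⟩
      have : Module.finrank ℂ C < Module.finrank ℂ U :=
        Submodule.finrank_lt_finrank_of_lt (lt_of_le_of_ne hCle hCU)
      exact absurd (hUmin C hCs) (by omega)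
  -- assemble
  haveI : Nontrivial ↥U := Submodule.nontrivial_iff_ne_bot.mpr hUne
  refine isLinearlyPrimitive_of_rep H (subRep H U hUinv) inferInstance inferInstance ?_ ?_
  · -- irreducibility of the subrepresentation
    intro U' hU'
    set A : Submodule ℂ ((G ⧸ H) → ℂ) := U'.map U.subtype with hA
    have hAle : A ≤ U := Submodule.map_subtype_le U U'
    have hAinv : IsInvt H A := by
      intro g w hw
      rw [hA, Submodule.mem_map] at hw ⊢
      obtain ⟨v, hv, rfl⟩ := hw
      exact ⟨subRep H U hUinv g v, hU' g v hv, rfl⟩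
    have hinj : Function.Injective (Submodule.map U.subtype :
        Submodule ℂ ↥U → Submodule ℂ ((G ⧸ H) → ℂ)) :=
      Submodule.map_injective_of_injective U.injective_subtype
    rcases hirr A hAle hAinv with h | h
    · left
      apply hinj
      rw [← hA, h, Submodule.map_bot]
    · right
      apply hinj
      rw [← hA, h, Submodule.map_top, Submodule.range_subtype]
  · -- the stabilizer is exactly H
    ext g
    simp only [Set.mem_setOf_eq, SetLike.mem_coe]
    constructor
    · intro hg
      set K : Subgroup G :=
        { carrier := {k : G | permRep H k v₀ = v₀}
          one_mem' := by simp [Set.mem_setOf_eq, map_one]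
          mul_mem' := by
            intro a b ha hb
            simp only [Set.mem_setOf_eq] at ha hb ⊢
            rw [map_mul, Module.End.mul_apply, hb, ha]
          inv_mem' := by
            intro a ha
            simp only [Set.mem_setOf_eq] at ha ⊢
            conv_lhs => rw [← ha]
            rw [permRep_inv_cancel] } with hK
      have hHK : H ≤ K := fun h hh => hv₀F h hh
      have hgK : g ∈ K := by
        have hyp : ∀ h : G, h ∈ H → subRep H U hUinv h ⟨v₀, hv₀U⟩ = ⟨v₀, hv₀U⟩ := by
          intro h hh
          apply Subtype.ext
          rw [subRep_coe]
          exact hv₀F h hh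
        have := hg ⟨v₀, hv₀U⟩ hyp
        have := congrArg Subtype.val this
        rw [subRep_coe] at this
        exact this
      by_contra hgH
      have hKtop : K = ⊤ := hmax.2 K (lt_of_le_of_ne hHK (fun h => hgH (h ▸ hgK)))
      have hfixall : ∀ k : G, permRep H k v₀ = v₀ := by
        intro k
        have : k ∈ K := hKtop ▸ Subgroup.mem_top k
        exact this
      exact hv₀0 (fixed_eq_zero H v₀ (hUle hv₀U) hfixall)
    · intro hg v hv
      exact hv g hg
end

section
/- Let [H,G] be a boolean interval of finite groups of rank 2 with atoms K and L. Then it is not the case that |G:K| = |G:L| = 2, and it is not the case that |K:H| = |L:H| = 2. -/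
/-- If `H ≤ K` with relative index `2`, then elements of `K` normalize `H`. -/
lemma conj_mem_of_relindex_two {G : Type*} [Group G] {H K : Subgroup G}
    (hHK : H ≤ K) (h2 : H.relIndex K = 2) {k h : G} (hk : k ∈ K) (hh : h ∈ H) :
    k * h * k⁻¹ ∈ H := by
  have hhK : h ∈ K := hHK hh
  have hhS : (⟨h, hhK⟩ : K) ∈ H.subgroupOf K := by
    simpa [Subgroup.mem_subgroupOf] using hh
  have : (⟨k, hk⟩ * ⟨h, hhK⟩ * (⟨k, hk⟩)⁻¹ : K) ∈ H.subgroupOf K := by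
    rw [Subgroup.mul_mem_iff_of_index_two h2, Subgroup.mul_mem_iff_of_index_two h2,
      inv_mem_iff]
    tauto
  simpa [Subgroup.mem_subgroupOf] using this

/-- If `H ≤ K` with relative index `2`, then squares of elements of `K` lie in `H`. -/
lemma sq_mem_of_relindex_two {G : Type*} [Group G] {H K : Subgroup G}
    (h2 : H.relIndex K = 2) {k : G} (hk : k ∈ K) : k * k ∈ H := by
  have : (⟨k, hk⟩ * ⟨k, hk⟩ : K) ∈ H.subgroupOf K := by
    rw [Subgroup.mul_mem_iff_of_index_two h2]
  simpa [Subgroup.mem_subgroupOf] using this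

/-- In a rank `2` boolean interval `[H,G]` with atoms `K` and `L`, one cannot have
`|G:K| = |G:L| = 2`, nor `|K:H| = |L:H| = 2`. -/
theorem rank_two_boolean_no_double_index_two {G : Type*} [Group G] [Finite G]
    (H K L : Subgroup G)
    (hKL : K ≠ L) (hHK : H < K) (hHL : H < L) (hKtop : K ≠ ⊤) (hLtop : L ≠ ⊤)
    (hmeet : K ⊓ L = H) (hjoin : K ⊔ L = ⊤)
    (hset : Set.Icc H (⊤ : Subgroup G) = {H, K, L, ⊤}) :
    ¬(K.index = 2 ∧ L.index = 2) ∧ ¬(H.relIndex K = 2 ∧ H.relIndex L = 2) := by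
  have hKnleL : ¬ K ≤ L := by
    intro hle
    apply hHK.ne
    rw [← hmeet]
    exact inf_eq_left.mpr hle
  have hLnleK : ¬ L ≤ K := by
    intro hle
    apply hHL.ne
    rw [← hmeet]
    exact inf_eq_right.mpr hle
  have hmemIcc : ∀ M : Subgroup G, H ≤ M → M = H ∨ M = K ∨ M = L ∨ M = ⊤ := by
    intro M hM
    have hm : M ∈ Set.Icc H (⊤ : Subgroup G) := ⟨hM, le_top⟩
    rw [hset] at hm
    simpa using hm
  constructor
  · rintro ⟨hK2, hL2⟩
    obtain ⟨x, hxK, hxL⟩ := SetLike.not_le_iff_exists.mp hKnleL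
    obtain ⟨y, hyL, hyK⟩ := SetLike.not_le_iff_exists.mp hLnleK
    set N : Subgroup G :=
      { carrier := {g | g ∈ K ↔ g ∈ L}
        one_mem' := iff_of_true (one_mem K) (one_mem L)
        mul_mem' := by
          intro a b ha hb
          simp only [Set.mem_setOf_eq] at *
          rw [Subgroup.mul_mem_iff_of_index_two hK2, Subgroup.mul_mem_iff_of_index_two hL2,
            ha, hb]
        inv_mem' := by
          intro a ha
          simp only [Set.mem_setOf_eq, inv_mem_iff] at *
          exact ha } with hNdef
    have hmemN : ∀ g : G, g ∈ N ↔ (g ∈ K ↔ g ∈ L) := fun g => Iff.rfl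
    have hHN : H ≤ N := by
      intro h hh
      rw [← hmeet] at hh
      exact (hmemN h).mpr (iff_of_true hh.1 hh.2)
    have hxyK : x * y ∉ K := by
      rw [Subgroup.mul_mem_iff_of_index_two hK2]
      simp [hxK, hyK]
    have hxyL : x * y ∉ L := by
      rw [Subgroup.mul_mem_iff_of_index_two hL2]
      simp [hxL, hyL]
    have hxyN : x * y ∈ N := (hmemN _).mpr (by simp [hxyK, hxyL])
    have hxN : x ∉ N := fun hx => hxL (((hmemN x).mp hx).mp hxK)
    rcases hmemIcc N hHN with h | h | h | h
    · exact hxyK (hHK.le (h ▸ hxyN))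
    · exact hxyK (h ▸ hxyN)
    · exact hxyL (h ▸ hxyN)
    · exact hxN (h ▸ Subgroup.mem_top x)
  · rintro ⟨hK2, hL2⟩
    obtain ⟨x, hxK, hxH⟩ := SetLike.exists_of_lt hHK
    obtain ⟨y, hyL, hyH⟩ := SetLike.exists_of_lt hHL
    -- H is normal in G
    have hnormalizer : Subgroup.normalizer (H : Set G) = ⊤ := by
      rw [eq_top_iff, ← hjoin, sup_le_iff]
      constructor
      · intro k hk
        rw [Subgroup.mem_normalizer_iff]
        intro h
        constructor
        · intro hh; exact conj_mem_of_relindex_two hHK.le hK2 hk hh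
        · intro hh
          have := conj_mem_of_relindex_two hHK.le hK2 (inv_mem hk) hh
          simpa [mul_assoc] using this
      · intro l hl
        rw [Subgroup.mem_normalizer_iff]
        intro h
        constructor
        · intro hh; exact conj_mem_of_relindex_two hHL.le hL2 hl hh
        · intro hh
          have := conj_mem_of_relindex_two hHL.le hL2 (inv_mem hl) hh
          simpa [mul_assoc] using this
    haveI hHnorm : H.Normal := Subgroup.normalizer_eq_top_iff.mp hnormalizer
    have hx2 : x * x ∈ H := sq_mem_of_relindex_two hK2 hxK
    have hy2 : y * y ∈ H := sq_mem_of_relindex_two hL2 hyL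
    set c := x * y with hc
    set M : Subgroup G := H ⊔ Subgroup.closure {c} with hM
    have hHM : H ≤ M := le_sup_left
    have hcM : c ∈ M := Subgroup.mem_sup_right (Subgroup.subset_closure rfl)
    rcases hmemIcc M hHM with h | h | h | h
    · -- c ∈ H, so y ∈ K, hence y ∈ H, contradiction
      have hcH : c ∈ H := h ▸ hcM
      have hyKmem : y ∈ K := by
        have : x⁻¹ * (x * y) ∈ K := mul_mem (inv_mem hxK) (hHK.le hcH)
        simpa [mul_assoc] using this
      exact hyH (hmeet ▸ ⟨hyKmem, hyL⟩)
    · have hcK : c ∈ K := h ▸ hcM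
      have hyKmem : y ∈ K := by
        have : x⁻¹ * (x * y) ∈ K := mul_mem (inv_mem hxK) hcK
        simpa [mul_assoc] using this
      exact hyH (hmeet ▸ ⟨hyKmem, hyL⟩)
    · have hcL : c ∈ L := h ▸ hcM
      have hxLmem : x ∈ L := by
        have : (x * y) * y⁻¹ ∈ L := mul_mem hcL (inv_mem hyL)
        simpa [mul_assoc] using this
      exact hxH (hmeet ▸ ⟨hxK, hxLmem⟩)
    · -- G = ⟨H, c⟩ with H normal: the quotient is generated by the image of c
      set q : G →* G ⧸ H := QuotientGroup.mk' H with hq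
      have hqsurj : Function.Surjective q := QuotientGroup.mk'_surjective H
      have hmapM : Subgroup.map q M = ⊤ := by
        rw [h]
        exact Subgroup.map_top_of_surjective q hqsurj
      have hmapH : Subgroup.map q H = ⊥ :=
        (Subgroup.map_eq_bot_iff H).mpr (le_of_eq (QuotientGroup.ker_mk' H).symm)
      have hmapM' : Subgroup.map q M = Subgroup.closure {q c} := by
        rw [hM, Subgroup.map_sup, MonoidHom.map_closure, Set.image_singleton,
          hmapH, bot_sup_eq]
      have hcgen : Subgroup.closure {q c} = (⊤ : Subgroup (G ⧸ H)) := by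
        rw [← hmapM', hmapM]
      have hmemc : ∀ g : G ⧸ H, ∃ n : ℤ, (q c) ^ n = g := by
        intro g
        have : g ∈ Subgroup.closure {q c} := hcgen ▸ Subgroup.mem_top g
        exact Subgroup.mem_closure_singleton.mp this
      obtain ⟨n, hn⟩ := hmemc (q x)
      obtain ⟨m, hm⟩ := hmemc (q y)
      have hcomm : q x * q y = q y * q x := by
        rw [← hn, ← hm]
        exact ((Commute.refl (q c)).zpow_zpow n m)
      have hqx2 : q x * q x = 1 := by
        rw [← map_mul]
        exact (QuotientGroup.eq_one_iff _).mpr hx2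
      have hqy2 : q y * q y = 1 := by
        rw [← map_mul]
        exact (QuotientGroup.eq_one_iff _).mpr hy2
      have hqc2 : q c * q c = 1 := by
        calc q c * q c = (q x * q y) * (q x * q y) := by rw [hc, map_mul]
          _ = q x * (q y * q x) * q y := by group
          _ = q x * (q x * q y) * q y := by rw [← hcomm]
          _ = (q x * q x) * (q y * q y) := by group
          _ = 1 := by rw [hqx2, hqy2, one_mul]
      have hqx1 : q x ≠ 1 := fun hx1 => hxH ((QuotientGroup.eq_one_iff _).mp hx1)
      have hqy1 : q y ≠ 1 := fun hy1 => hyH ((QuotientGroup.eq_one_iff _).mp hy1)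
      -- every power of q c is 1 or q c
      have hkey : ∀ k : ℤ, (q c) ^ (k + k) = 1 := by
        intro k
        rw [zpow_add, ← ((Commute.refl (q c)).mul_zpow k), hqc2, one_zpow]
      have hpow : ∀ n : ℤ, (q c) ^ n = 1 ∨ (q c) ^ n = q c := by
        intro n
        rcases Int.even_or_odd n with ⟨k, hk⟩ | ⟨k, hk⟩
        · left
          rw [hk, hkey]
        · right
          rw [hk, zpow_add, zpow_one, two_mul, hkey, one_mul]
      rcases hpow n with h1 | h1
      · exact hqx1 (by rw [← hn, h1])
      · -- q x = q c = q x * q y, so q y = 1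
        have hqx : q x = q x * q y := by
          calc q x = q c ^ n := hn.symm
            _ = q c := h1
            _ = q x * q y := by rw [hc, map_mul]
        exact hqy1 (by
          have := hqx.symm
          rwa [mul_eq_left] at this)
end

section
/- Let [H,G] be a boolean interval of finite groups of rank 2 with atoms K and L. If H is a normal subgroup of both K and L, then |K:H| ≠ |L:H|. If K and L are both normal subgroups of G, then |G:K| ≠ |G:L|. -/
/-- In a finite cyclic group, subgroups of equal cardinality are equal. -/
lemma cyclic_subgroup_eq_of_card_eq {Q : Type*} [Group Q] [Finite Q] [IsCyclic Q]
    {A B : Subgroup Q} (h : Nat.card A = Nat.card B) : A = B := by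
  classical
  cases nonempty_fintype Q
  have key : ∀ C : Subgroup Q,
      (C : Set Q).toFinset = ({a : Q | a ^ Nat.card C = 1} : Finset Q) := by
    intro C
    have hd : 0 < Nat.card C := Nat.card_pos
    refine Finset.eq_of_subset_of_card_le ?_ ?_
    · intro x hx
      simp only [Set.mem_toFinset, SetLike.mem_coe] at hx
      simp only [Finset.mem_filter, Finset.mem_univ, true_and]
      have h1 : (⟨x, hx⟩ : C) ^ Nat.card C = 1 := pow_card_eq_one'
      have h2 := congrArg (Subtype.val) h1
      push_cast at h2
      exact h2
    · calc ({a : Q | a ^ Nat.card C = 1} : Finset Q).card ≤ Nat.card C :=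
            IsCyclic.card_pow_eq_one_le hd
        _ = (C : Set Q).toFinset.card := by
            rw [Set.toFinset_card]; simp [Nat.card_eq_fintype_card]
  have h1 := key A
  have h2 := key B
  rw [h] at h1
  have : (A : Set Q).toFinset = (B : Set Q).toFinset := h1.trans h2.symm
  ext x
  have := Finset.ext_iff.mp this x
  simpa using this

lemma key_index_ne {G : Type*} [Group G] [Finite G]
    (H K L : Subgroup G)
    (hKL : K ≠ L) (hHK : H < K) (hHL : H < L) (hKtop : K ≠ ⊤) (hLtop : L ≠ ⊤)
    (hmeet : K ⊓ L = H) (hjoin : K ⊔ L = ⊤)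
    (hset : Set.Icc H (⊤ : Subgroup G) = {H, K, L, ⊤})
    (hN : H.Normal) : K.index ≠ L.index := by
  intro heq
  -- K and L are incomparable
  have hnKL : ¬ K ≤ L := fun h => absurd (hmeet ▸ le_inf le_rfl h : K ≤ H) (not_le_of_gt hHK)
  have hnLK : ¬ L ≤ K := fun h => absurd (hmeet ▸ le_inf h le_rfl : L ≤ H) (not_le_of_gt hHL)
  -- there is g with ⟨g⟩ ⊔ H = ⊤
  have hgen : ∃ g : G, Subgroup.zpowers g ⊔ H = ⊤ := by
    by_contra hc
    push_neg at hc
    have hmem : ∀ g : G, g ∈ K ∨ g ∈ L := by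
      intro g
      have h1 : Subgroup.zpowers g ⊔ H ∈ Set.Icc H (⊤ : Subgroup G) := ⟨le_sup_right, le_top⟩
      rw [hset] at h1
      have hg : g ∈ Subgroup.zpowers g ⊔ H :=
        SetLike.le_def.mp le_sup_left (Subgroup.mem_zpowers g)
      simp only [Set.mem_insert_iff, Set.mem_singleton_iff] at h1
      rcases h1 with h | h | h | h
      · exact Or.inl (hHK.le (h ▸ hg))
      · exact Or.inl (h ▸ hg)
      · exact Or.inr (h ▸ hg)
      · exact absurd h (hc g)
    obtain ⟨k, hkK, hkL⟩ := SetLike.not_le_iff_exists.mp hnKL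
    obtain ⟨l, hlL, hlK⟩ := SetLike.not_le_iff_exists.mp hnLK
    rcases hmem (k * l) with h | h
    · exact hlK (by simpa using K.mul_mem (K.inv_mem hkK) h)
    · exact hkL (by simpa using L.mul_mem h (L.inv_mem hlL))
  obtain ⟨g, hg⟩ := hgen
  -- pass to the quotient Q = G ⧸ H, which is cyclic
  let π := QuotientGroup.mk' H
  have hker : π.ker = H := QuotientGroup.ker_mk' H
  have hsurj : Function.Surjective π := QuotientGroup.mk'_surjective H
  have hcyc : IsCyclic (G ⧸ H) := by
    refine ⟨⟨π g, fun x => ?_⟩⟩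
    have : (Subgroup.zpowers g ⊔ H).map π = ⊤ := by
      rw [hg]
      exact Subgroup.map_top_of_surjective π hsurj
    rw [Subgroup.map_sup, MonoidHom.map_zpowers,
      (Subgroup.map_eq_bot_iff H).mpr (le_of_eq hker.symm), sup_bot_eq] at this
    show x ∈ Subgroup.zpowers (π g)
    rw [this]
    exact Subgroup.mem_top x
  -- images of K and L in the quotient
  have hKmap : (K.map π).comap π = K := Subgroup.comap_map_eq_self (le_of_eq_of_le hker hHK.le)
  have hLmap : (L.map π).comap π = L := Subgroup.comap_map_eq_self (le_of_eq_of_le hker hHL.le)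
  have hKi : (K.map π).index = K.index := Subgroup.index_map_eq K hsurj (le_of_eq_of_le hker hHK.le)
  have hLi : (L.map π).index = L.index := Subgroup.index_map_eq L hsurj (le_of_eq_of_le hker hHL.le)
  have hine : (K.map π).index ≠ 0 := by
    rw [hKi]; exact Subgroup.index_ne_zero_of_finite
  have hcard : Nat.card (K.map π) = Nat.card (L.map π) := by
    have h1 := Subgroup.card_mul_index (K.map π)
    have h2 := Subgroup.card_mul_index (L.map π)
    have hii : (K.map π).index = (L.map π).index := by rw [hKi, hLi, heq]
    rw [hii, ← h2] at h1
    exact Nat.eq_of_mul_eq_mul_right (Nat.pos_of_ne_zero (hii ▸ hine)) h1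
  have : K.map π = L.map π := cyclic_subgroup_eq_of_card_eq hcard
  exact hKL (by rw [← hKmap, this, hLmap])

/-- In a rank `2` boolean interval `[H,G]` with atoms `K` and `L`: if `H` is normal
in both `K` and `L` then `|K:H| ≠ |L:H|`; if `K` and `L` are both normal in `G`
then `|G:K| ≠ |G:L|`. -/
theorem rank_two_boolean_distinct_indices {G : Type*} [Group G] [Finite G]
    (H K L : Subgroup G)
    (hKL : K ≠ L) (hHK : H < K) (hHL : H < L) (hKtop : K ≠ ⊤) (hLtop : L ≠ ⊤)
    (hmeet : K ⊓ L = H) (hjoin : K ⊔ L = ⊤)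
    (hset : Set.Icc H (⊤ : Subgroup G) = {H, K, L, ⊤}) :
    ((H.subgroupOf K).Normal → (H.subgroupOf L).Normal →
      H.relIndex K ≠ H.relIndex L) ∧
    (K.Normal → L.Normal → K.index ≠ L.index) := by
  constructor
  · intro hK hL hrel
    have hNorm : H.Normal := by
      rw [← Subgroup.normalizer_eq_top_iff]
      have h1 : K ≤ Subgroup.normalizer (H : Set G) := @Subgroup.le_normalizer_of_normal_subgroupOf _ _ H K hK hHK.le
      have h2 : L ≤ Subgroup.normalizer (H : Set G) := @Subgroup.le_normalizer_of_normal_subgroupOf _ _ H L hL hHL.le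
      exact top_le_iff.mp (hjoin ▸ sup_le h1 h2)
    have e1 := Subgroup.relIndex_mul_index hHK.le
    have e2 := Subgroup.relIndex_mul_index hHL.le
    rw [hrel] at e1
    have e3 : H.relIndex L * K.index = H.relIndex L * L.index := e1.trans e2.symm
    have hrel0 : H.relIndex L ≠ 0 :=
      (Subgroup.index_ne_zero_of_finite : (H.subgroupOf L).index ≠ 0)
    have hidx : K.index = L.index :=
      Nat.eq_of_mul_eq_mul_left (Nat.pos_of_ne_zero hrel0) e3
    exact key_index_ne H K L hKL hHK hHL hKtop hLtop hmeet hjoin hset hNorm hidx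
  · intro hK hL
    haveI := hK; haveI := hL
    have hNorm : H.Normal := hmeet ▸ Subgroup.normal_inf_normal K L
    exact key_index_ne H K L hKL hHK hHL hKtop hLtop hmeet hjoin hset hNorm
end

section
/- Let [H,G] be a boolean interval of finite groups, A an atom of [H,G], and A^∁ its complement. For any K_1, K_2 ∈ [H, A^∁] with K_1 ⊆ K_2, one has |⟨K_1, A⟩ : K_1| ≤ |⟨K_2, A⟩ : K_2|. Moreover, if |G : A^∁| = 2 then |⟨K, A⟩ : K| = 2 for every K ∈ [H, A^∁]. -/
/-- In a boolean interval `[H,G]` with atom `A` and complement `A^∁`: the index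
`|⟨K,A⟩ : K|` is monotone in `K ∈ [H, A^∁]`, and if `|G : A^∁| = 2` then
`|⟨K,A⟩ : K| = 2` for every `K ∈ [H, A^∁]`. -/
theorem relindex_monotone_along_atom {G : Type*} [Group G] [Finite G]
    (H A Ac : Subgroup G) (hbool : IsBooleanInterval H)
    (hatom : IsMinimalOvergroup H A)
    (hAc : H ≤ Ac) (hmeet : A ⊓ Ac = H) (hjoin : A ⊔ Ac = ⊤) :
    (∀ K₁ K₂ : Subgroup G, H ≤ K₁ → K₁ ≤ K₂ → K₂ ≤ Ac →
      K₁.relIndex (K₁ ⊔ A) ≤ K₂.relIndex (K₂ ⊔ A)) ∧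
    (Ac.index = 2 → ∀ K : Subgroup G, H ≤ K → K ≤ Ac →
      K.relIndex (K ⊔ A) = 2) := by
  obtain ⟨n, ⟨e⟩⟩ := hbool
  have hA : H ≤ A := hatom.1.le
  -- distributivity
  have key : ∀ K : Subgroup G, H ≤ K → K ≤ Ac → (K ⊔ A) ⊓ Ac = K := by
    intro K hHK hKAc
    let K' : Set.Icc H (⊤:Subgroup G) := ⟨K, hHK, le_top⟩
    let A' : Set.Icc H (⊤:Subgroup G) := ⟨A, hA, le_top⟩
    let Ac' : Set.Icc H (⊤:Subgroup G) := ⟨Ac, hAc, le_top⟩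
    have hKAc' : K' ≤ Ac' := hKAc
    have h1 : (K' ⊔ A') ⊓ Ac' = K' ⊔ (A' ⊓ Ac') := by
      apply e.injective
      rw [map_inf, map_sup, map_sup, map_inf]
      rw [inf_sup_right]
      congr 1
      exact inf_eq_left.mpr (e.monotone hKAc')
    have h2 : ((K' ⊔ A') ⊓ Ac' : Set.Icc H (⊤:Subgroup G)).val
        = (K' ⊔ (A' ⊓ Ac') : Set.Icc H (⊤:Subgroup G)).val := by rw [h1]
    have h3 : (K ⊔ A) ⊓ Ac = K ⊔ (A ⊓ Ac) := h2
    rw [h3, hmeet, sup_eq_left.mpr hHK]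
  have hrw : ∀ K : Subgroup G, H ≤ K → K ≤ Ac →
      K.relIndex (K ⊔ A) = Ac.relIndex (K ⊔ A) := by
    intro K hHK hKAc
    have h4 : K.relIndex (K ⊔ A) = (Ac ⊓ (K ⊔ A)).relIndex (K ⊔ A) := by
      congr 1
      rw [inf_comm, key K hHK hKAc]
    rw [h4, Subgroup.inf_relIndex_right]
  have hne : ∀ M : Subgroup G, Ac.relIndex M ≠ 0 := fun M =>
    Subgroup.FiniteIndex.index_ne_zero (H := Ac.subgroupOf M)
  constructor
  · intro K₁ K₂ h1 h12 h2
    rw [hrw K₁ h1 (h12.trans h2), hrw K₂ (h1.trans h12) h2]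
    exact Subgroup.relIndex_le_of_le_right (sup_le_sup_right h12 A) (hne _)
  · intro hidx K hHK hKAc
    rw [hrw K hHK hKAc]
    have hle : Ac.relIndex (K ⊔ A) ≤ 2 := by
      have := Subgroup.relIndex_le_of_le_right (le_top : K ⊔ A ≤ ⊤)
        (L := ⊤) (H := Ac) (by rw [Subgroup.relIndex_top_right]; exact Subgroup.index_ne_zero_of_finite)
      rwa [Subgroup.relIndex_top_right, hidx] at this
    have hne1 : Ac.relIndex (K ⊔ A) ≠ 1 := by
      rw [Ne, Subgroup.relIndex_eq_one]
      intro hle2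
      have : A ≤ Ac := le_sup_right.trans hle2
      exact hatom.1.ne (by rw [← hmeet, inf_eq_left.mpr this])
    have h0 := hne (K ⊔ A)
    omega
end

section
/- Let [H,G] be a boolean interval of finite groups of rank 2 with atoms K and L. Then |K:H| = 2 if and only if |G:L| = 2. -/
private theorem normal_of_index_two' {G : Type*} [Group G] (H : Subgroup G)
    (h : H.index = 2) : H.Normal := by
  constructor
  intro n hn g
  rw [show g * n * g⁻¹ = (g * n) * g⁻¹ by group,
    Subgroup.mul_mem_iff_of_index_two h, Subgroup.mul_mem_iff_of_index_two h]
  simp [hn, inv_mem_iff]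

/-- In a rank `2` boolean interval `[H,G]` with atoms `K` and `L`:
`|K:H| = 2 ↔ |G:L| = 2`. -/
theorem rank_two_boolean_index_two_iff {G : Type*} [Group G] [Finite G]
    (H K L : Subgroup G)
    (hKL : K ≠ L) (hHK : H < K) (hHL : H < L) (hKtop : K ≠ ⊤) (hLtop : L ≠ ⊤)
    (hmeet : K ⊓ L = H) (hjoin : K ⊔ L = ⊤)
    (hset : Set.Icc H (⊤ : Subgroup G) = {H, K, L, ⊤}) :
    H.relIndex K = 2 ↔ L.index = 2 := by
  have key : L.Normal → L.index = H.relIndex K := by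
    intro hN
    rw [← Subgroup.relIndex_top_right, ← hjoin, Subgroup.relIndex_sup_right,
      ← Subgroup.inf_relIndex_right L K, inf_comm, hmeet]
  constructor
  · intro h2
    -- H is normal in K
    have hHnormK : ∀ y ∈ K, ∀ h ∈ H, y * h * y⁻¹ ∈ H := by
      have : (H.subgroupOf K).Normal := normal_of_index_two' _ h2
      intro y hy h hh
      have := this.conj_mem ⟨h, hHK.le hh⟩ (by rwa [Subgroup.mem_subgroupOf]) ⟨y, hy⟩
      rw [Subgroup.mem_subgroupOf] at this
      exact this
    -- L is normal in G
    have hN : L.Normal := by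
      rw [← Subgroup.normalizer_eq_top_iff, ← top_le_iff, ← hjoin, sup_le_iff]
      refine ⟨?_, Subgroup.le_normalizer⟩
      intro x hx
      set M : Subgroup G := L.map (MulAut.conj x).toMonoidHom with hM
      have hmemM : ∀ g : G, g ∈ M ↔ x⁻¹ * g * x ∈ L := by
        intro g
        simp only [hM, Subgroup.mem_map, MulEquiv.coe_toMonoidHom, MulAut.conj_apply]
        constructor
        · rintro ⟨l, hl, rfl⟩
          have he : x⁻¹ * (x * l * x⁻¹) * x = l := by group
          rwa [he]
        · intro hg; exact ⟨x⁻¹ * g * x, hg, by group⟩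
      have hcard : Nat.card M = Nat.card L :=
        (Nat.card_congr (Subgroup.equivMapOfInjective L _
          (MulAut.conj x).injective).toEquiv).symm
      have hHM : H ≤ M := by
        intro h hh
        rw [hmemM]
        have := hHnormK x⁻¹ (inv_mem hx) h hh
        rw [inv_inv] at this
        exact hHL.le this
      have hMset : M ∈ ({H, K, L, ⊤} : Set (Subgroup G)) := by
        rw [← hset]; exact ⟨hHM, le_top⟩
      have hML : M = L := by
        rcases hMset with h | h | h | h
        · exact absurd (Subgroup.eq_of_le_of_card_ge hHL.le
            (by rw [← hcard, h])) hHL.ne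
        · exfalso
          have hxL : x ∈ L := by
            have : x ∈ M := h ▸ hx
            rw [hmemM] at this; simpa using this
          apply hKL
          rw [← h]
          ext g
          rw [hmemM]
          constructor
          · intro hg
            have := mul_mem (mul_mem hxL hg) (inv_mem hxL)
            have he : x * (x⁻¹ * g * x) * x⁻¹ = g := by group
            rwa [he] at this
          · intro hg
            exact mul_mem (mul_mem (inv_mem hxL) hg) hxL
        · exact h
        · exact absurd (Subgroup.card_eq_iff_eq_top L |>.mp
            (by rw [← hcard, h, Subgroup.card_top])) hLtop
      rw [Subgroup.mem_normalizer_iff]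
      intro g
      constructor
      · intro hg
        have : x * g * x⁻¹ ∈ M := ⟨g, hg, rfl⟩
        rwa [hML] at this
      · intro hg
        have : x * g * x⁻¹ ∈ M := hML ▸ hg
        rw [hmemM] at this
        have he : x⁻¹ * (x * g * x⁻¹) * x = g := by group
        rwa [he] at this
    rw [key hN, h2]
  · intro h2
    rw [← key (normal_of_index_two' L h2)]
    exact h2
end

section
/- Let [H,G] be a boolean interval of finite groups containing subgroups K ⊆ L in [H,G] with |L:K| = 2. Then there exists an atom A of [H,G] such that L = ⟨K, A⟩ and the complement A^∁ of A satisfies |G : A^∁| = 2. -/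
/-- If a boolean interval `[H,G]` contains an edge `K ⊆ L` of index `|L:K| = 2`,
then there is an atom `A` with `L = ⟨K,A⟩` whose complement `A^∁` satisfies
`|G : A^∁| = 2`. -/
theorem index_two_edge_gives_atom {G : Type*} [Group G] [Finite G]
    (H K L : Subgroup G) (hbool : IsBooleanInterval H)
    (hHK : H ≤ K) (hKL : K ≤ L) (hind : K.relIndex L = 2) :
    ∃ A Ac : Subgroup G, IsMinimalOvergroup H A ∧ L = K ⊔ A ∧
      H ≤ Ac ∧ A ⊓ Ac = H ∧ A ⊔ Ac = ⊤ ∧ Ac.index = 2 := by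
  classical
  obtain ⟨n, ⟨e⟩⟩ := hbool
  have hHL : H ≤ L := hHK.trans hKL
  -- the interval `[K,L]` is a cover
  have hcov : ∀ X : Subgroup G, K ≤ X → X ≤ L → X = K ∨ X = L := by
    intro X h1 h2
    have hm := Subgroup.relIndex_mul_relIndex (H := K) (K := X) (L := L) h1 h2
    rw [hind] at hm
    rcases Nat.prime_two.eq_one_or_self_of_dvd (K.relIndex X) ⟨X.relIndex L, hm.symm⟩ with h | h
    · exact Or.inl (le_antisymm (Subgroup.relIndex_eq_one.mp h) h1)
    · right
      have h1' : X.relIndex L = 1 := by rw [h] at hm; omega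
      exact le_antisymm h2 (Subgroup.relIndex_eq_one.mp h1')
  have hKneL : K ≠ L := by
    intro h
    rw [h, Subgroup.relIndex_self] at hind
    omega
  -- basic transfer lemmas along `e`
  have les : ∀ (X Y : Subgroup G) (hX : H ≤ X) (hY : H ≤ Y),
      X ≤ Y ↔ e ⟨X, hX, le_top⟩ ⊆ e ⟨Y, hY, le_top⟩ := by
    intro X Y hX hY
    rw [← Set.le_iff_subset, e.le_iff_le]
    exact Iff.symm Subtype.mk_le_mk
  have eqs : ∀ (X Y : Subgroup G) (hX : H ≤ X) (hY : H ≤ Y),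
      e ⟨X, hX, le_top⟩ = e ⟨Y, hY, le_top⟩ → X = Y := by
    intro X Y hX hY h
    have := e.injective h
    exact congrArg Subtype.val this
  have hbot : e ⟨H, le_refl H, le_top⟩ = ∅ := by
    have h1 : H ≤ ((e.symm ∅ : Set.Icc H (⊤ : Subgroup G)) : Subgroup G) := (e.symm ∅).2.1
    have h2 := (les H _ (le_refl H) (e.symm ∅).2.1).mp h1
    rw [show (⟨((e.symm ∅ : Set.Icc H (⊤ : Subgroup G)) : Subgroup G), (e.symm ∅).2.1, le_top⟩ : Set.Icc H (⊤ : Subgroup G)) = e.symm ∅ from Subtype.ext rfl, e.apply_symm_apply] at h2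
    exact Set.subset_empty_iff.mp h2
  have htop : e ⟨⊤, le_top, le_top⟩ = Set.univ := by
    have h1 : ((e.symm Set.univ : Set.Icc H (⊤ : Subgroup G)) : Subgroup G) ≤ ⊤ := le_top
    have h2 := (les _ ⊤ (e.symm Set.univ).2.1 le_top).mp h1
    rw [show (⟨((e.symm Set.univ : Set.Icc H (⊤ : Subgroup G)) : Subgroup G), (e.symm Set.univ).2.1, le_top⟩ : Set.Icc H (⊤ : Subgroup G)) = e.symm Set.univ from Subtype.ext rfl, e.apply_symm_apply] at h2
    exact Set.univ_subset_iff.mp h2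
  -- pick the point `x`
  have hKLlt : K < L := lt_of_le_of_ne hKL hKneL
  have hsub : e ⟨K, hHK, le_top⟩ ⊆ e ⟨L, hHL, le_top⟩ := (les K L hHK hHL).mp hKL
  have hnee : e ⟨K, hHK, le_top⟩ ≠ e ⟨L, hHL, le_top⟩ := fun h => hKneL (eqs K L hHK hHL h)
  obtain ⟨x, hxL, hxK⟩ := Set.exists_of_ssubset (HasSubset.Subset.ssubset_of_ne hsub hnee)
  -- the cover in the powerset : `e L = insert x (e K)`
  have hins : insert x (e ⟨K, hHK, le_top⟩) = e ⟨L, hHL, le_top⟩ := by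
    set M := e.symm (insert x (e ⟨K, hHK, le_top⟩)) with hM
    have hMval : e ⟨(M : Subgroup G), M.2.1, le_top⟩ = insert x (e ⟨K, hHK, le_top⟩) := by
      rw [show (⟨(M : Subgroup G), M.2.1, le_top⟩ : Set.Icc H (⊤ : Subgroup G)) = M from Subtype.ext rfl, hM, e.apply_symm_apply]
    have hKM : K ≤ (M : Subgroup G) := by
      rw [les K _ hHK M.2.1, hMval]
      exact Set.subset_insert _ _
    have hML : (M : Subgroup G) ≤ L := by
      rw [les _ L M.2.1 hHL, hMval]
      exact Set.insert_subset hxL hsub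
    rcases hcov (M : Subgroup G) hKM hML with h | h
    · exfalso
      apply hxK
      have : e ⟨(M : Subgroup G), M.2.1, le_top⟩ = e ⟨K, hHK, le_top⟩ := by
        congr 1
        exact Subtype.ext h
      rw [this] at hMval
      rw [hMval]
      exact Set.mem_insert x _
    · have : e ⟨(M : Subgroup G), M.2.1, le_top⟩ = e ⟨L, hHL, le_top⟩ := by
        congr 1
        exact Subtype.ext h
      rw [this] at hMval
      exact hMval.symm
  -- define the atom and its complement
  set A : Subgroup G := ((e.symm {x}) : Set.Icc H (⊤ : Subgroup G)).1 with hA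
  set Ac : Subgroup G := ((e.symm {x}ᶜ) : Set.Icc H (⊤ : Subgroup G)).1 with hAc
  have hHA : H ≤ A := (e.symm {x}).2.1
  have hHAc : H ≤ Ac := (e.symm {x}ᶜ).2.1
  have hA_eq : e ⟨A, hHA, le_top⟩ = {x} := by
    have h : (⟨A, hHA, le_top⟩ : Set.Icc H (⊤ : Subgroup G)) = e.symm {x} := Subtype.coe_eta _ _
    rw [h, e.apply_symm_apply]
  have hAc_eq : e ⟨Ac, hHAc, le_top⟩ = {x}ᶜ := by
    have h : (⟨Ac, hHAc, le_top⟩ : Set.Icc H (⊤ : Subgroup G)) = e.symm {x}ᶜ := Subtype.coe_eta _ _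
    rw [h, e.apply_symm_apply]
  -- `A ≤ L`
  have hAL : A ≤ L := by
    rw [les A L hHA hHL, hA_eq]
    exact Set.singleton_subset_iff.mpr hxL
  -- `A` is not below `K`
  have hAK : ¬A ≤ K := by
    intro h
    apply hxK
    have := (les A K hHA hHK).mp h
    rw [hA_eq] at this
    exact this rfl
  -- `A` is an atom
  have hatom : IsMinimalOvergroup H A := by
    constructor
    · refine lt_of_le_of_ne hHA fun h => ?_
      apply hAK
      rw [← h]
      exact hHK
    · intro K' hK1 hK2
      have hHK' : H ≤ K' := hK1.le
      have hsub' := (les K' A hHK' hHA).mp hK2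
      rw [hA_eq] at hsub'
      rcases Set.subset_singleton_iff_eq.mp hsub' with h | h
      · exfalso
        have : K' = H := eqs K' H hHK' (le_refl H) (by rw [h, hbot])
        exact hK1.ne' this
      · exact eqs K' A hHK' hHA (by rw [h, hA_eq])
  -- `K ≤ Ac`
  have hKAc : K ≤ Ac := by
    rw [les K Ac hHK hHAc, hAc_eq]
    intro y hy
    exact fun h => hxK (h ▸ hy)
  -- `L = K ⊔ A`
  have hLKA : L = K ⊔ A := by
    rcases hcov (K ⊔ A) le_sup_left (sup_le hKL hAL) with h | h
    · exact absurd (le_sup_right.trans h.le) hAK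
    · exact h.symm
  -- `L ⊓ Ac = K`
  have hLAc : L ⊓ Ac = K := by
    have hle1 : K ≤ L ⊓ Ac := le_inf hKL hKAc
    have hH' : H ≤ L ⊓ Ac := hHK.trans hle1
    refine le_antisymm ?_ hle1
    rw [les _ K hH' hHK]
    intro y hy
    have hyL : y ∈ e ⟨L, hHL, le_top⟩ := (les _ L hH' hHL).mp inf_le_left hy
    have hyAc : y ∈ e ⟨Ac, hHAc, le_top⟩ := (les _ Ac hH' hHAc).mp inf_le_right hy
    rw [← hins] at hyL
    rw [hAc_eq] at hyAc
    rcases hyL with h | h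
    · exact absurd h hyAc
    · exact h
  -- `A ⊓ Ac = H`
  have hmeet : A ⊓ Ac = H := by
    have hH' : H ≤ A ⊓ Ac := le_inf hHA hHAc
    refine le_antisymm ?_ hH'
    rw [les _ H hH' (le_refl H), hbot]
    intro y hy
    have hyA : y ∈ e ⟨A, hHA, le_top⟩ := (les _ A hH' hHA).mp inf_le_left hy
    have hyAc : y ∈ e ⟨Ac, hHAc, le_top⟩ := (les _ Ac hH' hHAc).mp inf_le_right hy
    rw [hA_eq] at hyA
    rw [hAc_eq] at hyAc
    exact absurd hyA hyAc
  -- `A ⊔ Ac = ⊤`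
  have hjoin : A ⊔ Ac = ⊤ := by
    refine le_antisymm le_top ?_
    rw [les ⊤ _ le_top (hHA.trans le_sup_left), htop]
    intro y _
    by_cases h : y = x
    · exact (les A _ hHA (hHA.trans le_sup_left)).mp le_sup_left (by rw [hA_eq]; exact h)
    · exact (les Ac _ hHAc (hHA.trans le_sup_left)).mp le_sup_right (by rw [hAc_eq]; exact h)
  -- the dichotomy : any subgroup of the interval is `≤ Ac` or `≥ A`
  have dich : ∀ X : Subgroup G, H ≤ X → X ≤ Ac ∨ A ≤ X := by
    intro X hX
    by_cases h : x ∈ e ⟨X, hX, le_top⟩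
    · right
      rw [les A X hHA hX, hA_eq]
      exact Set.singleton_subset_iff.mpr h
    · left
      rw [les X Ac hX hHAc, hAc_eq]
      intro y hy hyx
      exact h (hyx ▸ hy)
  -- group-theoretic part
  obtain ⟨t, htL, htK⟩ := SetLike.exists_of_lt hKLlt
  have hi : (K.subgroupOf L).index = 2 := hind
  have conjK : ∀ a : G, a ∈ L → ∀ b ∈ K, a * b * a⁻¹ ∈ K := by
    intro a haL b hb
    have hbL : b ∈ L := hKL hb
    have h1 : (⟨b, hbL⟩ : L) ∈ K.subgroupOf L := by
      rw [Subgroup.mem_subgroupOf]; exact hb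
    have h2 : (⟨a, haL⟩ : L) * ⟨b, hbL⟩ * (⟨a, haL⟩ : L)⁻¹ ∈ K.subgroupOf L := by
      rw [Subgroup.mul_mem_iff_of_index_two hi, Subgroup.mul_mem_iff_of_index_two hi,
        inv_mem_iff]
      tauto
    rw [Subgroup.mem_subgroupOf] at h2
    exact h2
  have hsq : t ^ 2 ∈ K := by
    have h2 := Subgroup.sq_mem_of_index_two hi (⟨t, htL⟩ : L)
    rw [Subgroup.mem_subgroupOf] at h2
    exact h2
  -- the two conjugates of `Ac`
  set X1 : Subgroup G := Subgroup.map (MulAut.conj t).toMonoidHom Ac with hX1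
  set X2 : Subgroup G := Subgroup.map (MulAut.conj (t⁻¹)).toMonoidHom Ac with hX2
  have memX1 : ∀ g : G, g ∈ X1 ↔ t⁻¹ * g * t ∈ Ac := by
    intro g
    rw [hX1, Subgroup.mem_map_equiv, MulAut.conj_symm_apply]
  have memX2 : ∀ g : G, g ∈ X2 ↔ t * g * t⁻¹ ∈ Ac := by
    intro g
    rw [hX2, Subgroup.mem_map_equiv, MulAut.conj_symm_apply, inv_inv]
  have hHX1 : H ≤ X1 := by
    intro h hh
    rw [memX1]
    have := conjK t⁻¹ (inv_mem htL) h (hHK hh)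
    rw [inv_inv] at this
    exact hKAc this
  have hHX2 : H ≤ X2 := by
    intro h hh
    rw [memX2]
    exact hKAc (conjK t htL h (hHK hh))
  -- the bad cases are impossible
  have hbad1 : ¬A ≤ X1 := by
    intro h
    apply hAK
    intro a ha
    have h1 : t⁻¹ * a * t ∈ Ac := (memX1 a).mp (h ha)
    have h2 : t⁻¹ * a * t ∈ L := mul_mem (mul_mem (inv_mem htL) (hAL ha)) htL
    have h3 : t⁻¹ * a * t ∈ K := hLAc ▸ (Subgroup.mem_inf.mpr ⟨h2, h1⟩)
    have h4 := conjK t htL _ h3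
    simpa [mul_assoc] using h4
  have hbad2 : ¬A ≤ X2 := by
    intro h
    apply hAK
    intro a ha
    have h1 : t * a * t⁻¹ ∈ Ac := (memX2 a).mp (h ha)
    have h2 : t * a * t⁻¹ ∈ L := mul_mem (mul_mem htL (hAL ha)) (inv_mem htL)
    have h3 : t * a * t⁻¹ ∈ K := hLAc ▸ (Subgroup.mem_inf.mpr ⟨h2, h1⟩)
    have h4 := conjK t⁻¹ (inv_mem htL) _ h3
    rw [inv_inv] at h4
    simpa [mul_assoc] using h4
  have hX1Ac : X1 ≤ Ac := (dich X1 hHX1).resolve_right hbad1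
  have hX2Ac : X2 ≤ Ac := (dich X2 hHX2).resolve_right hbad2
  -- `t` normalizes `Ac`
  have htN : t ∈ Subgroup.normalizer (Ac : Set G) := by
    rw [Subgroup.mem_normalizer_iff]
    intro g
    constructor
    · intro hg
      apply hX1Ac
      rw [memX1]
      simpa [mul_assoc] using hg
    · intro hg
      apply hX2Ac
      rw [memX2]
      exact hg
  have htAc : t ∉ Ac := by
    intro h
    exact htK (hLAc ▸ Subgroup.mem_inf.mpr ⟨htL, h⟩)
  -- `L = K ⊔ ⟨t⟩`
  have hKt : K ⊔ Subgroup.zpowers t = L := by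
    rcases hcov (K ⊔ Subgroup.zpowers t) le_sup_left
        (sup_le hKL (Subgroup.zpowers_le.mpr htL)) with h | h
    · exfalso
      apply htK
      rw [← h]
      exact Subgroup.mem_sup_right (Subgroup.mem_zpowers t)
    · exact h
  -- `Ac` is normal
  have hNorm : Ac.Normal := by
    rw [← Subgroup.normalizer_eq_top_iff]
    have hAcN : Ac ≤ Subgroup.normalizer (Ac : Set G) := Subgroup.le_normalizer
    have hLN : L ≤ Subgroup.normalizer (Ac : Set G) := by
      rw [← hKt]
      exact sup_le (hKAc.trans hAcN) (Subgroup.zpowers_le.mpr htN)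
    have : (⊤ : Subgroup G) ≤ Subgroup.normalizer (Ac : Set G) := by
      rw [← hjoin]
      exact sup_le (hAL.trans hLN) hAcN
    exact le_antisymm le_top this
  haveI := hNorm
  haveI := Fact.mk Nat.prime_two
  -- compute the index
  set tb : G ⧸ Ac := QuotientGroup.mk' Ac t with htb
  have htb2 : tb ^ 2 = 1 := by
    rw [htb, ← map_pow]
    exact (QuotientGroup.eq_one_iff _).mpr (hKAc hsq)
  have htb1 : tb ≠ 1 := by
    intro h
    exact htAc ((QuotientGroup.eq_one_iff t).mp h)
  have horder : orderOf tb = 2 := orderOf_eq_prime htb2 htb1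
  have hzp : Subgroup.zpowers tb = ⊤ := by
    have hAcP : Ac ≤ (Subgroup.zpowers tb).comap (QuotientGroup.mk' Ac) := by
      intro a ha
      have : QuotientGroup.mk' Ac a = 1 := (QuotientGroup.eq_one_iff a).mpr ha
      rw [Subgroup.mem_comap, this]
      exact one_mem _
    have htP : t ∈ (Subgroup.zpowers tb).comap (QuotientGroup.mk' Ac) := by
      rw [Subgroup.mem_comap]
      exact Subgroup.mem_zpowers tb
    have hLP : L ≤ (Subgroup.zpowers tb).comap (QuotientGroup.mk' Ac) := by
      rw [← hKt]
      exact sup_le (hKAc.trans hAcP) (Subgroup.zpowers_le.mpr htP)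
    have hTP : (⊤ : Subgroup G) ≤ (Subgroup.zpowers tb).comap (QuotientGroup.mk' Ac) := by
      rw [← hjoin]
      exact sup_le (hAL.trans hLP) hAcP
    rw [eq_top_iff]
    intro q _
    obtain ⟨g, rfl⟩ := QuotientGroup.mk'_surjective Ac q
    exact hTP (Subgroup.mem_top g)
  have hidx : Ac.index = 2 := by
    calc Ac.index = Nat.card (G ⧸ Ac) := rfl
      _ = Nat.card (⊤ : Subgroup (G ⧸ Ac)) := Subgroup.card_top.symm
      _ = Nat.card (Subgroup.zpowers tb) := by rw [hzp]
      _ = orderOf tb := Nat.card_zpowers tb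
      _ = 2 := horder
  exact ⟨A, Ac, hatom, hLKA, hHAc, hmeet, hjoin, hidx⟩
end

section
/- Let [H,G] be a boolean interval of finite groups of rank n whose index |G:H| is a product of exactly n prime numbers (counted with multiplicity), i.e. |G:H| = ∏_i p_i^{r_i} with p_i prime and ∑_i r_i = n. Then for every atom A of [H,G] and every K ∈ [H, A^∁], the index |⟨K, A⟩ : K| is a prime number dividing |G:H|. -/
private lemma relindex_ne_zero' {G : Type*} [Group G] [Finite G] (P Q : Subgroup G) :
    P.relIndex Q ≠ 0 :=
  Subgroup.index_ne_zero_of_finite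

private lemma one_le_omega {m : ℕ} (h0 : m ≠ 0) (h1 : m ≠ 1) :
    1 ≤ m.primeFactorsList.length := by
  rcases Nat.eq_zero_or_pos m.primeFactorsList.length with h | h
  · exfalso
    rw [List.length_eq_zero_iff] at h
    rcases (Nat.primeFactorsList_eq_nil _).mp h with h' | h' <;> simp_all
  · exact h

/-- Chain length lemma: a chain of subsets of length `m` between the images of `P` and `Q`
forces the relative index to have at least `m` prime factors. -/
private lemma chain_len {G : Type*} [Group G] [Finite G] {H : Subgroup G} {n : ℕ}
    (e : (Set.Icc H (⊤ : Subgroup G)) ≃o Set (Fin n)) :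
    ∀ (m : ℕ) (P Q : Set.Icc H (⊤ : Subgroup G)), P ≤ Q →
      ((e Q : Set (Fin n)) \ e P).ncard = m →
      m ≤ ((P : Subgroup G).relIndex (Q : Subgroup G)).primeFactorsList.length := by
  intro m
  induction m with
  | zero => intro _ _ _ _; exact Nat.zero_le _
  | succ m ih =>
    intro P Q hPQ hcard
    have hne : ((e Q : Set (Fin n)) \ e P).Nonempty :=
      Set.nonempty_of_ncard_ne_zero (by omega)
    obtain ⟨x, hx⟩ := hne
    set P' : Set.Icc H (⊤ : Subgroup G) := e.symm (insert x (e P)) with hP'def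
    have heP' : (e P' : Set (Fin n)) = insert x (e P) := e.apply_symm_apply _
    have hPP' : P ≤ P' := by
      rw [← e.le_iff_le, heP']; exact Set.subset_insert _ _
    have hP'Q : P' ≤ Q := by
      rw [← e.le_iff_le, heP']
      exact Set.insert_subset hx.1 (e.le_iff_le.mpr hPQ)
    have hxP : x ∉ (e P : Set (Fin n)) := hx.2
    have hPltP' : P < P' := by
      refine lt_of_le_of_ne hPP' fun h => hxP ?_
      conv_lhs => rw [h]
      rw [heP']; exact Set.mem_insert _ _
    have hcoePP' : (P : Subgroup G) ≤ (P' : Subgroup G) := hPP'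
    have hcoeP'Q : (P' : Subgroup G) ≤ (Q : Subgroup G) := hP'Q
    have hmul : ((P : Subgroup G)).relIndex (P' : Subgroup G) *
        ((P' : Subgroup G)).relIndex (Q : Subgroup G)
        = ((P : Subgroup G)).relIndex (Q : Subgroup G) :=
      Subgroup.relIndex_mul_relIndex _ _ _ hcoePP' hcoeP'Q
    have h0a := relindex_ne_zero' (P : Subgroup G) (P' : Subgroup G)
    have h0b := relindex_ne_zero' (P' : Subgroup G) (Q : Subgroup G)
    have hlen : (((P : Subgroup G)).relIndex (Q : Subgroup G)).primeFactorsList.length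
        = (((P : Subgroup G)).relIndex (P' : Subgroup G)).primeFactorsList.length
          + (((P' : Subgroup G)).relIndex (Q : Subgroup G)).primeFactorsList.length := by
      rw [← hmul, (Nat.perm_primeFactorsList_mul h0a h0b).length_eq, List.length_append]
    have hne1 : ((P : Subgroup G)).relIndex (P' : Subgroup G) ≠ 1 := by
      intro h
      have hle := Subgroup.relIndex_eq_one.mp h
      exact absurd (le_antisymm hPP' (Subtype.coe_le_coe.mp hle)) (ne_of_lt hPltP')
    have h1 := one_le_omega h0a hne1
    have hdiff : (e Q : Set (Fin n)) \ (e P' : Set (Fin n))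
        = ((e Q : Set (Fin n)) \ e P) \ {x} := by
      rw [heP']; ext y
      simp only [Set.mem_diff, Set.mem_insert_iff, Set.mem_singleton_iff]
      tauto
    have hcard' : ((e Q : Set (Fin n)) \ (e P' : Set (Fin n))).ncard = m := by
      rw [hdiff, Set.ncard_diff_singleton_of_mem hx, hcard]; omega
    have h2 := ih P' Q hP'Q hcard'
    omega

/-- If `[H,G]` is boolean of rank `n` and `|G:H|` is a product of exactly `n` primes
(with multiplicity), then for every atom `A`, complement `A^∁`, and
`K ∈ [H, A^∁]`, the index `|⟨K,A⟩ : K|` is a prime dividing `|G:H|`. -/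
theorem boolean_prime_product_index {G : Type*} [Group G] [Finite G]
    (H : Subgroup G) (n : ℕ)
    (e : (Set.Icc H (⊤ : Subgroup G)) ≃o Set (Fin n))
    (hfac : H.index.primeFactorsList.length = n) :
    ∀ A Ac : Subgroup G, IsMinimalOvergroup H A → H ≤ Ac → A ⊓ Ac = H → A ⊔ Ac = ⊤ →
      ∀ K : Subgroup G, H ≤ K → K ≤ Ac →
        (K.relIndex (K ⊔ A)).Prime ∧ K.relIndex (K ⊔ A) ∣ H.index := by
  intro A Ac hmin hHAc hinf hsup K hHK hKAc
  obtain ⟨hHA, hminA⟩ := hmin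
  -- elements of the interval
  set hh : Set.Icc H (⊤ : Subgroup G) := ⟨H, le_refl H, le_top⟩ with hhdef
  set aa : Set.Icc H (⊤ : Subgroup G) := ⟨A, hHA.le, le_top⟩ with aadef
  set bK : Set.Icc H (⊤ : Subgroup G) := ⟨K, hHK, le_top⟩ with bKdef
  set ka : Set.Icc H (⊤ : Subgroup G) := ⟨K ⊔ A, le_trans hHK le_sup_left, le_top⟩ with kadef
  set tt : Set.Icc H (⊤ : Subgroup G) := ⟨⊤, le_top, le_refl _⟩ with ttdef
  have hhle : ∀ y : Set.Icc H (⊤ : Subgroup G), hh ≤ y := fun y => y.2.1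
  have httge : ∀ y : Set.Icc H (⊤ : Subgroup G), y ≤ tt := fun y => y.2.2
  -- e hh = ∅ and e tt = univ
  have ehh : (e hh : Set (Fin n)) = ∅ := by
    have h1 : e hh ≤ e (e.symm ∅) := e.le_iff_le.mpr (hhle _)
    rw [e.apply_symm_apply] at h1
    exact Set.subset_empty_iff.mp h1
  have ett : (e tt : Set (Fin n)) = Set.univ := by
    apply Set.eq_univ_of_univ_subset
    have h1 : e (e.symm Set.univ) ≤ e tt := e.le_iff_le.mpr (httge _)
    rwa [e.apply_symm_apply] at h1
  -- e aa is an atom of Set (Fin n)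
  have hatom : IsAtom (e aa : Set (Fin n)) := by
    constructor
    · intro h
      have : aa ≤ hh := e.le_iff_le.mp (by rw [h, ehh]; exact bot_le)
      exact absurd (le_antisymm (Subtype.coe_le_coe.mpr this) hHA.le)
        (ne_of_gt hHA)
    · intro b hb
      set c : Set.Icc H (⊤ : Subgroup G) := e.symm b with hcdef
      have hec : e c = b := e.apply_symm_apply _
      have hclt : c < aa := by
        rw [← e.lt_iff_lt, hec]; exact hb
      have hcA : (c : Subgroup G) ≤ A := Subtype.coe_le_coe.mpr hclt.le
      have hHc : H ≤ (c : Subgroup G) := c.2.1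
      rcases eq_or_lt_of_le hHc with hHc' | hHc'
      · have : c = hh := Subtype.ext hHc'.symm
        rw [← hec, this, ehh]; rfl
      · exfalso
        have := hminA (c : Subgroup G) hHc' hcA
        exact absurd (Subtype.ext this : c = aa) (ne_of_lt hclt)
  obtain ⟨a, ha⟩ := Set.isAtom_iff.mp hatom
  -- intersection and union facts
  have hKA_inf : K ⊓ A = H := by
    apply le_antisymm
    · calc K ⊓ A ≤ Ac ⊓ A := inf_le_inf_right A hKAc
        _ = H := by rw [inf_comm]; exact hinf
    · exact le_inf hHK hHA.le
  have hbinf : bK ⊓ aa = hh := Subtype.ext hKA_inf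
  have hbsup : bK ⊔ aa = ka := Subtype.ext rfl
  have hanotin : a ∉ (e bK : Set (Fin n)) := by
    intro hmem
    have h1 : (e (bK ⊓ aa) : Set (Fin n)) = e bK ∩ e aa := e.map_inf _ _
    rw [hbinf, ehh, ha] at h1
    have : a ∈ (∅ : Set (Fin n)) := h1 ▸ ⟨hmem, rfl⟩
    exact this
  have heka : (e ka : Set (Fin n)) = insert a (e bK) := by
    rw [← hbsup, e.map_sup, ha]
    exact Set.union_singleton
  -- index multiplicativity
  set m1 := H.relIndex K with m1def
  set m2 := K.relIndex (K ⊔ A) with m2def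
  set m3 := (K ⊔ A).relIndex (⊤ : Subgroup G) with m3def
  have h0m1 : m1 ≠ 0 := relindex_ne_zero' _ _
  have h0m2 : m2 ≠ 0 := relindex_ne_zero' _ _
  have h0m3 : m3 ≠ 0 := relindex_ne_zero' _ _
  have hm23 : m2 * m3 = K.relIndex ⊤ :=
    Subgroup.relIndex_mul_relIndex _ _ _ le_sup_left le_top
  have hm : m1 * (m2 * m3) = H.index := by
    rw [hm23, Subgroup.relIndex_mul_relIndex _ _ _ hHK le_top,
      Subgroup.relIndex_top_right]
  have hΩ : m1.primeFactorsList.length + (m2.primeFactorsList.length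
      + m3.primeFactorsList.length) = n := by
    have h23 : (m2 * m3).primeFactorsList.length
        = m2.primeFactorsList.length + m3.primeFactorsList.length := by
      rw [(Nat.perm_primeFactorsList_mul h0m2 h0m3).length_eq, List.length_append]
    have h123 : (m1 * (m2 * m3)).primeFactorsList.length
        = m1.primeFactorsList.length + (m2 * m3).primeFactorsList.length := by
      rw [(Nat.perm_primeFactorsList_mul h0m1 (Nat.mul_ne_zero h0m2 h0m3)).length_eq,
        List.length_append]
    rw [← h23, ← h123, hm, hfac]
  -- three chain estimates
  have hc1 : (e bK : Set (Fin n)).ncard ≤ m1.primeFactorsList.length := by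
    have := chain_len e (e bK : Set (Fin n)).ncard hh bK (hhle bK)
      (by rw [ehh, Set.diff_empty])
    exact this
  have hc2 : 1 ≤ m2.primeFactorsList.length := by
    have hdiff : (e ka : Set (Fin n)) \ e bK = {a} := by
      rw [heka]; ext y
      simp only [Set.mem_diff, Set.mem_insert_iff, Set.mem_singleton_iff]
      constructor
      · rintro ⟨hy1 | hy1, hy2⟩
        · exact hy1
        · exact absurd hy1 hy2
      · rintro rfl; exact ⟨Or.inl rfl, hanotin⟩
    have := chain_len e 1 bK ka (Subtype.coe_le_coe.mp (le_sup_left : K ≤ K ⊔ A))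
      (by rw [hdiff, Set.ncard_singleton])
    exact this
  have hc3 : n - ((e bK : Set (Fin n)).ncard + 1) ≤ m3.primeFactorsList.length := by
    have hcard : ((e tt : Set (Fin n)) \ e ka).ncard
        = n - ((e bK : Set (Fin n)).ncard + 1) := by
      rw [ett, Set.ncard_diff (Set.subset_univ _), Set.ncard_univ, Nat.card_eq_fintype_card,
        Fintype.card_fin, heka, Set.ncard_insert_of_notMem hanotin]
    exact chain_len e _ ka tt (httge ka) hcard
  have hm2one : m2.primeFactorsList.length = 1 := by omega
  obtain ⟨p, hp⟩ := List.length_eq_one_iff.mp hm2one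
  have hpprime : p.Prime := Nat.prime_of_mem_primeFactorsList (by rw [hp]; exact List.mem_singleton_self p)
  have hm2p : m2 = p := by
    have h := Nat.prod_primeFactorsList h0m2
    rw [hp, List.prod_singleton] at h
    exact h.symm
  constructor
  · rw [hm2p]; exact hpprime
  · exact ⟨m1 * m3, by rw [← hm]; ring⟩
end

section
/- Let [H,G] be a boolean interval of finite groups of rank n and index |G:H| = p^n with p prime. Then the dual Euler totient satisfies φ̂(H,G) = (p-1)^n > 0. -/

theorem aux_dual_euler_totient {G : Type*} [Group G] [Finite G]
    (H : Subgroup G) (n p : ℕ) (hp : p.Prime)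
    (e : (Set.Icc H (⊤ : Subgroup G)) ≃o Set (Fin n))
    (hind : H.index = p ^ n) :
    (∑ᶠ K : (Set.Icc H (⊤ : Subgroup G)),
      (-1 : ℤ) ^ ((e K).ncard) * ((K : Subgroup G).index : ℤ)) = ((p : ℤ) - 1) ^ n := by
  classical
  have hHmem : H ∈ Set.Icc H (⊤ : Subgroup G) := ⟨le_refl H, le_top⟩
  have hTmem : (⊤ : Subgroup G) ∈ Set.Icc H (⊤ : Subgroup G) := ⟨le_top, le_refl ⊤⟩
  have hle : ∀ S T : Set (Fin n), S ⊆ T →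
      ((e.symm S : Subgroup G)) ≤ ((e.symm T : Subgroup G)) := by
    intro S T hST
    exact Subtype.coe_le_coe.mpr (e.symm.monotone hST)
  have eBot : ((e.symm (∅ : Set (Fin n))) : Subgroup G) = H := by
    refine le_antisymm ?_ (e.symm (∅ : Set (Fin n))).2.1
    have h1 : e.symm (∅ : Set (Fin n)) ≤ ⟨H, hHmem⟩ := by
      have := e.symm.monotone (Set.empty_subset (e ⟨H, hHmem⟩))
      simpa using this
    exact h1
  have eTop : ((e.symm (Set.univ : Set (Fin n))) : Subgroup G) = ⊤ := by
    refine le_antisymm le_top ?_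
    have h1 : (⟨⊤, hTmem⟩ : Set.Icc H (⊤ : Subgroup G)) ≤ e.symm Set.univ := by
      have := e.symm.monotone (Set.subset_univ (e ⟨⊤, hTmem⟩))
      simpa using this
    exact h1
  have hHleS : ∀ S : Set (Fin n), H ≤ ((e.symm S : Subgroup G)) := fun S => (e.symm S).2.1
  have hstep : ∀ S T : Set (Fin n), S ⊆ T → ¬ T ⊆ S →
      p ≤ ((e.symm S : Subgroup G)).relIndex (e.symm T) := by
    intro S T hST hTS
    set a := ((e.symm S : Subgroup G)).relIndex (e.symm T) with ha
    have hdvd : a ∣ p ^ n := by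
      have h1 : a ∣ ((e.symm S : Subgroup G)).index :=
        ⟨((e.symm T : Subgroup G)).index, (Subgroup.relIndex_mul_index (hle S T hST)).symm⟩
      have h2 : ((e.symm S : Subgroup G)).index ∣ H.index :=
        Subgroup.index_dvd_of_le (hHleS S)
      rw [hind] at h2
      exact h1.trans h2
    obtain ⟨j, hj, hja⟩ := (Nat.dvd_prime_pow hp).mp hdvd
    have hane : a ≠ 1 := by
      intro h1
      have h2 : ((e.symm T : Subgroup G)) ≤ ((e.symm S : Subgroup G)) :=
        Subgroup.relIndex_eq_one.mp h1
      have h3 : e.symm T ≤ e.symm S := Subtype.coe_le_coe.mp h2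
      exact hTS (e.symm.le_iff_le.mp h3)
    have hj1 : 1 ≤ j := by
      rcases Nat.eq_zero_or_pos j with h | h
      · exact absurd (by simp [hja, h]) hane
      · exact h
    calc p = p ^ 1 := (pow_one p).symm
      _ ≤ p ^ j := Nat.pow_le_pow_right hp.pos hj1
      _ = a := hja.symm
  have hchain : ∀ k : ℕ, ∀ S T : Set (Fin n), S ⊆ T → (T \ S).ncard = k →
      p ^ k ≤ ((e.symm S : Subgroup G)).relIndex (e.symm T) := by
    intro k
    induction k with
    | zero =>
      intro S T hST hcard
      have hfin : (T \ S).Finite := Set.toFinite _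
      have hemp : T \ S = ∅ := (Set.ncard_eq_zero hfin).mp hcard
      have hTS : T ⊆ S := by
        intro x hx
        by_contra hxS
        exact absurd (Set.mem_diff_of_mem hx hxS) (by simp [hemp])
      have hS : S = T := Set.Subset.antisymm hST hTS
      subst hS
      simp [Subgroup.relIndex_self]
    | succ k ih =>
      intro S T hST hcard
      have hne : (T \ S).Nonempty := by
        rw [← Set.ncard_pos (Set.toFinite _)]
        omega
      obtain ⟨i, hiT, hiS⟩ := hne
      set M : Set (Fin n) := insert i S with hM
      have hSM : S ⊆ M := Set.subset_insert i S
      have hMT : M ⊆ T := Set.insert_subset hiT hST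
      have hcard' : (T \ M).ncard = k := by
        have hdiff : T \ M = (T \ S) \ {i} := by
          ext x; simp [hM, Set.mem_diff]; tauto
        rw [hdiff, Set.ncard_diff_singleton_of_mem (Set.mem_diff_of_mem hiT hiS), hcard]
        omega
      have h1 : p ≤ ((e.symm S : Subgroup G)).relIndex (e.symm M) := by
        refine hstep S M hSM ?_
        intro h; exact hiS (h (Set.mem_insert i S))
      have h2 : p ^ k ≤ ((e.symm M : Subgroup G)).relIndex (e.symm T) := ih M T hMT hcard'
      have hmul : ((e.symm S : Subgroup G)).relIndex (e.symm M) *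
          ((e.symm M : Subgroup G)).relIndex (e.symm T) =
          ((e.symm S : Subgroup G)).relIndex (e.symm T) :=
        Subgroup.relIndex_mul_relIndex _ _ _ (hle S M hSM) (hle M T hMT)
      calc p ^ (k + 1) = p * p ^ k := by ring
        _ ≤ ((e.symm S : Subgroup G)).relIndex (e.symm M) *
            ((e.symm M : Subgroup G)).relIndex (e.symm T) := Nat.mul_le_mul h1 h2
        _ = _ := hmul
  have key : ∀ S : Set (Fin n), ((e.symm S : Subgroup G)).index = p ^ (n - S.ncard) := by
    intro S
    have hsub : S.ncard ≤ n := by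
      have := Set.ncard_le_ncard (Set.subset_univ S) (Set.toFinite _)
      simpa [Set.ncard_univ, Nat.card_eq_fintype_card] using this
    have ha : p ^ S.ncard ≤ H.relIndex ((e.symm S : Subgroup G)) := by
      have := hchain S.ncard ∅ S (Set.empty_subset S) (by simp)
      rwa [eBot] at this
    have hb : p ^ (n - S.ncard) ≤ ((e.symm S : Subgroup G)).index := by
      have hcard : (Set.univ \ S : Set (Fin n)).ncard = n - S.ncard := by
        have h1 : (Set.univ \ S : Set (Fin n)) = Sᶜ := by ext x; simp
        have h2 := Set.ncard_add_ncard_compl S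
        simp only [Nat.card_eq_fintype_card, Fintype.card_fin] at h2
        rw [h1]; omega
      have := hchain (n - S.ncard) S Set.univ (Set.subset_univ S) hcard
      rwa [eTop, Subgroup.relIndex_top_right] at this
    have hmul : H.relIndex ((e.symm S : Subgroup G)) * ((e.symm S : Subgroup G)).index
        = p ^ n := by rw [Subgroup.relIndex_mul_index (hHleS S), hind]
    have hsplit : p ^ S.ncard * p ^ (n - S.ncard) = p ^ n := by
      rw [← pow_add]; congr 1; omega
    have hppos : 0 < p ^ S.ncard := Nat.pow_pos hp.pos
    refine le_antisymm ?_ hb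
    by_contra hlt
    push_neg at hlt
    have hcon : p ^ n < H.relIndex ((e.symm S : Subgroup G)) * ((e.symm S : Subgroup G)).index := by
      calc p ^ n = p ^ S.ncard * p ^ (n - S.ncard) := hsplit.symm
        _ < p ^ S.ncard * ((e.symm S : Subgroup G)).index :=
            mul_lt_mul_of_pos_left hlt hppos
        _ ≤ _ := Nat.mul_le_mul_right _ ha
    omega
  haveI : Finite (Subgroup G) :=
    Finite.of_injective (fun K : Subgroup G => (K : Set G)) SetLike.coe_injective
  haveI hfin : Fintype (Set.Icc H (⊤ : Subgroup G)) := Fintype.ofFinite _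
  rw [finsum_eq_sum_of_fintype]
  rw [← Equiv.sum_comp e.symm.toEquiv
    (fun K : (Set.Icc H (⊤ : Subgroup G)) =>
      (-1 : ℤ) ^ ((e K).ncard) * ((K : Subgroup G).index : ℤ))]
  have hterm : ∀ S : Set (Fin n),
      (-1 : ℤ) ^ ((e (e.symm.toEquiv S)).ncard) * (((e.symm.toEquiv S : Set.Icc H (⊤ : Subgroup G)) : Subgroup G)).index
        = (-1 : ℤ) ^ S.ncard * (p : ℤ) ^ (n - S.ncard) := by
    intro S
    show (-1 : ℤ) ^ ((e (e.symm S)).ncard) * (((e.symm S : Subgroup G)).index : ℤ) = _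
    rw [OrderIso.apply_symm_apply, key S]
    push_cast
    ring
  rw [Fintype.sum_congr _ _ hterm]
  rw [← Equiv.sum_comp (Fintype.finsetEquivSet (α := Fin n))
    (fun S : Set (Fin n) => (-1 : ℤ) ^ S.ncard * (p : ℤ) ^ (n - S.ncard))]
  simp only [Fintype.coe_finsetEquivSet, Set.ncard_coe_finset]
  have h := Finset.prod_add (fun _ : Fin n => (-1 : ℤ)) (fun _ => (p : ℤ)) Finset.univ
  simp only [Finset.prod_const, Finset.powerset_univ, Finset.card_univ, Fintype.card_fin] at h
  rw [show (-1 + (p : ℤ)) = (p : ℤ) - 1 by ring] at h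
  rw [h]
  apply Finset.sum_congr rfl
  intro t _
  rw [Finset.card_sdiff_of_subset (Finset.subset_univ t), Finset.card_univ, Fintype.card_fin]


/-- A boolean interval of rank `n` and index `p^n` (`p` prime) has dual Euler
totient `(p-1)^n > 0`. -/
theorem dual_euler_totient_prime_power {G : Type*} [Group G] [Finite G]
    (H : Subgroup G) (n p : ℕ) (hp : p.Prime)
    (e : (Set.Icc H (⊤ : Subgroup G)) ≃o Set (Fin n))
    (hind : H.index = p ^ n) :
    dualEulerTotient H e = ((p : ℤ) - 1) ^ n ∧ 0 < dualEulerTotient H e := by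
  have heq : dualEulerTotient H e = ((p : ℤ) - 1) ^ n :=
    aux_dual_euler_totient H n p hp e hind
  refine ⟨heq, ?_⟩
  rw [heq]
  have h2 : (2 : ℤ) ≤ (p : ℤ) := by exact_mod_cast hp.two_le
  exact pow_pos (by omega) n
end
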